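/- arXiv:1509.02086 — 6 statements merged into one kernel-verified Lean document; each statement's English description precedes it below -/
import Mathlib

section
/- Let Ṽ : ℝ≥0^ν → ℝ≥0 be locally Lipschitz and suppose that at every point r ∈ ℝ≥0^ν at which Ṽ is differentiable, ∇Ṽ(r)ᵀ (Γ^ℓ r) ≤ 0 for every ℓ = 1,…,s. Then for every admissible kinetics R ∈ K_A and every x ∈ ℝ≥0ⁿ, the composite function V = Ṽ ∘ R satisfies D⁺V(x) = limsup_{h→0⁺} (Ṽ(R(x + h Γ R(x))) − Ṽ(R(x)))/h ≤ 0. If moreover Ṽ(r) = 0 exactly when r ∈ ker Γ, then V(x) = 0 if and only if Γ R(x) = 0. -/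
open Filter Set Topology
open MeasureTheory intervalIntegral

/-- Partial derivative ∂R_j/∂x_i at x. -/
noncomputable def pd {n ν : ℕ} (R : (Fin n → ℝ) → Fin ν → ℝ)
    (x : Fin n → ℝ) (j : Fin ν) (i : Fin n) : ℝ :=
  fderiv ℝ (fun y => R y j) x (Pi.single i 1)

/-- Admissible kinetics (A1)-(A4) for a reactant matrix `A`. -/
structure IsAdmissible {n ν : ℕ} (A : Matrix (Fin n) (Fin ν) ℕ)
    (R : (Fin n → ℝ) → Fin ν → ℝ) : Prop where
  smooth : ContDiff ℝ 1 R
  nonneg : ∀ x, (∀ i, 0 ≤ x i) → ∀ j, 0 ≤ R x j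
  vanish : ∀ x, (∀ i, 0 ≤ x i) → ∀ i j, 0 < A i j → x i = 0 → R x j = 0
  deriv_nonneg : ∀ x, (∀ i, 0 ≤ x i) → ∀ i j, 0 < A i j → 0 ≤ pd R x j i
  deriv_zero : ∀ x, (∀ i, 0 ≤ x i) → ∀ i j, A i j = 0 → pd R x j i = 0
  deriv_pos : ∀ x, (∀ i, 0 < x i) → ∀ i j, 0 < A i j → 0 < pd R x j i

/-- Upper (right) Dini derivative of `V` along the vector field `f` at `x`,
`D⁺V(x) = limsup_{h→0⁺} (V(x + h f(x)) − V(x))/h`. -/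
noncomputable def dini {m : ℕ} (V : (Fin m → ℝ) → ℝ)
    (f : (Fin m → ℝ) → (Fin m → ℝ)) (x : Fin m → ℝ) : ℝ :=
  Filter.limsup (fun h : ℝ => (V (x + h • f x) - V x) / h) (nhdsWithin 0 (Set.Ioi 0))

/-- The rank-one matrix `Γ^ℓ = e_j γ_iᵀ ∈ ℝ^{ν×ν}`. -/
noncomputable def GammaEll {n ν : ℕ} (Γ : Matrix (Fin n) (Fin ν) ℝ) (i : Fin n) (j : Fin ν) :
    Matrix (Fin ν) (Fin ν) ℝ :=
  Matrix.vecMulVec (Pi.single j 1) (fun k => Γ i k)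



lemma ae_ne_real (c : ℝ) : ∀ᵐ t : ℝ, t ≠ c := by
  rw [MeasureTheory.ae_iff]
  convert Real.volume_singleton (a := c) using 2
  ext t; simp

/-- A Lipschitz function whose derivative is a.e. at most `ε` on `(0,h)` increases
by at most `ε * h`. -/
lemma lip_increment_le {g : ℝ → ℝ} {M : NNReal} (hg : LipschitzWith M g) {h ε : ℝ}
    (hh : 0 < h)
    (hae : ∀ᵐ t, t ∈ Set.Ioo 0 h → DifferentiableAt ℝ g t ∧ deriv g t ≤ ε) :
    g h - g 0 ≤ ε * h := by
  have hgc : Continuous g := hg.continuous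
  have hderiv_bound : ∀ t : ℝ, |deriv g t| ≤ (M : ℝ) := by
    intro t
    by_cases hd : DifferentiableAt ℝ g t
    · simpa using norm_deriv_le_of_lipschitz (𝕜 := ℝ) (x₀ := t) hg
    · simp [deriv_zero_of_not_differentiableAt hd, M.coe_nonneg]
  have hmeas : Measurable (deriv g) := measurable_deriv g
  have hint : IntervalIntegrable (deriv g) volume 0 h := by
    refine IntervalIntegrable.mono_fun (_root_.intervalIntegrable_const (c := (M:ℝ)))
      hmeas.aestronglyMeasurable ?_
    refine Filter.Eventually.of_forall fun t => ?_
    simpa [Real.norm_eq_abs, abs_of_nonneg M.coe_nonneg] using hderiv_bound t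
  set s : ℕ → ℝ := fun k => 1 / (k + 1) with hs
  have hspos : ∀ k, 0 < s k := fun k => by positivity
  have hsn : ∀ k, s k ≠ 0 := fun k => ne_of_gt (hspos k)
  have hs0 : Tendsto s atTop (𝓝 0) := tendsto_one_div_add_atTop_nhds_zero_nat
  set F : ℕ → ℝ → ℝ := fun k t => (g (t + s k) - g t) / s k with hF
  have hi : ∀ a b : ℝ, IntervalIntegrable g volume a b := fun a b =>
    hgc.intervalIntegrable a b
  have key : ∀ k, ∫ t in (0:ℝ)..h, F k t =
      ((∫ t in h..(h + s k), g t) - ∫ t in (0:ℝ)..(s k), g t) / s k := by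
    intro k
    have h1 : ∫ t in (0:ℝ)..h, g (t + s k) = ∫ t in (s k)..(h + s k), g t := by
      simpa [zero_add, add_comm] using intervalIntegral.integral_comp_add_right
        (a := (0:ℝ)) (b := h) g (s k)
    have h2 : (∫ t in (0:ℝ)..(s k), g t) + ∫ t in (s k)..(h + s k), g t
        = ∫ t in (0:ℝ)..(h + s k), g t :=
      intervalIntegral.integral_add_adjacent_intervals (hi _ _) (hi _ _)
    have h3 : (∫ t in (0:ℝ)..h, g t) + ∫ t in h..(h + s k), g t
        = ∫ t in (0:ℝ)..(h + s k), g t :=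
      intervalIntegral.integral_add_adjacent_intervals (hi _ _) (hi _ _)
    have h4 : Continuous fun t => g (t + s k) := hgc.comp (continuous_add_right _)
    have e : (fun t => F k t) = fun t => (s k)⁻¹ * (g (t + s k) - g t) := by
      funext t; rw [hF]; ring
    rw [e, intervalIntegral.integral_const_mul,
      intervalIntegral.integral_sub (h4.intervalIntegrable _ _) (hi _ _), h1,
      div_eq_inv_mul]
    congr 1
    linarith
  have hlim1 : Tendsto (fun k => ∫ t in (0:ℝ)..h, F k t) atTop (𝓝 (g h - g 0)) := by
    have hD1 : HasDerivAt (fun u => ∫ t in h..u, g t) (g h) h :=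
      intervalIntegral.integral_hasDerivAt_right (hi _ _)
        (hgc.stronglyMeasurableAtFilter _ _) hgc.continuousAt
    have hD2 : HasDerivAt (fun u => ∫ t in (0:ℝ)..u, g t) (g 0) 0 :=
      intervalIntegral.integral_hasDerivAt_right (hi _ _)
        (hgc.stronglyMeasurableAtFilter _ _) hgc.continuousAt
    have ht1 : Tendsto (fun k => h + s k) atTop (𝓝[≠] h) := by
      refine tendsto_nhdsWithin_iff.2 ⟨?_, Filter.Eventually.of_forall fun k => ?_⟩
      · have := tendsto_const_nhds (x := h) (f := atTop (α := ℕ)) |>.add hs0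
        rwa [add_zero] at this
      · simp [hsn k]
    have ht2 : Tendsto (fun k => (0:ℝ) + s k) atTop (𝓝[≠] 0) := by
      refine tendsto_nhdsWithin_iff.2 ⟨?_, Filter.Eventually.of_forall fun k => ?_⟩
      · have := tendsto_const_nhds (x := (0:ℝ)) (f := atTop (α := ℕ)) |>.add hs0
        rwa [add_zero] at this
      · simp [hsn k]
    have c1 : Tendsto (fun k => (∫ t in h..(h + s k), g t) / s k) atTop (𝓝 (g h)) := by
      refine ((hasDerivAt_iff_tendsto_slope.1 hD1).comp ht1).congr fun k => ?_
      simp only [Function.comp_apply, slope_def_field, intervalIntegral.integral_same,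
        add_sub_cancel_left]
      ring
    have c2 : Tendsto (fun k => (∫ t in (0:ℝ)..(s k), g t) / s k) atTop (𝓝 (g 0)) := by
      refine ((hasDerivAt_iff_tendsto_slope.1 hD2).comp ht2).congr fun k => ?_
      simp only [Function.comp_apply, slope_def_field, intervalIntegral.integral_same,
        zero_add, sub_zero]
    have : Tendsto (fun k => ((∫ t in h..(h + s k), g t) - ∫ t in (0:ℝ)..(s k), g t) / s k)
        atTop (𝓝 (g h - g 0)) := by
      simpa [sub_div] using c1.sub c2
    exact this.congr fun k => (key k).symm
  have hlim2 : Tendsto (fun k => ∫ t in (0:ℝ)..h, F k t) atTop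
      (𝓝 (∫ t in (0:ℝ)..h, deriv g t)) := by
    refine intervalIntegral.tendsto_integral_filter_of_dominated_convergence
      (fun _ => (M : ℝ)) ?_ ?_ (_root_.intervalIntegrable_const) ?_
    · refine Filter.Eventually.of_forall fun k => ?_
      exact (((hgc.comp (continuous_add_right _)).sub hgc).div_const _).aestronglyMeasurable
    · refine Filter.Eventually.of_forall fun k => Filter.Eventually.of_forall fun t _ => ?_
      have hd := hg.dist_le_mul (t + s k) t
      rw [Real.dist_eq, Real.dist_eq] at hd
      have hsk := hspos k
      rw [Real.norm_eq_abs, hF, abs_div, abs_of_pos hsk, div_le_iff₀ hsk]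
      calc |g (t + s k) - g t| ≤ M * |t + s k - t| := hd
        _ = M * s k := by rw [show t + s k - t = s k by ring, abs_of_pos hsk]
    · filter_upwards [hae, ae_ne_real h] with t hdiff hne ht
      rw [Set.uIoc_of_le hh.le] at ht
      have ht' : t ∈ Set.Ioo 0 h := ⟨ht.1, lt_of_le_of_ne ht.2 hne⟩
      obtain ⟨hd, _⟩ := hdiff ht'
      have htt : Tendsto (fun k => t + s k) atTop (𝓝[≠] t) := by
        refine tendsto_nhdsWithin_iff.2 ⟨?_, Filter.Eventually.of_forall fun k => ?_⟩
        · have := tendsto_const_nhds (x := t) (f := atTop (α := ℕ)) |>.add hs0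
          rwa [add_zero] at this
        · simp [hsn k]
      refine ((hasDerivAt_iff_tendsto_slope.1 hd.hasDerivAt).comp htt).congr fun k => ?_
      simp only [Function.comp_apply, slope_def_field, add_sub_cancel_left, hF]
  have heq : g h - g 0 = ∫ t in (0:ℝ)..h, deriv g t :=
    tendsto_nhds_unique hlim1 hlim2
  rw [heq]
  calc ∫ t in (0:ℝ)..h, deriv g t ≤ ∫ t in (0:ℝ)..h, ε := by
        refine intervalIntegral.integral_mono_ae_restrict hh.le hint
          (_root_.intervalIntegrable_const) ?_
        have h1 : ∀ᵐ t ∂(volume.restrict (Set.Icc (0:ℝ) h)),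
            t ∈ Set.Ioo 0 h → DifferentiableAt ℝ g t ∧ deriv g t ≤ ε :=
          ae_restrict_of_ae hae
        have h2 : ∀ᵐ t ∂(volume.restrict (Set.Icc (0:ℝ) h)), t ≠ 0 :=
          ae_restrict_of_ae (ae_ne_real 0)
        have h3 : ∀ᵐ t ∂(volume.restrict (Set.Icc (0:ℝ) h)), t ≠ h :=
          ae_restrict_of_ae (ae_ne_real h)
        filter_upwards [h1, h2, h3, ae_restrict_mem measurableSet_Icc] with t hte hne0 hneh htmem
        exact (hte ⟨lt_of_le_of_ne htmem.1 (Ne.symm hne0), lt_of_le_of_ne htmem.2 hneh⟩).2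
    _ = ε * h := by simp [mul_comm]


/-- If `N` is a null set in `ℝ^m`, then for a.e. `u`, the line `t ↦ u + t • w`
avoids `N` for a.e. `t`. -/
lemma ae_line_avoid {m : ℕ} {N : Set (Fin m → ℝ)} (hN : volume N = 0)
    (w : Fin m → ℝ) :
    ∀ᵐ u : Fin m → ℝ, ∀ᵐ t : ℝ, u + t • w ∉ N := by
  set N' := toMeasurable volume N with hN'
  have hN'm : MeasurableSet N' := measurableSet_toMeasurable _ _
  have hN'0 : volume N' = 0 := by rw [hN', measure_toMeasurable]; exact hN
  have hsub : N ⊆ N' := subset_toMeasurable _ _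
  -- the bad set in ℝ × ℝ^m
  set S : Set (ℝ × (Fin m → ℝ)) := {p | p.2 + p.1 • w ∈ N'} with hS
  have hSm : MeasurableSet S := by
    have : Continuous fun p : ℝ × (Fin m → ℝ) => p.2 + p.1 • w :=
      continuous_snd.add (continuous_fst.smul continuous_const)
    exact hN'm.preimage this.measurable
  have hSnull : (volume : Measure ℝ).prod (volume : Measure (Fin m → ℝ)) S = 0 := by
    rw [MeasureTheory.Measure.measure_prod_null hSm]
    refine Filter.Eventually.of_forall fun t => ?_
    show volume (Prod.mk t ⁻¹' S) = 0
    have : (Prod.mk t ⁻¹' S) = (fun u => u + t • w) ⁻¹' N' := rfl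
    rw [this, measure_preimage_add_right]
    exact hN'0
  -- swap the product
  have hswap : (volume : Measure (Fin m → ℝ)).prod (volume : Measure ℝ)
      (Prod.swap ⁻¹' S) = 0 := by
    have h1 : (volume : Measure (Fin m → ℝ)).prod (volume : Measure ℝ)
        = Measure.map Prod.swap ((volume : Measure ℝ).prod volume) :=
      (Measure.prod_swap).symm
    rw [h1, Measure.map_apply measurable_swap (hSm.preimage measurable_swap)]
    have : Prod.swap ⁻¹' (Prod.swap ⁻¹' S) = S := by
      ext p; simp [S]
    rw [this]; exact hSnull
  have := (MeasureTheory.Measure.measure_prod_null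
    ((hSm.preimage measurable_swap))).1 hswap
  filter_upwards [this] with u hu
  have hu : volume {t : ℝ | u + t • w ∈ N'} = 0 := hu
  have : ∀ᵐ t : ℝ, u + t • w ∉ N' := by
    rw [MeasureTheory.ae_iff]
    simpa using hu
  filter_upwards [this] with t ht hmem
  exact ht (hsub hmem)

lemma key_increment {m : ℕ} {G : (Fin m → ℝ) → ℝ} {K : NNReal} (hG : LipschitzWith K G)
    (r w : Fin m → ℝ) {ε δ : ℝ} (hε : 0 < ε) (hδ : 0 < δ)
    (H1 : ∀ y, y ∈ Metric.ball r δ → (∀ j, 0 ≤ y j) → DifferentiableAt ℝ G y →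
      fderiv ℝ G y w ≤ ε)
    (H2 : ∀ j, r j = 0 → 0 ≤ w j) (H3 : ∀ j, 0 ≤ r j) :
    ∃ h₀ > 0, ∀ h : ℝ, 0 < h → h < h₀ →
      G (r + h • w) - G r ≤ (1 + 2 * K) * ε * h := by
  classical
  obtain ⟨c, hc0, hc⟩ : ∃ c > 0, ∀ j, 0 < r j → c ≤ r j := by
    set P : Finset (Fin m) := Finset.univ.filter (fun j => 0 < r j) with hP
    have hPmem : ∀ j, 0 < r j → j ∈ P := fun j hj =>
      Finset.mem_filter.2 ⟨Finset.mem_univ _, hj⟩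
    rcases P.eq_empty_or_nonempty with he | hne
    · exact ⟨1, one_pos, fun j hj => absurd (hPmem j hj)
        (he ▸ Finset.notMem_empty j)⟩
    · refine ⟨P.inf' hne r, ?_, ?_⟩
      · obtain ⟨j, hj, hjeq⟩ := Finset.exists_mem_eq_inf' hne r
        rw [hjeq]
        exact (Finset.mem_filter.1 hj).2
      · intro j hj; exact Finset.inf'_le r (hPmem j hj)
  have hw2 : (0:ℝ) < ‖w‖ + 2 := by positivity
  refine ⟨min (c / (‖w‖ + 2)) (δ / (2 * (‖w‖ + 2))), by positivity, ?_⟩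
  intro h hh hh0
  set m₀ : ℝ := min ε 1 * h with hm₀
  have hm₀pos : 0 < m₀ := by
    have : 0 < min ε 1 := lt_min hε one_pos
    positivity
  have hm₀h : m₀ ≤ h := by
    calc m₀ ≤ 1 * h := mul_le_mul_of_nonneg_right (min_le_right _ _) hh.le
      _ = h := one_mul h
  have hm₀ε : m₀ ≤ ε * h := mul_le_mul_of_nonneg_right (min_le_left _ _) hh.le
  -- find a good shift
  have hN : volume {y : Fin m → ℝ | ¬ DifferentiableAt ℝ G y} = 0 := by
    have := hG.ae_differentiableAt (μ := volume)
    rwa [MeasureTheory.ae_iff] at this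
  have hae := ae_line_avoid hN w
  set Box : Set (Fin m → ℝ) := Set.pi Set.univ fun j => Set.Icc (r j) (r j + m₀) with hBox
  have hBoxvol : volume Box ≠ 0 := by
    rw [hBox, volume_pi_pi]
    simp only [Real.volume_Icc, add_sub_cancel_left]
    rw [Finset.prod_const]
    simp only [ne_eq, pow_eq_zero_iff']
    intro hcon
    have := hcon.1
    rw [ENNReal.ofReal_eq_zero] at this
    exact absurd this (not_le.2 hm₀pos)
  obtain ⟨u₀, hu₀Box, hu₀⟩ : ∃ u₀ ∈ Box, ∀ᵐ t : ℝ,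
      DifferentiableAt ℝ G (u₀ + t • w) := by
    by_contra hcon
    push_neg at hcon
    have hsub : Box ⊆ {u : Fin m → ℝ | ¬ ∀ᵐ t : ℝ, u + t • w ∉
        {y : Fin m → ℝ | ¬ DifferentiableAt ℝ G y}} := by
      intro u hu hmem
      refine hcon u hu ?_
      filter_upwards [hmem] with t ht
      simpa using ht
    have : volume Box = 0 := measure_mono_null hsub (by rwa [← MeasureTheory.ae_iff])
    exact hBoxvol this
  set u' : Fin m → ℝ := u₀ - r with hu'
  have hu'mem : ∀ j, 0 ≤ u' j ∧ u' j ≤ m₀ := by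
    intro j
    have := Set.mem_univ_pi.1 hu₀Box j
    constructor
    · simp only [hu', Pi.sub_apply]; linarith [this.1]
    · simp only [hu', Pi.sub_apply]; linarith [this.2]
  have hu'norm : ‖u'‖ ≤ m₀ := by
    rw [pi_norm_le_iff_of_nonneg hm₀pos.le]
    intro j
    rw [Real.norm_eq_abs, abs_le]
    exact ⟨by linarith [(hu'mem j).1], (hu'mem j).2⟩
  have hu₀eq : u₀ = r + u' := by simp [hu']
  -- geometry of the segment
  have hseg : ∀ t : ℝ, 0 < t → t ≤ h →
      (u₀ + t • w ∈ Metric.ball r δ ∧ ∀ j, 0 ≤ (u₀ + t • w) j) := by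
    intro t ht0 hth
    have hwj : ∀ j, |w j| ≤ ‖w‖ := fun j => by
      simpa [Real.norm_eq_abs] using norm_le_pi_norm w j
    have hhc : h * (‖w‖ + 2) < c := by
      have := lt_of_lt_of_le hh0 (min_le_left _ _)
      calc h * (‖w‖ + 2) < (c / (‖w‖ + 2)) * (‖w‖ + 2) :=
            mul_lt_mul_of_pos_right this hw2
        _ = c := by field_simp
    have hhδ : h * (‖w‖ + 2) < δ := by
      have := lt_of_lt_of_le hh0 (min_le_right _ _)
      calc h * (‖w‖ + 2) < (δ / (2 * (‖w‖ + 2))) * (‖w‖ + 2) :=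
            mul_lt_mul_of_pos_right this hw2
        _ = δ / 2 := by field_simp
        _ < δ := by linarith
    constructor
    · rw [Metric.mem_ball, dist_eq_norm]
      have : u₀ + t • w - r = u' + t • w := by rw [hu₀eq]; abel
      rw [this]
      calc ‖u' + t • w‖ ≤ ‖u'‖ + ‖t • w‖ := norm_add_le _ _
        _ ≤ m₀ + t * ‖w‖ := by
            rw [norm_smul, Real.norm_eq_abs, abs_of_pos ht0]
            exact add_le_add hu'norm le_rfl
        _ ≤ h + h * ‖w‖ := add_le_add (hm₀h.trans (le_of_eq rfl))
            (mul_le_mul_of_nonneg_right hth (norm_nonneg _))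
        _ ≤ h * (‖w‖ + 2) := by nlinarith [hh.le]
        _ < δ := hhδ
    · intro j
      have hyj : (u₀ + t • w) j = r j + u' j + t * w j := by
        simp [hu₀eq]; try ring
      rw [hyj]
      rcases eq_or_lt_of_le (H3 j) with h0 | h0
      · have := H2 j h0.symm
        have := (hu'mem j).1
        nlinarith
      · have h1 : t * w j ≥ -(h * ‖w‖) := by
          have : |t * w j| ≤ h * ‖w‖ := by
            rw [abs_mul, abs_of_pos ht0]
            exact mul_le_mul hth (hwj j) (abs_nonneg _) hh.le
          linarith [neg_abs_le (t * w j)]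
        have h2 : h * ‖w‖ < c := by nlinarith [hh.le]
        have := hc j h0
        have := (hu'mem j).1
        linarith
  -- the 1-D function
  set g : ℝ → ℝ := fun t => G (u₀ + t • w) with hg
  have hgl : LipschitzWith (K * ‖w‖₊) g := by
    have hline : LipschitzWith ‖w‖₊ (fun t : ℝ => u₀ + t • w) := by
      refine LipschitzWith.of_dist_le_mul fun t t' => ?_
      rw [dist_eq_norm, dist_eq_norm]
      have : u₀ + t • w - (u₀ + t' • w) = (t - t') • w := by
        rw [sub_smul]; abel
      rw [this, norm_smul, Real.norm_eq_abs]
      exact le_of_eq (mul_comm _ _)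
    exact hG.comp hline
  have hkey : g h - g 0 ≤ ε * h := by
    refine lip_increment_le hgl hh ?_
    filter_upwards [hu₀] with t ht htIoo
    have hdiff := ht
    have hcurve : HasDerivAt (fun t : ℝ => u₀ + t • w) w t := by
      have := ((hasDerivAt_id t).smul_const w).const_add u₀
      simpa using this
    have hD : HasDerivAt g (fderiv ℝ G (u₀ + t • w) w) t :=
      (hdiff.hasFDerivAt.comp_hasDerivAt t hcurve)
    refine ⟨hD.differentiableAt, ?_⟩
    rw [hD.deriv]
    obtain ⟨hball, hnn⟩ := hseg t htIoo.1 htIoo.2.le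
    exact H1 _ hball hnn hdiff
  -- conclude
  have hd1 : |G (r + h • w) - G (u₀ + h • w)| ≤ K * m₀ := by
    have he : r + h • w - (u₀ + h • w) = -u' := by rw [hu₀eq]; abel
    calc |G (r + h • w) - G (u₀ + h • w)| ≤ K * ‖r + h • w - (u₀ + h • w)‖ := by
          simpa [Real.dist_eq, dist_eq_norm] using hG.dist_le_mul (r + h • w) (u₀ + h • w)
      _ = K * ‖u'‖ := by rw [he, norm_neg]
      _ ≤ K * m₀ := mul_le_mul_of_nonneg_left hu'norm K.coe_nonneg
  have hd2 : |G u₀ - G r| ≤ K * m₀ := by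
    calc |G u₀ - G r| ≤ K * ‖u₀ - r‖ := by
          simpa [Real.dist_eq, dist_eq_norm] using hG.dist_le_mul u₀ r
      _ ≤ K * m₀ := mul_le_mul_of_nonneg_left (by rwa [← hu']) K.coe_nonneg
  have hgh : g h = G (u₀ + h • w) := rfl
  have hg0 : g 0 = G u₀ := by simp [hg]
  have hKm : (K:ℝ) * m₀ ≤ K * (ε * h) := mul_le_mul_of_nonneg_left hm₀ε K.coe_nonneg
  have habs1 := abs_le.1 hd1
  have habs2 := abs_le.1 hd2
  calc G (r + h • w) - G r
      = (G (r + h • w) - G (u₀ + h • w)) + (g h - g 0) + (G u₀ - G r) := by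
        rw [hgh, hg0]; ring
    _ ≤ K * m₀ + ε * h + K * m₀ := by
        refine add_le_add (add_le_add habs1.2 hkey) habs2.2
    _ ≤ K * (ε * h) + ε * h + K * (ε * h) := by linarith
    _ = (1 + 2 * K) * ε * h := by ring


/-- Theorem 3.1 (one direction): a common Lyapunov function for the linear systems
`ṙ = Γ^ℓ r` induces a robust Lyapunov function `V = Ṽ ∘ R` for the CRN family. -/
theorem stmt1 {n ν : ℕ} (A B : Matrix (Fin n) (Fin ν) ℕ)
    (Γ : Matrix (Fin n) (Fin ν) ℝ)
    (hΓ : ∀ i j, Γ i j = (B i j : ℝ) - (A i j : ℝ))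
    (Vt : (Fin ν → ℝ) → ℝ) (hLip : LocallyLipschitz Vt)
    (hVnn : ∀ r : Fin ν → ℝ, (∀ j, 0 ≤ r j) → 0 ≤ Vt r)
    (hdec : ∀ r : Fin ν → ℝ, (∀ j, 0 ≤ r j) → DifferentiableAt ℝ Vt r →
      ∀ i j, 0 < A i j → fderiv ℝ Vt r ((GammaEll Γ i j).mulVec r) ≤ 0) :
    (∀ R, IsAdmissible A R → ∀ x : Fin n → ℝ, (∀ i, 0 ≤ x i) →
        dini (fun y => Vt (R y)) (fun y => Γ.mulVec (R y)) x ≤ 0)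
    ∧ ((∀ r : Fin ν → ℝ, (∀ j, 0 ≤ r j) → (Vt r = 0 ↔ Γ.mulVec r = 0)) →
        ∀ R, IsAdmissible A R → ∀ x : Fin n → ℝ, (∀ i, 0 ≤ x i) →
          (Vt (R x) = 0 ↔ Γ.mulVec (R x) = 0)) := by
  constructor
  swap
  · intro hker R hR x hx
    exact hker (R x) (hR.nonneg x hx)
  intro R hR x hx
  classical
  set r : Fin ν → ℝ := R x with hr
  have hrnn : ∀ j, 0 ≤ r j := hR.nonneg x hx
  set v : Fin n → ℝ := Γ.mulVec r with hv
  have hRdiff : Differentiable ℝ R := hR.smooth.differentiable one_ne_zero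
  have hRj_diff : ∀ (z : Fin n → ℝ) (j : Fin ν), DifferentiableAt ℝ (fun y => R y j) z :=
    fun z j => (ContinuousLinearMap.proj (R := ℝ) (φ := fun _ : Fin ν => ℝ) j).differentiableAt.comp z (hRdiff z)
  set w : Fin ν → ℝ := fderiv ℝ R x v with hw
  -- components of w
  have hDcomp : ∀ (j : Fin ν) (z : Fin n → ℝ),
      fderiv ℝ (fun y => R y j) x z = fderiv ℝ R x z j := by
    intro j z
    have h1 : HasFDerivAt (fun y => R y j)
        ((ContinuousLinearMap.proj (R := ℝ) (φ := fun _ : Fin ν => ℝ) j).comp (fderiv ℝ R x)) x := by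
      have h2 := ((ContinuousLinearMap.proj (R := ℝ) (φ := fun _ : Fin ν => ℝ) j).hasFDerivAt
        (x := R x)).comp x (hRdiff x).hasFDerivAt
      exact h2
    rw [h1.fderiv]
    rfl
  have hwcomp : ∀ k, w k = ∑ i, v i * pd R x k i := by
    intro k
    rw [hw, ← hDcomp k v]
    have hveq : v = ∑ i, v i • (Pi.single i 1 : Fin n → ℝ) := by
      funext l
      rw [Finset.sum_apply]
      simp [Pi.single_apply]
    conv_lhs => rw [hveq]
    rw [map_sum]
    refine Finset.sum_congr rfl fun i _ => ?_
    rw [_root_.map_smul]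
    rfl
  -- nonnegativity of v on zero coordinates of x
  have hv0 : ∀ i, x i = 0 → 0 ≤ v i := by
    intro i hxi
    rw [hv]
    show 0 ≤ Γ.mulVec r i
    rw [Matrix.mulVec, dotProduct]
    refine Finset.sum_nonneg fun k _ => ?_
    by_cases hA : 0 < A i k
    · rw [hr, hR.vanish x hx i k hA hxi, mul_zero]
    · have hA0 : A i k = 0 := by omega
      rw [hΓ i k, hA0]
      simp only [Nat.cast_zero, sub_zero]
      exact mul_nonneg (Nat.cast_nonneg _) (hrnn k)
  -- pd vanishes in the interior when rate is zero
  have hpd_int : ∀ i j, 0 < x i → r j = 0 → pd R x j i = 0 := by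
    intro i j hxi hrj
    set φ : ℝ → ℝ := fun t => R (x + t • (Pi.single i 1 : Fin n → ℝ)) j with hφ
    have hmin : IsLocalMin φ 0 := by
      have hev : ∀ᶠ t in 𝓝 (0:ℝ), |t| < x i := by
        have := eventually_abs_sub_lt (0:ℝ) hxi
        simpa using this
      filter_upwards [hev] with t ht
      have hnn : ∀ k, 0 ≤ (x + t • (Pi.single i 1 : Fin n → ℝ)) k := by
        intro k
        by_cases hk : k = i
        · subst hk
          simp only [Pi.add_apply, Pi.smul_apply, Pi.single_eq_same, smul_eq_mul, mul_one]
          have := abs_lt.1 ht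
          linarith
        · simp only [Pi.add_apply, Pi.smul_apply, Pi.single_eq_of_ne hk, smul_eq_mul, mul_zero,
            add_zero]
          exact hx k
      have h1 : φ t ≥ 0 := hR.nonneg _ hnn j
      have h2 : φ 0 = 0 := by
        rw [hφ]
        simp only [zero_smul, add_zero]
        rw [← hr] at *
        exact hrj
      rw [h2]; exact h1
    have hcurve : HasDerivAt (fun t : ℝ => x + t • (Pi.single i 1 : Fin n → ℝ))
        (Pi.single i 1) 0 := by
      have := ((hasDerivAt_id (0:ℝ)).smul_const (Pi.single i 1 : Fin n → ℝ)).const_add x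
      simpa using this
    have hD : HasDerivAt φ (pd R x j i) 0 := by
      have hdj := (hRj_diff x j).hasFDerivAt
      have hdj' : HasFDerivAt (fun y => R y j) (fderiv ℝ (fun y => R y j) x)
          (x + (0:ℝ) • (Pi.single i 1 : Fin n → ℝ)) := by simpa using hdj
      have := hdj'.comp_hasDerivAt 0 hcurve
      exact this
    exact hmin.hasDerivAt_eq_zero hD
  -- w is nonnegative where r vanishes
  have hw0 : ∀ j, r j = 0 → 0 ≤ w j := by
    intro j hrj
    rw [hwcomp j]
    refine Finset.sum_nonneg fun i _ => ?_
    by_cases hA : 0 < A i j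
    · rcases eq_or_lt_of_le (hx i) with hxi | hxi
      · exact mul_nonneg (hv0 i hxi.symm) (hR.deriv_nonneg x hx i j hA)
      · rw [hpd_int i j hxi hrj, mul_zero]
    · rw [hR.deriv_zero x hx i j (by omega), mul_zero]
  -- representation of w as a combination of the GammaEll vectors
  have hwrep : w = ∑ p : Fin n × Fin ν,
      pd R x p.2 p.1 • ((GammaEll Γ p.1 p.2).mulVec r) := by
    funext k
    rw [Finset.sum_apply, hwcomp k]
    have hterm : ∀ p : Fin n × Fin ν,
        (pd R x p.2 p.1 • ((GammaEll Γ p.1 p.2).mulVec r)) k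
        = pd R x p.2 p.1 * ((if k = p.2 then (1:ℝ) else 0) * v p.1) := by
      intro p
      simp only [Pi.smul_apply, smul_eq_mul]
      congr 1
      rw [GammaEll, Matrix.mulVec, dotProduct]
      simp only [Matrix.vecMulVec_apply, Pi.single_apply]
      rw [hv, Matrix.mulVec, dotProduct, Finset.mul_sum]
      exact Finset.sum_congr rfl fun l _ => by ring
    rw [Finset.sum_congr rfl fun p _ => hterm p]
    rw [Fintype.sum_prod_type]
    refine Finset.sum_congr rfl fun i _ => ?_
    rw [Finset.sum_eq_single k]
    · simp [mul_comm]
    · intro b _ hbk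
      simp [Ne.symm hbk]
    · intro hk
      exact absurd (Finset.mem_univ k) hk
  -- Lipschitz extension of Vt near r
  obtain ⟨K, s, hs, hK⟩ := hLip r
  obtain ⟨δ₁, hδ₁, hball₁⟩ := Metric.nhds_basis_closedBall.mem_iff.1 hs
  have hKcb : LipschitzOnWith K Vt (Metric.closedBall r δ₁) := hK.mono hball₁
  obtain ⟨F, hF, hFeq⟩ := hKcb.extend_real
  have hFeq' : Set.EqOn Vt F (Metric.closedBall r δ₁) := hFeq
  have htrans : ∀ y ∈ Metric.ball r δ₁, Vt =ᶠ[nhds y] F := fun y hy =>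
    Filter.eventuallyEq_of_mem (Metric.isOpen_ball.mem_nhds hy)
      (hFeq'.mono Metric.ball_subset_closedBall)
  -- the constant governing the gradient estimate
  set Cp : Fin n × Fin ν → ℝ := fun p =>
    ‖LinearMap.toContinuousLinearMap (Matrix.mulVecLin (GammaEll Γ p.1 p.2))‖ with hCp
  have hpd_nn : ∀ p : Fin n × Fin ν, 0 ≤ pd R x p.2 p.1 := by
    intro p
    by_cases hA : 0 < A p.1 p.2
    · exact hR.deriv_nonneg x hx p.1 p.2 hA
    · rw [hR.deriv_zero x hx p.1 p.2 (by omega)]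
  set Csum : ℝ := ∑ p : Fin n × Fin ν, pd R x p.2 p.1 * ((K:ℝ) * Cp p) with hCsum
  have hCsum_nn : 0 ≤ Csum :=
    Finset.sum_nonneg fun p _ => mul_nonneg (hpd_nn p)
      (mul_nonneg K.coe_nonneg (norm_nonneg _))
  -- final limsup estimate
  rw [dini]
  have hQbound : ∀ ε : ℝ, 0 < ε →
      Filter.limsup (fun h : ℝ => (Vt (R (x + h • Γ.mulVec (R x))) - Vt (R x)) / h)
        (nhdsWithin 0 (Set.Ioi 0)) ≤ ε := by
    intro ε hε
    set ε' : ℝ := ε / (2 + 3 * K) with hε'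
    have hKpos : (0:ℝ) < 2 + 3 * K := by positivity
    have hε'pos : 0 < ε' := div_pos hε hKpos
    -- the gradient estimate for F
    set δ : ℝ := min δ₁ (ε' / (Csum + 1)) with hδ
    have hδpos : 0 < δ := lt_min hδ₁ (by positivity)
    have H1 : ∀ y, y ∈ Metric.ball r δ → (∀ j, 0 ≤ y j) → DifferentiableAt ℝ F y →
        fderiv ℝ F y w ≤ ε' := by
      intro y hy hynn hyd
      have hyball : y ∈ Metric.ball r δ₁ :=
        Metric.ball_subset_ball (min_le_left _ _) hy
      have heq := htrans y hyball
      have hVtd : DifferentiableAt ℝ Vt y := by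
        rw [heq.differentiableAt_iff]; exact hyd
      have hfd_eq : fderiv ℝ F y = fderiv ℝ Vt y := (heq.fderiv_eq).symm
      have hnormL : ‖fderiv ℝ F y‖ ≤ (K:ℝ) := norm_fderiv_le_of_lipschitz ℝ hF
      rw [hwrep, map_sum]
      have hbound : ∀ p : Fin n × Fin ν,
          fderiv ℝ F y (pd R x p.2 p.1 • ((GammaEll Γ p.1 p.2).mulVec r))
          ≤ pd R x p.2 p.1 * ((K:ℝ) * Cp p) * ‖r - y‖ := by
        intro p
        rw [_root_.map_smul, smul_eq_mul]
        have hsplit : (GammaEll Γ p.1 p.2).mulVec r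
            = (GammaEll Γ p.1 p.2).mulVec y + (GammaEll Γ p.1 p.2).mulVec (r - y) := by
          rw [← Matrix.mulVec_add, add_comm, sub_add_cancel]
        rw [hsplit, map_add]
        have hT2 : fderiv ℝ F y ((GammaEll Γ p.1 p.2).mulVec (r - y))
            ≤ (K:ℝ) * Cp p * ‖r - y‖ := by
          calc fderiv ℝ F y ((GammaEll Γ p.1 p.2).mulVec (r - y))
              ≤ ‖fderiv ℝ F y ((GammaEll Γ p.1 p.2).mulVec (r - y))‖ := le_abs_self _
            _ ≤ ‖fderiv ℝ F y‖ * ‖(GammaEll Γ p.1 p.2).mulVec (r - y)‖ :=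
                (fderiv ℝ F y).le_opNorm _
            _ ≤ (K:ℝ) * (Cp p * ‖r - y‖) := by
                refine mul_le_mul hnormL ?_ (norm_nonneg _) K.coe_nonneg
                have : (GammaEll Γ p.1 p.2).mulVec (r - y)
                    = LinearMap.toContinuousLinearMap
                        (Matrix.mulVecLin (GammaEll Γ p.1 p.2)) (r - y) := rfl
                rw [this]
                exact (LinearMap.toContinuousLinearMap _).le_opNorm _
            _ = (K:ℝ) * Cp p * ‖r - y‖ := by ring
        by_cases hA : 0 < A p.1 p.2
        · have hT1 : fderiv ℝ F y ((GammaEll Γ p.1 p.2).mulVec y) ≤ 0 := by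
            rw [hfd_eq]
            exact hdec y hynn hVtd p.1 p.2 hA
          have := hpd_nn p
          nlinarith
        · rw [hR.deriv_zero x hx p.1 p.2 (by omega)]
          simp
      calc (∑ p : Fin n × Fin ν,
            fderiv ℝ F y (pd R x p.2 p.1 • ((GammaEll Γ p.1 p.2).mulVec r)))
          ≤ ∑ p : Fin n × Fin ν, pd R x p.2 p.1 * ((K:ℝ) * Cp p) * ‖r - y‖ :=
            Finset.sum_le_sum fun p _ => hbound p
        _ = Csum * ‖r - y‖ := by rw [hCsum, Finset.sum_mul]
        _ ≤ Csum * δ := by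
            refine mul_le_mul_of_nonneg_left ?_ hCsum_nn
            have := hy
            rw [Metric.mem_ball, dist_comm, dist_eq_norm] at this
            exact this.le
        _ ≤ Csum * (ε' / (Csum + 1)) := by
            exact mul_le_mul_of_nonneg_left (min_le_right _ _) hCsum_nn
        _ ≤ ε' := by
            rw [div_eq_inv_mul]
            have h1 : Csum * ((Csum + 1)⁻¹ * ε') = (Csum / (Csum + 1)) * ε' := by
              field_simp
            rw [h1]
            have h2 : Csum / (Csum + 1) ≤ 1 := by
              rw [div_le_one (by positivity)]
              linarith
            nlinarith
    obtain ⟨h₀, hh₀, hkey⟩ := key_increment hF r w hε'pos hδpos H1 hw0 hrnn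
    -- remainder estimate
    have hrem : Tendsto (fun h : ℝ => ‖R (x + h • v) - (r + h • w)‖ / h)
        (nhdsWithin 0 (Set.Ioi 0)) (nhds 0) := by
      have hlo : (fun k : Fin n → ℝ => R (x + k) - R x - fderiv ℝ R x k)
          =o[nhds 0] fun k => k := hasFDerivAt_iff_isLittleO_nhds_zero.1 (hRdiff x).hasFDerivAt
      have htv : Tendsto (fun h : ℝ => h • v) (nhdsWithin 0 (Set.Ioi 0)) (nhds 0) := by
        have : Tendsto (fun h : ℝ => h • v) (nhds 0) (nhds ((0:ℝ) • v)) :=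
          (continuous_id.smul continuous_const).tendsto 0
        rw [zero_smul] at this
        exact this.mono_left nhdsWithin_le_nhds
      have h1 := hlo.comp_tendsto htv
      have h2 : (fun h : ℝ => R (x + h • v) - r - h • w)
          =o[nhdsWithin 0 (Set.Ioi 0)] fun h : ℝ => h • v := by
        refine h1.congr (fun h => ?_) (fun h => rfl)
        simp only [Function.comp_apply]
        rw [hr, hw, _root_.map_smul]
      have h3 : (fun h : ℝ => h • v) =O[nhdsWithin 0 (Set.Ioi 0)] fun h : ℝ => h := by
        refine Asymptotics.isBigO_of_le' (c := ‖v‖) _ fun h => ?_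
        rw [norm_smul]
        exact le_of_eq (mul_comm _ _)
      have h4 := (h2.trans_isBigO h3).norm_left
      have := h4.tendsto_div_nhds_zero
      refine this.congr fun h => ?_
      congr 1
      congr 1
      abel
    -- eventual bound
    have hev1 : ∀ᶠ h : ℝ in nhdsWithin 0 (Set.Ioi 0), 0 < h :=
      eventually_mem_nhdsWithin
    have hev2 : ∀ᶠ h : ℝ in nhdsWithin 0 (Set.Ioi 0), h < h₀ :=
      (eventually_lt_nhds hh₀).filter_mono nhdsWithin_le_nhds
    have hev3 : ∀ᶠ h : ℝ in nhdsWithin 0 (Set.Ioi 0),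
        ‖R (x + h • v) - (r + h • w)‖ / h < ε' :=
      hrem.eventually_lt_const hε'pos
    have htR : Tendsto (fun h : ℝ => R (x + h • v)) (nhdsWithin 0 (Set.Ioi 0)) (nhds r) := by
      have hc : Continuous fun h : ℝ => R (x + h • v) :=
        hR.smooth.continuous.comp (continuous_const.add (continuous_id.smul continuous_const))
      have := hc.tendsto 0
      simp only [zero_smul, add_zero] at this
      rw [← hr] at this
      exact this.mono_left nhdsWithin_le_nhds
    have hev4 : ∀ᶠ h : ℝ in nhdsWithin 0 (Set.Ioi 0),
        R (x + h • v) ∈ Metric.closedBall r δ₁ :=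
      htR.eventually_mem (Metric.closedBall_mem_nhds r hδ₁)
    have htW : Tendsto (fun h : ℝ => r + h • w) (nhdsWithin 0 (Set.Ioi 0)) (nhds r) := by
      have hc : Continuous fun h : ℝ => r + h • w :=
        continuous_const.add (continuous_id.smul continuous_const)
      have := hc.tendsto 0
      simp only [zero_smul, add_zero] at this
      exact this.mono_left nhdsWithin_le_nhds
    have hev5 : ∀ᶠ h : ℝ in nhdsWithin 0 (Set.Ioi 0),
        r + h • w ∈ Metric.closedBall r δ₁ :=
      htW.eventually_mem (Metric.closedBall_mem_nhds r hδ₁)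
    have hmain : ∀ᶠ h : ℝ in nhdsWithin 0 (Set.Ioi 0),
        (Vt (R (x + h • Γ.mulVec (R x))) - Vt (R x)) / h ≤ ε := by
      filter_upwards [hev1, hev2, hev3, hev4, hev5] with h h1 h2 h3 h4 h5
      have hrc : r ∈ Metric.closedBall r δ₁ := Metric.mem_closedBall_self hδ₁.le
      have e1 : Vt (R (x + h • Γ.mulVec (R x))) = F (R (x + h • v)) := by
        rw [← hr, ← hv]
        exact hFeq' h4
      have e2 : Vt (R x) = F r := by rw [← hr]; exact hFeq' hrc
      rw [e1, e2]
      have hlip1 : F (R (x + h • v)) - F (r + h • w)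
          ≤ (K:ℝ) * ‖R (x + h • v) - (r + h • w)‖ := by
        have := hF.dist_le_mul (R (x + h • v)) (r + h • w)
        rw [Real.dist_eq, dist_eq_norm] at this
        linarith [le_abs_self (F (R (x + h • v)) - F (r + h • w))]
      have hkey' : F (r + h • w) - F r ≤ (1 + 2 * K) * ε' * h := hkey h h1 h2
      have hcomb : F (R (x + h • v)) - F r
          ≤ (1 + 2 * K) * ε' * h + (K:ℝ) * ‖R (x + h • v) - (r + h • w)‖ := by
        linarith
      rw [div_le_iff₀ h1]
      have hrem_le : (K:ℝ) * ‖R (x + h • v) - (r + h • w)‖ ≤ (K:ℝ) * (ε' * h) := by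
        refine mul_le_mul_of_nonneg_left ?_ K.coe_nonneg
        have := (div_le_iff₀ h1).1 h3.le
        linarith
      calc F (R (x + h • v)) - F r
          ≤ (1 + 2 * K) * ε' * h + (K:ℝ) * (ε' * h) := by linarith
        _ = (1 + 3 * K) * ε' * h := by ring
        _ ≤ (2 + 3 * K) * ε' * h := by
            have h9 : (0:ℝ) ≤ ε' * h := mul_nonneg hε'pos.le h1.le
            have h10 : (1 + 3*(K:ℝ)) ≤ 2 + 3*(K:ℝ) := by linarith
            calc (1 + 3 * (K:ℝ)) * ε' * h = (1 + 3*(K:ℝ)) * (ε' * h) := by ring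
              _ ≤ (2 + 3*(K:ℝ)) * (ε' * h) := mul_le_mul_of_nonneg_right h10 h9
              _ = (2 + 3*(K:ℝ)) * ε' * h := by ring
        _ = ε * h := by
            have hne : (2 + 3*(K:ℝ)) ≠ 0 := ne_of_gt hKpos
            have hεeq : (2 + 3 * (K:ℝ)) * ε' = ε := by
              rw [hε']; field_simp
            rw [hεeq]
    -- coboundedness
    have hcob : Filter.IsCoboundedUnder (· ≤ ·)
        (nhdsWithin (0:ℝ) (Set.Ioi 0))
        (fun h : ℝ => (Vt (R (x + h • Γ.mulVec (R x))) - Vt (R x)) / h) := by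
      refine Filter.isCoboundedUnder_le_of_eventually_le _
        (x := -((K:ℝ) * (‖w‖ + ε'))) ?_
      filter_upwards [hev1, hev3, hev4] with h h1 h3 h4
      have hrc : r ∈ Metric.closedBall r δ₁ := Metric.mem_closedBall_self hδ₁.le
      have e1 : Vt (R (x + h • Γ.mulVec (R x))) = F (R (x + h • v)) := by
        rw [← hr, ← hv]
        exact hFeq' h4
      have e2 : Vt (R x) = F r := by rw [← hr]; exact hFeq' hrc
      rw [e1, e2]
      have hd : |F (R (x + h • v)) - F r| ≤ (K:ℝ) * ‖R (x + h • v) - r‖ := by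
        have := hF.dist_le_mul (R (x + h • v)) r
        rw [Real.dist_eq, dist_eq_norm] at this
        exact this
      have htri : ‖R (x + h • v) - r‖ ≤ ‖R (x + h • v) - (r + h • w)‖ + ‖h • w‖ := by
        have : R (x + h • v) - r = (R (x + h • v) - (r + h • w)) + h • w := by abel
        rw [this]
        exact norm_add_le _ _
      have hsw : ‖h • w‖ = h * ‖w‖ := by
        rw [norm_smul, Real.norm_eq_abs, abs_of_pos h1]
      have hrem_le : ‖R (x + h • v) - (r + h • w)‖ ≤ ε' * h := by
        have := (div_le_iff₀ h1).1 h3.le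
        linarith
      have habs := abs_le.1 hd
      rw [le_div_iff₀ h1]
      have hb : ‖R (x + h • v) - r‖ ≤ (‖w‖ + ε') * h := by
        calc ‖R (x + h • v) - r‖ ≤ ‖R (x + h • v) - (r + h • w)‖ + ‖h • w‖ := htri
          _ ≤ ε' * h + h * ‖w‖ := add_le_add hrem_le (le_of_eq hsw)
          _ = (‖w‖ + ε') * h := by ring
      have hmul : (K:ℝ) * ‖R (x + h • v) - r‖ ≤ (K:ℝ) * ((‖w‖ + ε') * h) :=
        mul_le_mul_of_nonneg_left hb K.coe_nonneg
      calc -((K:ℝ)*(‖w‖+ε'))*h = -((K:ℝ)*((‖w‖+ε')*h)) := by ring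
        _ ≤ -((K:ℝ) * ‖R (x + h • v) - r‖) := by linarith
        _ ≤ F (R (x + h • v)) - F r := by linarith [habs.1]
    exact Filter.limsup_le_of_le hcob hmain
  have hfin : ∀ ε : ℝ, 0 < ε →
      Filter.limsup (fun h : ℝ => (Vt (R (x + h • Γ.mulVec (R x))) - Vt (R x)) / h)
        (nhdsWithin 0 (Set.Ioi 0)) ≤ 0 + ε := fun ε hε => by
    rw [zero_add]; exact hQbound ε hε
  exact le_of_forall_pos_le_add hfin
end

section
/- Let Ṽ : ℝ≥0^ν → ℝ≥0 be locally Lipschitz and suppose that for every admissible kinetics R ∈ K_A and every x in the open positive orthant of ℝⁿ, the Dini derivative of Ṽ ∘ R along the vector field x ↦ ΓR(x) is nonpositive, i.e. limsup_{h→0⁺} (Ṽ(R(x + hΓR(x))) − Ṽ(R(x)))/h ≤ 0. Then for every ℓ ∈ {1,…,s} and every strictly positive r ∈ ℝ^ν at which Ṽ is differentiable, ∇Ṽ(r)ᵀ (Γ^ℓ r) ≤ 0; that is, Ṽ is a common Lyapunov function for each of the linear systems ṙ = Γ^ℓ r. -/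
open Filter Set Topology

noncomputable def qq (t : ℝ) : ℝ := (max t 0)^2

theorem hasDerivAt_qq (t : ℝ) : HasDerivAt qq (2 * max t 0) t := by
  rcases lt_trichotomy t 0 with h | h | h
  · have : qq =ᶠ[nhds t] fun _ => (0:ℝ) := by
      filter_upwards [eventually_lt_nhds h] with s hs
      simp [qq, max_eq_right hs.le]
    rw [max_eq_right h.le, mul_zero]
    exact (hasDerivAt_const t (0:ℝ)).congr_of_eventuallyEq this
  · subst h
    rw [max_self, mul_zero]
    rw [hasDerivAt_iff_isLittleO]
    rw [Asymptotics.isLittleO_iff]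
    intro ε hε
    filter_upwards [Metric.ball_mem_nhds (0:ℝ) hε] with s hs
    simp only [qq, sub_zero, smul_zero, sub_zero, max_self]
    rw [zero_pow (by norm_num), sub_zero]
    have h1 : |max s 0| ≤ |s| := by
      rcases le_or_gt s 0 with hs' | hs'
      · simp [max_eq_right hs']
      · simp [max_eq_left hs'.le]
    have hsε : ‖s‖ < ε := by simpa [Real.norm_eq_abs, abs_sub_comm] using Metric.mem_ball.mp hs
    calc ‖(max s 0)^2‖ = |max s 0| * |max s 0| := by rw [sq, norm_mul]; rfl
      _ ≤ |s| * |s| := mul_le_mul h1 h1 (abs_nonneg _) (abs_nonneg _)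
      _ ≤ ε * ‖s‖ := by
          apply mul_le_mul hsε.le le_rfl (abs_nonneg _) (le_of_lt hε)
  · have heq : qq =ᶠ[nhds t] fun s => s^2 := by
      filter_upwards [eventually_gt_nhds h] with s hs
      simp [qq, max_eq_left hs.le]
    rw [max_eq_left h.le]
    have h2 : HasDerivAt (fun s : ℝ => s^2) (2*t) t := by
      simpa [mul_comm] using (hasDerivAt_pow 2 t)
    exact h2.congr_of_eventuallyEq heq
lemma qq_nonneg (t : ℝ) : 0 ≤ qq t := sq_nonneg _
lemma qq_zero : qq 0 = 0 := by simp [qq]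
lemma qq_one : qq 1 = 1 := by norm_num [qq]
lemma qq_pos {t : ℝ} (h : 0 < t) : 0 < qq t := by
  simp only [qq, max_eq_left h.le]; positivity


lemma contDiff_qq : ContDiff ℝ 1 qq := by
  rw [contDiff_one_iff_deriv]
  constructor
  · exact fun t => (hasDerivAt_qq t).differentiableAt
  · have : deriv qq = fun t => 2 * max t 0 := by
      funext t; exact (hasDerivAt_qq t).deriv
    rw [this]
    exact continuous_const.mul (continuous_id.max continuous_const)

noncomputable def FF (c p : ℝ) : ℝ := (1 - Real.exp (-(c*p))) / (1 - Real.exp (-c))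

noncomputable def FF' (c p : ℝ) : ℝ := c * Real.exp (-(c*p)) / (1 - Real.exp (-c))

lemma den_pos {c : ℝ} (hc : 0 < c) : 0 < 1 - Real.exp (-c) := by
  have : Real.exp (-c) < 1 := Real.exp_lt_one_iff.mpr (by linarith)
  linarith

lemma FF_one {c : ℝ} (hc : 0 < c) : FF c 1 = 1 := by
  rw [FF, mul_one, div_self (ne_of_gt (den_pos hc))]

lemma FF_nonneg {c p : ℝ} (hc : 0 < c) (hp : 0 ≤ p) : 0 ≤ FF c p := by
  apply div_nonneg _ (den_pos hc).le
  have : Real.exp (-(c*p)) ≤ 1 := Real.exp_le_one_iff.mpr (by nlinarith)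
  linarith

lemma FF_pos {c p : ℝ} (hc : 0 < c) (hp : 0 < p) : 0 < FF c p := by
  apply div_pos _ (den_pos hc)
  have : Real.exp (-(c*p)) < 1 := Real.exp_lt_one_iff.mpr (by nlinarith)
  linarith

lemma FF'_pos {c : ℝ} (hc : 0 < c) (p : ℝ) : 0 < FF' c p := by
  apply div_pos (by positivity) (den_pos hc)

lemma hasDerivAt_FF (c p : ℝ) : HasDerivAt (FF c) (FF' c p) p := by
  have h1 : HasDerivAt (fun p : ℝ => -(c*p)) (-c) p := by
    exact (hasDerivAt_mul_const (-c) : HasDerivAt (fun x : ℝ => x * (-c)) (-c) p).congr_of_eventuallyEq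
      (Filter.Eventually.of_forall fun y => by ring)
  have h2 : HasDerivAt (fun p : ℝ => Real.exp (-(c*p))) (Real.exp (-(c*p)) * (-c)) p :=
    (Real.hasDerivAt_exp _).comp p h1
  have h3 : HasDerivAt (fun p : ℝ => 1 - Real.exp (-(c*p))) (c * Real.exp (-(c*p))) p := by
    simpa [mul_comm] using (h2.const_sub 1)
  show HasDerivAt (fun p => FF c p) (FF' c p) p
  simpa [FF, FF', div_eq_mul_inv] using h3.div_const (1 - Real.exp (-c))

lemma contDiff_FF (c : ℝ) : ContDiff ℝ 1 (FF c) := by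
  apply ContDiff.div_const
  apply ContDiff.sub contDiff_const
  exact (Real.contDiff_exp.of_le le_top).comp ((contDiff_const.mul contDiff_id).neg)

section Construction

variable {n ν : ℕ} (A : Matrix (Fin n) (Fin ν) ℕ) (i : Fin n) (j : Fin ν) (r : Fin ν → ℝ) (c : ℝ)

def SS (k : Fin ν) : Finset (Fin n) := Finset.univ.filter fun m => 0 < A m k

lemma mem_SS {k : Fin ν} {m : Fin n} : m ∈ SS A k ↔ 0 < A m k := by
  simp [SS]

noncomputable def TT (k : Fin ν) : Finset (Fin n) :=
  if k = j then (SS A j).erase i else SS A k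

noncomputable def PP (k : Fin ν) (x : Fin n → ℝ) : ℝ := ∏ m ∈ TT A i j k, qq (x m)

noncomputable def RR (x : Fin n → ℝ) (k : Fin ν) : ℝ :=
  r k * (if k = j then qq (x i) else 1) * FF c (PP A i j k x)

noncomputable def Lp (k : Fin ν) (x : Fin n → ℝ) : (Fin n → ℝ) →L[ℝ] ℝ :=
  ∑ m ∈ TT A i j k, (∏ m' ∈ (TT A i j k).erase m, qq (x m')) •
    ((2 * max (x m) 0) • (ContinuousLinearMap.proj m : (Fin n → ℝ) →L[ℝ] ℝ))

noncomputable def CLM (k : Fin ν) (x : Fin n → ℝ) : (Fin n → ℝ) →L[ℝ] ℝ :=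
  if k = j then
    (r j * qq (x i)) • (FF' c (PP A i j j x) • Lp A i j j x)
      + FF c (PP A i j j x) •
          ((r j) • ((2 * max (x i) 0) • (ContinuousLinearMap.proj i : (Fin n → ℝ) →L[ℝ] ℝ)))
  else (r k) • (FF' c (PP A i j k x) • Lp A i j k x)

lemma hasFDerivAt_factor (m : Fin n) (x : Fin n → ℝ) :
    HasFDerivAt (fun y : Fin n → ℝ => qq (y m))
      ((2 * max (x m) 0) • (ContinuousLinearMap.proj m : (Fin n → ℝ) →L[ℝ] ℝ)) x :=
  (hasDerivAt_qq (x m)).comp_hasFDerivAt (f := fun y : Fin n → ℝ => y m) x (hasFDerivAt_apply m x)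

lemma hasFDerivAt_PP (k : Fin ν) (x : Fin n → ℝ) :
    HasFDerivAt (PP A i j k) (Lp A i j k x) x :=
  HasFDerivAt.finset_prod (fun m _ => hasFDerivAt_factor m x)

lemma hasFDerivAt_RR (k : Fin ν) (x : Fin n → ℝ) :
    HasFDerivAt (fun y => RR A i j r c y k) (CLM A i j r c k x) x := by
  have hFP : HasFDerivAt (fun y => FF c (PP A i j k y))
      (FF' c (PP A i j k x) • Lp A i j k x) x :=
    (hasDerivAt_FF c (PP A i j k x)).comp_hasFDerivAt x (hasFDerivAt_PP A i j k x)
  by_cases hk : k = j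
  · subst hk
    have h1 : HasFDerivAt (fun y : Fin n → ℝ => r k * qq (y i))
        ((r k) • ((2 * max (x i) 0) • (ContinuousLinearMap.proj i : (Fin n → ℝ) →L[ℝ] ℝ))) x :=
      (hasFDerivAt_factor i x).const_mul (r k)
    have h2 := h1.mul hFP
    simp only [RR, CLM, if_pos rfl]
    exact h2
  · simp only [RR, CLM, if_neg hk, mul_one]
    exact hFP.const_mul (r k)

lemma pd_RR (k : Fin ν) (m : Fin n) (x : Fin n → ℝ) :
    pd (RR A i j r c) x k m = CLM A i j r c k x (Pi.single m 1) := by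
  rw [pd, (hasFDerivAt_RR A i j r c k x).fderiv]

lemma Lp_apply (k : Fin ν) (m : Fin n) (x : Fin n → ℝ) :
    Lp A i j k x (Pi.single m 1) =
      if m ∈ TT A i j k then (∏ m' ∈ (TT A i j k).erase m, qq (x m')) * (2 * max (x m) 0)
      else 0 := by
  simp only [Lp, ContinuousLinearMap.sum_apply, ContinuousLinearMap.smul_apply,
    ContinuousLinearMap.proj_apply, smul_eq_mul, Pi.single_apply, mul_ite, mul_one, mul_zero]
  rw [Finset.sum_ite_eq' (TT A i j k) m]

lemma contDiff_RR : ContDiff ℝ 1 (RR A i j r c) := by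
  rw [contDiff_pi]
  intro k
  apply ContDiff.mul
  · apply ContDiff.mul contDiff_const
    by_cases hk : k = j
    · simp only [if_pos hk]
      exact contDiff_qq.comp (contDiff_apply ℝ ℝ i)
    · simp only [if_neg hk]; exact contDiff_const
  · exact (contDiff_FF c).comp
      (contDiff_prod fun m _ => contDiff_qq.comp (contDiff_apply ℝ ℝ m))

lemma PP_nonneg (k : Fin ν) (x : Fin n → ℝ) : 0 ≤ PP A i j k x :=
  Finset.prod_nonneg fun m _ => qq_nonneg _

lemma PP_pos (k : Fin ν) {x : Fin n → ℝ} (hx : ∀ m, 0 < x m) : 0 < PP A i j k x :=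
  Finset.prod_pos fun m _ => qq_pos (hx m)

lemma CLM_apply (k : Fin ν) (m : Fin n) (x : Fin n → ℝ) :
    CLM A i j r c k x (Pi.single m 1) =
      (if k = j then r j * qq (x i) else r k) * (FF' c (PP A i j k x) *
        (if m ∈ TT A i j k then (∏ m' ∈ (TT A i j k).erase m, qq (x m')) * (2 * max (x m) 0)
         else 0))
      + (if k = j ∧ m = i then FF c (PP A i j j x) * (r j * (2 * max (x i) 0)) else 0) := by
  by_cases hk : k = j
  · rw [hk]
    rw [CLM, if_pos rfl, if_pos rfl]
    simp only [ContinuousLinearMap.add_apply, ContinuousLinearMap.smul_apply,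
      ContinuousLinearMap.proj_apply, smul_eq_mul, Lp_apply, Pi.single_apply, true_and]
    by_cases hmi : m = i
    · have h1 : (i = m) := hmi.symm
      rw [if_pos h1, if_pos hmi]
      ring
    · have h1 : ¬ (i = m) := fun h => hmi h.symm
      rw [if_neg h1, if_neg hmi]
      ring
  · have h2 : ¬ (k = j ∧ m = i) := fun h => hk h.1
    rw [CLM, if_neg hk, if_neg hk, if_neg h2]
    simp only [ContinuousLinearMap.smul_apply, smul_eq_mul, Lp_apply, add_zero]
    try ring

lemma TT_subset_SS : ∀ k m, m ∈ TT A i j k → m ∈ SS A k := by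
  intro k m hm
  by_cases hk : k = j
  · rw [hk] at hm ⊢; rw [TT, if_pos rfl] at hm; exact Finset.mem_of_mem_erase hm
  · rwa [TT, if_neg hk] at hm

lemma FF_zero : FF c 0 = 0 := by simp [FF]

lemma isAdmissible_RR (hA : 0 < A i j) (hr : ∀ k, 0 < r k) (hc : 0 < c) :
    IsAdmissible A (RR A i j r c) where
  smooth := contDiff_RR A i j r c
  nonneg := by
    intro x _ k
    refine mul_nonneg (mul_nonneg (hr k).le ?_) (FF_nonneg hc (PP_nonneg A i j k x))
    split
    · exact qq_nonneg _
    · norm_num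
  vanish := by
    intro x _ m k hmk hxm
    by_cases h : k = j ∧ m = i
    · rw [RR, if_pos h.1, ← h.2, hxm, qq_zero, mul_zero, zero_mul]
    · have hmem : m ∈ TT A i j k := by
        rw [TT]; split_ifs with hk
        · rw [← hk]
          exact Finset.mem_erase.mpr ⟨fun hmi => h ⟨hk, hmi⟩, (mem_SS _).mpr hmk⟩
        · exact (mem_SS _).mpr hmk
      have hP : PP A i j k x = 0 :=
        Finset.prod_eq_zero hmem (by rw [hxm, qq_zero])
      rw [RR, hP, FF_zero, mul_zero]
  deriv_nonneg := by
    intro x _ m k _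
    rw [pd_RR, CLM_apply]
    apply add_nonneg
    · apply mul_nonneg
      · split
        · exact mul_nonneg (hr j).le (qq_nonneg _)
        · exact (hr k).le
      · apply mul_nonneg (FF'_pos hc _).le
        split
        · exact mul_nonneg (Finset.prod_nonneg fun _ _ => qq_nonneg _)
            (mul_nonneg (by norm_num) (le_max_right _ _))
        · exact le_rfl
    · split
      · exact mul_nonneg (FF_nonneg hc (PP_nonneg A i j j x))
          (mul_nonneg (hr j).le (mul_nonneg (by norm_num) (le_max_right _ _)))
      · exact le_rfl
  deriv_zero := by
    intro x _ m k hmk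
    rw [pd_RR, CLM_apply]
    have h1 : m ∉ TT A i j k := fun hm =>
      absurd ((mem_SS _).mp (TT_subset_SS A i j k m hm)) (by omega)
    have h2 : ¬(k = j ∧ m = i) := by
      rintro ⟨rfl, rfl⟩; omega
    rw [if_neg h1, if_neg h2, mul_zero, add_zero, mul_zero]
  deriv_pos := by
    intro x hx m k hmk
    rw [pd_RR, CLM_apply]
    have hmax : ∀ m' : Fin n, max (x m') 0 = x m' := fun m' => max_eq_left (hx m').le
    have hterm : ∀ k', m ∈ TT A i j k' →
        0 < FF' c (PP A i j k' x) *
          (if m ∈ TT A i j k' then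
            (∏ m' ∈ (TT A i j k' ).erase m, qq (x m')) * (2 * max (x m) 0) else 0) := by
      intro k' hm
      rw [if_pos hm, hmax]
      exact mul_pos (FF'_pos hc _)
        (mul_pos (Finset.prod_pos fun _ _ => qq_pos (hx _)) (by have := hx m; positivity))
    by_cases h : k = j ∧ m = i
    · obtain ⟨hk, hmi⟩ := h
      apply add_pos_of_nonneg_of_pos
      · apply mul_nonneg
        · rw [if_pos hk]; exact mul_nonneg (hr j).le (qq_nonneg _)
        · apply mul_nonneg (FF'_pos hc _).le
          split
          · exact mul_nonneg (Finset.prod_nonneg fun _ _ => qq_nonneg _)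
              (mul_nonneg (by norm_num) (le_max_right _ _))
          · exact le_rfl
      · rw [if_pos ⟨hk, hmi⟩, hmax]
        exact mul_pos (FF_pos hc (PP_pos A i j _ hx))
          (mul_pos (hr _) (by have := hx i; positivity))
    · have hmem : m ∈ TT A i j k := by
        rw [TT]; split_ifs with hk
        · rw [← hk]
          exact Finset.mem_erase.mpr ⟨fun hmi => h ⟨hk, hmi⟩, (mem_SS _).mpr hmk⟩
        · exact (mem_SS _).mpr hmk
      apply add_pos_of_pos_of_nonneg
      · apply mul_pos _ (hterm k hmem)
        split
        · exact mul_pos (hr j) (qq_pos (hx i))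
        · exact hr k
      · rw [if_neg h]

lemma PP_ones (k : Fin ν) : PP A i j k (fun _ => 1) = 1 :=
  Finset.prod_eq_one fun _ _ => qq_one

lemma RR_ones (hc : 0 < c) : RR A i j r c (fun _ => 1) = r := by
  funext k
  rw [RR, PP_ones, FF_one hc]
  split <;> simp [qq_one]

lemma Lp_ones (k : Fin ν) (v : Fin n → ℝ) :
    Lp A i j k (fun _ => 1) v = ∑ m ∈ TT A i j k, 2 * v m := by
  simp only [Lp, ContinuousLinearMap.sum_apply, ContinuousLinearMap.smul_apply,
    ContinuousLinearMap.proj_apply, smul_eq_mul]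
  refine Finset.sum_congr rfl fun m _ => ?_
  rw [Finset.prod_eq_one fun m' _ => qq_one]
  norm_num

lemma CLM_ones (hc : 0 < c) (v : Fin n → ℝ) (k : Fin ν) :
    CLM A i j r c k (fun _ => 1) v =
      FF' c 1 * (r k * ∑ m ∈ TT A i j k, 2 * v m) + (2 * r j * v i) * Pi.single (M := fun _ : Fin ν => ℝ) j 1 k := by
  have hm1 : max (1:ℝ) 0 = 1 := by norm_num
  by_cases hk : k = j
  · rw [hk, CLM, if_pos rfl]
    simp only [ContinuousLinearMap.add_apply, ContinuousLinearMap.smul_apply,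
      ContinuousLinearMap.proj_apply, smul_eq_mul, Lp_ones, PP_ones, FF_one hc, qq_one,
      Pi.single_eq_same, hm1]
    ring
  · rw [CLM, if_neg hk]
    simp only [ContinuousLinearMap.smul_apply, smul_eq_mul, Lp_ones, PP_ones,
      Pi.single_eq_of_ne hk]
    ring_nf
end Construction

/-- Theorem 3.1 (converse direction): if `Ṽ ∘ R` has nonpositive Dini derivative along
`ΓR` for every admissible kinetics, then `Ṽ` is a common Lyapunov function for the
linear systems `ṙ = Γ^ℓ r`. -/
theorem stmt2 {n ν : ℕ} (A B : Matrix (Fin n) (Fin ν) ℕ)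
    (Γ : Matrix (Fin n) (Fin ν) ℝ)
    (hΓ : ∀ i j, Γ i j = (B i j : ℝ) - (A i j : ℝ))
    (Vt : (Fin ν → ℝ) → ℝ) (hLip : LocallyLipschitz Vt)
    (hVnn : ∀ r : Fin ν → ℝ, (∀ j, 0 ≤ r j) → 0 ≤ Vt r)
    (hdini : ∀ R, IsAdmissible A R → ∀ x : Fin n → ℝ, (∀ i, 0 < x i) →
        dini (fun y => Vt (R y)) (fun y => Γ.mulVec (R y)) x ≤ 0) :
    ∀ i j, 0 < A i j → ∀ r : Fin ν → ℝ, (∀ k, 0 < r k) →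
      DifferentiableAt ℝ Vt r →
      fderiv ℝ Vt r ((GammaEll Γ i j).mulVec r) ≤ 0 := by
  intro i j hA r hr hVdiff
  classical
  set v : Fin n → ℝ := Γ.mulVec r with hv
  set L := fderiv ℝ Vt r with hL
  set W : Fin ν → ℝ := fun k => r k * ∑ m ∈ TT A i j k, 2 * v m with hW
  set e : Fin ν → ℝ := Pi.single j 1 with he
  have key : ∀ c : ℝ, 0 < c → FF' c 1 * L W + (2 * r j * v i) * L e ≤ 0 := by
    intro c hc
    have hadm := isAdmissible_RR A i j r c hA hr hc
    have hd := hdini _ hadm (fun _ => 1) (fun _ => one_pos)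
    set x₀ : Fin n → ℝ := fun _ => 1 with hx₀
    have hR1 : RR A i j r c x₀ = r := RR_ones A i j r c hc
    set w : Fin ν → ℝ := fun k => CLM A i j r c k x₀ v with hw
    have hpath : HasDerivAt (fun h : ℝ => x₀ + h • v) v 0 := by
      simpa using ((hasDerivAt_id (0:ℝ)).smul_const v).const_add x₀
    have hΦ : HasDerivAt (fun h : ℝ => RR A i j r c (x₀ + h • v)) w 0 := by
      rw [hasDerivAt_pi]
      intro k
      have h1 : HasFDerivAt (fun y => RR A i j r c y k) (CLM A i j r c k x₀)
          ((fun h : ℝ => x₀ + h • v) 0) := by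
        have : (fun h : ℝ => x₀ + h • v) 0 = x₀ := by simp
        rw [this]
        exact hasFDerivAt_RR A i j r c k x₀
      exact h1.comp_hasDerivAt 0 hpath
    have hVt : HasFDerivAt Vt L ((fun h : ℝ => RR A i j r c (x₀ + h • v)) 0) := by
      have : (fun h : ℝ => RR A i j r c (x₀ + h • v)) 0 = r := by simp [hR1]
      rw [this]
      exact hVdiff.hasFDerivAt
    have hg : HasDerivAt (fun h : ℝ => Vt (RR A i j r c (x₀ + h • v))) (L w) 0 :=
      hVt.comp_hasDerivAt 0 hΦ
    have hslope : Filter.Tendsto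
        (fun h : ℝ => (Vt (RR A i j r c (x₀ + h • v)) - Vt r) / h)
        (nhdsWithin 0 (Set.Ioi 0)) (nhds (L w)) := by
      have h1 := hasDerivAt_iff_tendsto_slope.mp hg
      have h2 : nhdsWithin (0:ℝ) (Set.Ioi 0) ≤ nhdsWithin (0:ℝ) {(0:ℝ)}ᶜ :=
        nhdsWithin_mono 0 (fun h hh => Set.mem_compl_singleton_iff.mpr (ne_of_gt hh))
      have h3 := h1.mono_left h2
      refine h3.congr fun h => ?_
      rw [slope_def_field]
      simp [hR1]
    have hdini_eq : dini (fun y => Vt (RR A i j r c y))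
        (fun y => Γ.mulVec (RR A i j r c y)) x₀ = L w := by
      rw [dini]
      have hfx : Γ.mulVec (RR A i j r c x₀) = v := by rw [hR1]
      rw [hfx, hR1]
      exact hslope.limsup_eq
    rw [hdini_eq] at hd
    have hweq : w = FF' c 1 • W + (2 * r j * v i) • e := by
      funext k
      simp only [Pi.add_apply, Pi.smul_apply, smul_eq_mul, hW, he]
      exact CLM_ones A i j r c hc v k
    rw [hweq, map_add, map_smul, map_smul, smul_eq_mul, smul_eq_mul] at hd
    exact hd
  have hF'lim : Filter.Tendsto (fun c : ℝ => FF' c 1) atTop (nhds 0) := by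
    have h1 : Filter.Tendsto (fun c : ℝ => c * Real.exp (-c)) atTop (nhds 0) := by
      simpa using Real.tendsto_pow_mul_exp_neg_atTop_nhds_zero 1
    have h2 : Filter.Tendsto (fun c : ℝ => 1 - Real.exp (-c)) atTop (nhds (1 - 0)) :=
      tendsto_const_nhds.sub Real.tendsto_exp_neg_atTop_nhds_zero
    rw [sub_zero] at h2
    have h3 := h1.div h2 one_ne_zero
    rw [zero_div] at h3
    refine h3.congr fun c => ?_
    rw [Pi.div_apply, FF', mul_one]
  have hfinal : (2 * r j * v i) * L e ≤ 0 := by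
    have hlim : Filter.Tendsto (fun c : ℝ => -(FF' c 1 * L W)) atTop (nhds 0) := by
      have := (hF'lim.mul_const (L W)).neg
      simpa using this
    refine ge_of_tendsto hlim ?_
    filter_upwards [Filter.eventually_gt_atTop (0:ℝ)] with c hc
    linarith [key c hc]
  have hvec : (GammaEll Γ i j).mulVec r = v i • e := by
    funext k
    simp only [GammaEll, Matrix.mulVec, Matrix.vecMulVec_apply, dotProduct, he,
      Pi.smul_apply, smul_eq_mul, hv, Finset.sum_mul]
    exact Finset.sum_congr rfl fun l _ => by ring
  rw [hvec, map_smul, smul_eq_mul]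
  nlinarith [hr j, hfinal]
end

section
/- Let Ṽ : ℝ≥0^ν → ℝ≥0 and V̂ : ℝⁿ → ℝ≥0 be locally Lipschitz with Ṽ(r) = V̂(Γr) for all r ∈ ℝ≥0^ν, and assume ker Γ contains a strictly positive vector (assumption AG). Suppose that for every admissible kinetics R ∈ K_A and every x ∈ ℝ≥0ⁿ, the function x ↦ Ṽ(R(x)) has nonpositive upper Dini derivative along the vector field x ↦ ΓR(x). Then for every admissible R ∈ K_A, every equilibrium x_e of R (ΓR(x_e) = 0), and every x in the class C_{x_e} = ({x_e} + im Γ) ∩ ℝ≥0ⁿ, the function x ↦ V̂(x − x_e) also has nonpositive upper Dini derivative along x ↦ ΓR(x). -/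
open Filter Set Topology

open Finset in
lemma monomial_hasFDerivAt {n : ℕ} (κ : ℝ) (c : Fin n → ℕ) (y : Fin n → ℝ) :
    ∃ D : (Fin n → ℝ) →L[ℝ] ℝ,
      HasFDerivAt (fun z : Fin n → ℝ => κ * ∏ i, z i ^ c i) D y ∧
      ∀ w : Fin n → ℝ, D w =
        ∑ i, (κ * (c i : ℝ) * y i ^ (c i - 1) * ∏ i' ∈ univ.erase i, y i' ^ c i') * w i := by
  have hfac : ∀ i ∈ (univ : Finset (Fin n)), HasFDerivAt (fun z : Fin n → ℝ => z i ^ c i)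
      (((c i : ℝ) * y i ^ (c i - 1)) • (ContinuousLinearMap.proj i :
        ((Fin n → ℝ) →L[ℝ] ℝ))) y := by
    intro i _
    exact (hasDerivAt_pow (c i) (y i)).comp_hasFDerivAt y (hasFDerivAt_apply i y)
  have hp := HasFDerivAt.finset_prod hfac
  have hp' : HasFDerivAt (fun z : Fin n → ℝ => κ * ∏ i, z i ^ c i)
      (κ • ∑ i, (∏ i' ∈ univ.erase i, y i' ^ c i') •
        (((c i : ℝ) * y i ^ (c i - 1)) • (ContinuousLinearMap.proj i :
          ((Fin n → ℝ) →L[ℝ] ℝ)))) y := hp.const_mul κ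
  refine ⟨_, hp', ?_⟩
  intro w
  simp only [ContinuousLinearMap.smul_apply, ContinuousLinearMap.sum_apply,
    ContinuousLinearMap.proj_apply, smul_eq_mul, Finset.mul_sum]
  apply Finset.sum_congr rfl
  intro i _
  ring

open Finset in
lemma pd_monomial {n ν : ℕ} (κ : Fin ν → ℝ) (c : Fin n → Fin ν → ℕ) (y : Fin n → ℝ)
    (j : Fin ν) (i : Fin n) :
    pd (fun y j => κ j * ∏ i, y i ^ c i j) y j i =
      κ j * (c i j : ℝ) * y i ^ (c i j - 1) * ∏ i' ∈ univ.erase i, y i' ^ c i' j := by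
  obtain ⟨D, hD, hDa⟩ := monomial_hasFDerivAt (κ j) (fun i => c i j) y
  have : pd (fun y j => κ j * ∏ i, y i ^ c i j) y j i = D (Pi.single i 1) := by
    rw [pd, hD.fderiv]
  rw [this, hDa]
  rw [Finset.sum_eq_single i]
  · simp
  · intro i' _ hne; simp [Pi.single_apply, hne]
  · simp

open Finset in
lemma monomial_ray {n : ℕ} (κ : ℝ) (c : Fin n → ℕ) (z d : Fin n → ℝ) :
    HasDerivAt (fun h : ℝ => κ * ∏ i, (z + h • d) i ^ c i)
      (∑ i, (κ * (c i : ℝ) * z i ^ (c i - 1) * ∏ i' ∈ univ.erase i, z i' ^ c i') * d i) 0 := by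
  obtain ⟨D, hD, hDa⟩ := monomial_hasFDerivAt κ c z
  have h1 : HasDerivAt (fun h : ℝ => z + h • d) d 0 := by
    simpa using ((hasDerivAt_id (0:ℝ)).smul_const d).const_add z
  have h0 : z + (0:ℝ) • d = z := by simp
  rw [← h0] at hD
  have h2 := hD.comp_hasDerivAt 0 h1
  rw [hDa d] at h2
  exact h2

open Finset in
lemma monomial_admissible {n ν : ℕ} (A : Matrix (Fin n) (Fin ν) ℕ)
    (κ : Fin ν → ℝ) (c : Fin n → Fin ν → ℕ) (hκ : ∀ j, 0 < κ j)
    (hc0 : ∀ i j, A i j = 0 → c i j = 0) (hc1 : ∀ i j, 0 < A i j → 0 < c i j) :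
    IsAdmissible A (fun y j => κ j * ∏ i, y i ^ c i j) := by
  constructor
  · apply contDiff_pi.2
    intro j
    apply ContDiff.mul contDiff_const
    have : (fun y : Fin n → ℝ => ∏ i, y i ^ c i j) =
        ∏ i, (fun y : Fin n → ℝ => y i ^ c i j) := by
      funext y; simp [Finset.prod_apply]
    rw [this]
    exact contDiff_prod' (fun i _ => ((ContinuousLinearMap.proj i :
      ((Fin n → ℝ) →L[ℝ] ℝ)).contDiff).pow _)
  · intro x hx j
    exact mul_nonneg (hκ j).le (Finset.prod_nonneg fun i _ => pow_nonneg (hx i) _)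
  · intro x hx i j hA hxi
    have : (x i) ^ (c i j) = 0 := by
      rw [hxi]; exact zero_pow (Nat.pos_iff_ne_zero.mp (hc1 i j hA))
    rw [Finset.prod_eq_zero (mem_univ i) this, mul_zero]
  · intro x hx i j hA
    rw [pd_monomial]
    have := hκ j
    have h1 : (0:ℝ) ≤ x i ^ (c i j - 1) := pow_nonneg (hx i) _
    have h2 : (0:ℝ) ≤ ∏ i' ∈ univ.erase i, x i' ^ c i' j :=
      Finset.prod_nonneg fun i' _ => pow_nonneg (hx i') _
    positivity
  · intro x hx i j hA
    rw [pd_monomial, hc0 i j hA]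
    simp
  · intro x hx i j hA
    rw [pd_monomial]
    have h0 : (0:ℝ) < (c i j : ℝ) := by exact_mod_cast hc1 i j hA
    have h1 : (0:ℝ) < x i ^ (c i j - 1) := pow_pos (hx i) _
    have h2 : (0:ℝ) < ∏ i' ∈ univ.erase i, x i' ^ c i' j :=
      Finset.prod_pos fun i' _ => pow_pos (hx i') _
    have := hκ j
    positivity

lemma fderiv_apply_eq_sum_pd {n ν : ℕ}
    {R : (Fin n → ℝ) → Fin ν → ℝ} (j : Fin ν)
    (p u : Fin n → ℝ) :
    (fderiv ℝ (fun y => R y j) p) u = ∑ i, u i * pd R p j i := by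
  conv_lhs => rw [show u = ∑ i, Pi.single i (u i) from (Finset.univ_sum_single u).symm]
  rw [map_sum]
  apply Finset.sum_congr rfl
  intro i _
  have : Pi.single i (u i) = (u i) • (Pi.single i 1 : Fin n → ℝ) := by
    rw [← Pi.single_smul]; simp
  rw [this, map_smul]
  simp [pd, smul_eq_mul]

lemma admissible_mono {n ν : ℕ} {A : Matrix (Fin n) (Fin ν) ℕ}
    {R : (Fin n → ℝ) → Fin ν → ℝ} (hR : IsAdmissible A R) (j : Fin ν)
    (a b : Fin n → ℝ) (ha : ∀ i, 0 ≤ a i) (hb : ∀ i, 0 ≤ b i)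
    (hle : ∀ i, 0 < A i j → a i ≤ b i) : R a j ≤ R b j := by
  set u := b - a with hu
  set g : ℝ → ℝ := fun t => R (a + t • u) j with hg
  have hdiffR : Differentiable ℝ (fun y => R y j) :=
    ((contDiff_pi.mp hR.smooth j)).differentiable one_ne_zero
  have hgdiff : ∀ t : ℝ, HasDerivAt g ((fderiv ℝ (fun y => R y j) (a + t • u)) u) t := by
    intro t
    have h1 : HasDerivAt (fun t : ℝ => a + t • u) u t := by
      simpa using ((hasDerivAt_id t).smul_const u).const_add a
    exact (hdiffR (a + t • u)).hasFDerivAt.comp_hasDerivAt t h1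
  have horth : ∀ t : ℝ, t ∈ Icc (0:ℝ) 1 → ∀ i, 0 ≤ (a + t • u) i := by
    intro t ht i
    have := ha i; have := hb i
    simp only [Pi.add_apply, Pi.smul_apply, hu, Pi.sub_apply, smul_eq_mul]
    nlinarith [ht.1, ht.2]
  have hmono : MonotoneOn g (Icc (0:ℝ) 1) := by
    apply monotoneOn_of_deriv_nonneg (convex_Icc 0 1)
    · have : Differentiable ℝ g := fun t => (hgdiff t).differentiableAt
      exact this.continuous.continuousOn
    · exact (fun t _ => ((hgdiff t).differentiableAt.differentiableWithinAt))
    · intro t ht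
      rw [interior_Icc] at ht
      rw [(hgdiff t).deriv, fderiv_apply_eq_sum_pd j]
      apply Finset.sum_nonneg
      intro i _
      have hp : ∀ i', 0 ≤ (a + t • u) i' := horth t ⟨le_of_lt ht.1, le_of_lt ht.2⟩
      rcases Nat.eq_zero_or_pos (A i j) with h0 | hpos
      · rw [hR.deriv_zero _ hp i j h0]; ring_nf; simp
      · have h2 := hR.deriv_nonneg _ hp i j hpos
        have h3 : 0 ≤ u i := by simp [hu, sub_nonneg, hle i hpos]
        positivity
  have h01 : g 0 ≤ g 1 := hmono (by simp) (by simp) zero_le_one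
  simpa [hg, hu] using h01

open Finset in
lemma exists_m {n ν : ℕ} {A : Matrix (Fin n) (Fin ν) ℕ}
    {R : (Fin n → ℝ) → Fin ν → ℝ} (hR : IsAdmissible A R)
    (x xe : Fin n → ℝ) (hx : ∀ i, 0 ≤ x i) (hxe : ∀ i, 0 ≤ xe i) (j : Fin ν) :
    ∃ m : Fin n → ℝ, (∀ i, 0 ≤ m i) ∧ (∀ i, A i j = 0 → m i = 0) ∧
      ∑ i, m i * (x i - xe i) = R x j - R xe j := by
  rcases lt_trichotomy (R x j - R xe j) 0 with hlt | heq | hgt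
  · by_cases hex : ∃ i, 0 < A i j ∧ x i - xe i < 0
    · obtain ⟨i, hAi, hdi⟩ := hex
      refine ⟨fun i' => if i' = i then (R x j - R xe j) / (x i - xe i) else 0, ?_, ?_, ?_⟩
      · intro i'
        by_cases h : i' = i
        · simp only [h, if_pos rfl]
          rw [show (R x j - R xe j) / (x i - xe i) = (-(R x j - R xe j)) / (-(x i - xe i)) by
            rw [neg_div_neg_eq]]
          exact div_nonneg (by linarith) (by linarith)
        · simp [h]
      · intro i' h0
        have hne : i' ≠ i := by
          rintro rfl
          rw [h0] at hAi; exact lt_irrefl 0 hAi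
        simp [hne]
      · rw [Finset.sum_eq_single i]
        · simp only []
          rw [if_pos trivial, div_mul_cancel₀ _ hdi.ne]
        · intro i' _ hne; simp [hne]
        · intro h; exact absurd (Finset.mem_univ i) h
    · push_neg at hex
      have := admissible_mono hR j xe x hxe hx (fun i hA => by linarith [hex i hA])
      linarith
  · exact ⟨0, fun i => le_rfl, fun i _ => rfl, by simpa using heq.symm⟩
  · by_cases hex : ∃ i, 0 < A i j ∧ 0 < x i - xe i
    · obtain ⟨i, hAi, hdi⟩ := hex
      refine ⟨fun i' => if i' = i then (R x j - R xe j) / (x i - xe i) else 0, ?_, ?_, ?_⟩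
      · intro i'
        by_cases h : i' = i
        · simp only [h, if_pos rfl]
          positivity
        · simp [h]
      · intro i' h0
        have hne : i' ≠ i := by
          rintro rfl
          rw [h0] at hAi; exact lt_irrefl 0 hAi
        simp [hne]
      · rw [Finset.sum_eq_single i]
        · simp only []
          rw [if_pos trivial, div_mul_cancel₀ _ hdi.ne']
        · intro i' _ hne; simp [hne]
        · intro h; exact absurd (Finset.mem_univ i) h
    · push_neg at hex
      have := admissible_mono hR j x xe hx hxe (fun i hA => by linarith [hex i hA])
      linarith


lemma ceil_coeff_close (b rj T : ℝ) (hb : 0 ≤ b) (hr : 0 < rj) (hT : 0 < T) :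
    |((⌈T * b / rj⌉₊ + 1 : ℕ) : ℝ) * rj / T - b| ≤ 2 * rj / T := by
  set a := T * b / rj with ha
  have ha0 : 0 ≤ a := by positivity
  have hb' : b = a * rj / T := by rw [ha]; field_simp
  have hle1 : a ≤ (⌈a⌉₊ : ℝ) := Nat.le_ceil a
  have hle2 : (⌈a⌉₊ : ℝ) < a + 1 := Nat.ceil_lt_add_one ha0
  rw [hb']
  push_cast
  have h8 : ((⌈a⌉₊ : ℝ) + 1) * rj / T - a * rj / T = ((⌈a⌉₊ : ℝ) + 1 - a) * rj / T := by
    ring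
  have h7 : (0:ℝ) ≤ (⌈a⌉₊ : ℝ) + 1 - a := by linarith
  rw [h8, abs_of_nonneg (div_nonneg (mul_nonneg h7 hr.le) hT.le), div_le_div_iff₀ hT hT]
  nlinarith [mul_pos hr hT]

set_option maxHeartbeats 2000000 in
/-- Theorem 3.3: if `Ṽ(r) = V̂(Γr)` and `Ṽ ∘ R` is a robust Lyapunov function
(nonpositive Dini derivative along `ΓR`), then `x ↦ V̂(x − x_e)` is also nonincreasing
along trajectories in the stoichiometric class of any equilibrium `x_e`. -/
theorem stmt4 {n ν : ℕ} (A B : Matrix (Fin n) (Fin ν) ℕ)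
    (Γ : Matrix (Fin n) (Fin ν) ℝ)
    (hΓ : ∀ i j, Γ i j = (B i j : ℝ) - (A i j : ℝ))
    (Vt : (Fin ν → ℝ) → ℝ) (Vh : (Fin n → ℝ) → ℝ)
    (hLt : LocallyLipschitz Vt) (hLh : LocallyLipschitz Vh)
    (hVtnn : ∀ r : Fin ν → ℝ, (∀ j, 0 ≤ r j) → 0 ≤ Vt r)
    (hVhnn : ∀ z : Fin n → ℝ, 0 ≤ Vh z)
    (hcomp : ∀ r : Fin ν → ℝ, (∀ j, 0 ≤ r j) → Vt r = Vh (Γ.mulVec r))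
    (hAG : ∃ v : Fin ν → ℝ, (∀ j, 0 < v j) ∧ Γ.mulVec v = 0)
    (hdec : ∀ R, IsAdmissible A R → ∀ x : Fin n → ℝ, (∀ i, 0 ≤ x i) →
        dini (fun y => Vt (R y)) (fun y => Γ.mulVec (R y)) x ≤ 0) :
    ∀ R, IsAdmissible A R →
      ∀ xe : Fin n → ℝ, (∀ i, 0 ≤ xe i) → Γ.mulVec (R xe) = 0 →
        ∀ x : Fin n → ℝ, (∀ i, 0 ≤ x i) → (∃ r : Fin ν → ℝ, Γ.mulVec r = x - xe) →
          dini (fun y => Vh (y - xe)) (fun y => Γ.mulVec (R y)) x ≤ 0 := by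
  classical
  intro R hR xe hxe heq x hx hclass
  obtain ⟨r0, hr0⟩ := hclass
  obtain ⟨v, hv, hΓv⟩ := hAG
  set d : Fin n → ℝ := x - xe with hd
  set g : Fin n → ℝ := Γ.mulVec (R x) with hg
  set w : Fin ν → ℝ := R x - R xe with hw
  have hΓw : Γ.mulVec w = g := by rw [hw, Matrix.mulVec_sub, heq, sub_zero, hg]
  -- a strictly positive representative r of the class
  obtain ⟨r, hrpos, hΓr⟩ : ∃ r : Fin ν → ℝ, (∀ j, 0 < r j) ∧ Γ.mulVec r = d := by
    refine ⟨r0 + (1 + ∑ k, |r0 k| / v k) • v, ?_, ?_⟩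
    · intro j
      have h1 : |r0 j| / v j ≤ ∑ k, |r0 k| / v k :=
        Finset.single_le_sum (f := fun k => |r0 k| / v k)
          (fun k _ => by have := hv k; positivity) (Finset.mem_univ j)
      have h2 : 0 < v j := hv j
      have h3 : |r0 j| = (|r0 j| / v j) * v j := (div_mul_cancel₀ _ h2.ne').symm
      have hEv : |r0 j| ≤ (∑ k, |r0 k| / v k) * v j := by
        rw [h3]
        exact mul_le_mul_of_nonneg_right h1 h2.le
      have h6 := neg_abs_le (r0 j)
      simp only [Pi.add_apply, Pi.smul_apply, smul_eq_mul]
      nlinarith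
    · rw [Matrix.mulVec_add, Matrix.mulVec_smul, hΓv, smul_zero, add_zero, hr0, hd]
  -- the coefficients m
  choose m hm0 hmz hmsum using fun j => exists_m hR x xe hx hxe j
  -- Lipschitz data
  obtain ⟨K, t, ht, hKt⟩ := hLh d
  obtain ⟨ρ, hρ, hball⟩ := Metric.mem_nhds_iff.mp ht
  have hKl : LipschitzOnWith K Vh (Metric.ball d ρ) := hKt.mono hball
  obtain ⟨K', t', ht', hKt'⟩ := hLt r
  obtain ⟨ρ', hρ', hball'⟩ := Metric.mem_nhds_iff.mp ht'
  have hKl' : LipschitzOnWith K' Vt (Metric.ball r ρ') := hKt'.mono hball'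
  set Glm := (LinearMap.toContinuousLinearMap (Matrix.mulVecLin Γ) :
    (Fin ν → ℝ) →L[ℝ] (Fin n → ℝ)) with hGLdef
  have hGLa : ∀ p, Glm p = Γ.mulVec p := fun p => by
    simp [hGLdef, Matrix.mulVecLin_apply]
  have key : ∀ ε : ℝ, 0 < ε →
      dini (fun y => Vh (y - xe)) (fun y => Γ.mulVec (R y)) x ≤ ε := by
    intro ε hε
    show Filter.limsup (fun h : ℝ => (Vh (x + h • g - xe) - Vh d) / h)
      (nhdsWithin 0 (Set.Ioi 0)) ≤ ε
    obtain ⟨δ, hδ, hδbound⟩ : ∃ δ : ℝ, 0 < δ ∧ 2 * (K : ℝ) * ‖Glm‖ * δ ≤ ε / 2 := by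
      have h1 : (0:ℝ) ≤ (K : ℝ) := K.coe_nonneg
      have h2 : (0:ℝ) ≤ ‖Glm‖ := norm_nonneg _
      have hD : (0:ℝ) < 4 * ((K : ℝ) + 1) * (‖Glm‖ + 1) := by positivity
      refine ⟨ε / (4 * ((K : ℝ) + 1) * (‖Glm‖ + 1)), by positivity, ?_⟩
      rw [show 2 * (K : ℝ) * ‖Glm‖ * (ε / (4 * ((K : ℝ) + 1) * (‖Glm‖ + 1))) =
        (2 * (K : ℝ) * ‖Glm‖ * ε) / (4 * ((K : ℝ) + 1) * (‖Glm‖ + 1)) from by ring,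
        div_le_div_iff₀ hD (by norm_num : (0:ℝ) < 2)]
      nlinarith [mul_nonneg (mul_nonneg h1 h2) hε.le, mul_nonneg h1 hε.le,
        mul_nonneg h2 hε.le]
    set S : ℝ := ∑ i, |d i| with hS
    have hS0 : 0 ≤ S := Finset.sum_nonneg fun i _ => abs_nonneg _
    clear_value S
    obtain ⟨T, hT0, hTb⟩ : ∃ T : ℝ, 0 < T ∧ ∀ j, 2 * r j * S / T ≤ δ := by
      have hRs0 : 0 ≤ ∑ k, r k := Finset.sum_nonneg fun k _ => (hrpos k).le
      have hT0' : (0:ℝ) < 1 + 2 * (∑ k, r k) * S / δ := by positivity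
      refine ⟨1 + 2 * (∑ k, r k) * S / δ, hT0', ?_⟩
      intro j
      rw [div_le_iff₀ hT0']
      have h1 : r j ≤ ∑ k, r k := Finset.single_le_sum (f := fun k => r k)
        (fun k _ => (hrpos k).le) (Finset.mem_univ j)
      have h2 : δ * (1 + 2 * (∑ k, r k) * S / δ) = δ + 2 * (∑ k, r k) * S := by
        field_simp
      rw [h2]
      have h3 : r j * S ≤ (∑ k, r k) * S := mul_le_mul_of_nonneg_right h1 hS0
      linarith
    set z : Fin n → ℝ := fun _ => T with hzdef
    have hz0 : ∀ i, 0 ≤ z i := fun i => hT0.le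
    set c : Fin n → Fin ν → ℕ :=
      fun i j => if A i j = 0 then 0 else ⌈T * m j i / r j⌉₊ + 1 with hcdef
    have hc0 : ∀ i j, A i j = 0 → c i j = 0 := by intro i j h; simp [hcdef, h]
    have hc1 : ∀ i j, 0 < A i j → 0 < c i j := by
      intro i j h
      have : ¬ A i j = 0 := by omega
      simp [hcdef, this]
    set κ : Fin ν → ℝ := fun j => r j / ∏ i, T ^ c i j with hκdef
    have hProd : ∀ j, (0:ℝ) < ∏ i, T ^ c i j :=
      fun j => Finset.prod_pos fun i _ => pow_pos hT0 _
    have hκ0 : ∀ j, 0 < κ j := fun j => div_pos (hrpos j) (hProd j)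
    set Q : (Fin n → ℝ) → Fin ν → ℝ := fun y j => κ j * ∏ i, y i ^ c i j with hQdef
    have hQadm : IsAdmissible A Q := monomial_admissible A κ c hκ0 hc0 hc1
    have hQz : Q z = r := by
      funext j
      show κ j * ∏ i, z i ^ c i j = r j
      have h1 : (∏ i, z i ^ c i j) = ∏ i, T ^ c i j := rfl
      rw [h1, hκdef]
      field_simp
    set coeff : Fin ν → Fin n → ℝ := fun j i =>
      κ j * (c i j : ℝ) * z i ^ (c i j - 1) *
        ∏ i' ∈ Finset.univ.erase i, z i' ^ c i' j with hcoefd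
    set u : Fin ν → ℝ := fun j => ∑ i, coeff j i * d i with hu
    have hray : ∀ j, HasDerivAt (fun h : ℝ => Q (z + h • d) j) (u j) 0 := by
      intro j
      have h1 := monomial_ray (κ j) (fun i => c i j) z d
      exact h1
    have hcoeff : ∀ j i, coeff j i = (c i j : ℝ) * r j / T := by
      intro j i
      have hzi : ∀ i', z i' = T := fun _ => rfl
      rcases Nat.eq_zero_or_pos (c i j) with h0 | hpos
      · simp [hcoefd, h0]
      · obtain ⟨k, hk⟩ : ∃ k, c i j = k + 1 := ⟨c i j - 1, by omega⟩
        have hPe : (0:ℝ) < ∏ i' ∈ Finset.univ.erase i, T ^ c i' j :=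
          Finset.prod_pos fun _ _ => pow_pos hT0 _
        have hP : (∏ i', T ^ c i' j) =
            T ^ c i j * ∏ i' ∈ Finset.univ.erase i, T ^ c i' j :=
          (Finset.mul_prod_erase _ _ (Finset.mem_univ i)).symm
        simp only [hcoefd, hκdef, hzi]
        rw [hP, hk]
        simp only [Nat.add_sub_cancel]
        have hT0' : T ≠ 0 := hT0.ne'
        field_simp
        ring
    have huw : ∀ j, |u j - w j| ≤ δ := by
      intro j
      have hwj : w j = ∑ i, m j i * d i := by
        have : w j = R x j - R xe j := rfl
        rw [this, ← hmsum j]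
        apply Finset.sum_congr rfl
        intro i _
        rfl
      have huj : u j = ∑ i, coeff j i * d i := rfl
      rw [huj, hwj, ← Finset.sum_sub_distrib]
      refine (Finset.abs_sum_le_sum_abs _ _).trans ?_
      have hone : ∀ i, |coeff j i * d i - m j i * d i| ≤ (2 * r j / T) * |d i| := by
        intro i
        rw [← sub_mul, abs_mul]
        apply mul_le_mul_of_nonneg_right _ (abs_nonneg (d i))
        rw [hcoeff j i]
        by_cases hA : A i j = 0
        · have h1 : c i j = 0 := hc0 i j hA
          have h2 : m j i = 0 := hmz j i hA
          rw [h1, h2]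
          simp only [Nat.cast_zero, zero_mul, zero_div, zero_sub, abs_neg, abs_zero, sub_zero]
          have h3 : (0:ℝ) ≤ 2 * r j := by linarith [hrpos j]
          exact div_nonneg h3 hT0.le
        · have hcij : c i j = ⌈T * m j i / r j⌉₊ + 1 := by simp [hcdef, hA]
          rw [hcij]
          exact ceil_coeff_close (m j i) (r j) T (hm0 j i) (hrpos j) hT0
      calc ∑ i, |coeff j i * d i - m j i * d i|
          ≤ ∑ i, (2 * r j / T) * |d i| := Finset.sum_le_sum fun i _ => hone i
        _ = (2 * r j / T) * S := by rw [hS, ← Finset.mul_sum]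
        _ = 2 * r j * S / T := by ring
        _ ≤ δ := hTb j
    have huwn : ‖u - w‖ ≤ δ := by
      rw [pi_norm_le_iff_of_nonneg hδ.le]
      intro j
      rw [Pi.sub_apply, Real.norm_eq_abs]
      exact huw j
    -- tendsto facts
    have hψt : Tendsto (fun h : ℝ => Q (z + h • d)) (nhdsWithin 0 (Set.Ioi 0)) (nhds r) := by
      have h1 : ∀ j, Tendsto (fun h : ℝ => Q (z + h • d) j) (nhds (0:ℝ)) (nhds (r j)) := by
        intro j
        have h2 := (hray j).continuousAt
        have h4 : Tendsto (fun h : ℝ => Q (z + h • d) j) (nhds 0)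
            (nhds ((fun h : ℝ => Q (z + h • d) j) 0)) := h2.tendsto
        simpa [hQz] using h4
      exact (tendsto_pi_nhds.2 h1).mono_left nhdsWithin_le_nhds
    have hsl : Tendsto (fun h : ℝ => fun j => (Q (z + h • d) j - r j) / h)
        (nhdsWithin 0 (Set.Ioi 0)) (nhds u) := by
      apply tendsto_pi_nhds.2
      intro j
      have h1 := hasDerivAt_iff_tendsto_slope.mp (hray j)
      have h2 : Tendsto (slope (fun h : ℝ => Q (z + h • d) j) 0)
          (nhdsWithin 0 (Set.Ioi 0)) (nhds (u j)) :=
        h1.mono_left (nhdsWithin_mono 0 (fun y hy => ne_of_gt hy))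
      apply h2.congr
      intro h
      rw [slope_def_field]
      rw [show z + (0:ℝ) • d = z by simp]
      rw [show Q z j = r j from congrFun hQz j, sub_zero]
    have E1 : ∀ᶠ h : ℝ in nhdsWithin 0 (Set.Ioi 0), 0 < h := by
      filter_upwards [eventually_mem_nhdsWithin] with h hh
      exact hh
    have E2 : ∀ᶠ h : ℝ in nhdsWithin 0 (Set.Ioi 0),
        dist (fun j => (Q (z + h • d) j - r j) / h) u < δ :=
      (Metric.tendsto_nhds.mp hsl) δ hδ
    have E3 : ∀ᶠ h : ℝ in nhdsWithin 0 (Set.Ioi 0), ∀ j, 0 < Q (z + h • d) j := by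
      rw [eventually_all]
      intro j
      have h1 : Tendsto (fun h : ℝ => Q (z + h • d) j) (nhdsWithin 0 (Set.Ioi 0))
          (nhds (r j)) := tendsto_pi_nhds.mp hψt j
      exact h1.eventually (eventually_gt_nhds (hrpos j))
    have E4 : ∀ᶠ h : ℝ in nhdsWithin 0 (Set.Ioi 0),
        Γ.mulVec (Q (z + h • d)) ∈ Metric.ball d ρ := by
      have h1 : Tendsto (fun h : ℝ => Glm (Q (z + h • d)))
          (nhdsWithin 0 (Set.Ioi 0)) (nhds (Glm r)) := (Glm.continuous.tendsto r).comp hψt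
      rw [hGLa r, hΓr] at h1
      have h2 := h1.eventually (Metric.ball_mem_nhds (α := Fin n → ℝ) d hρ)
      exact h2.mono fun h hh => by rwa [hGLa] at hh
    have E5 : ∀ᶠ h : ℝ in nhdsWithin 0 (Set.Ioi 0), d + h • g ∈ Metric.ball d ρ := by
      have h1 : Tendsto (fun h : ℝ => d + h • g) (nhds (0:ℝ)) (nhds (d + (0:ℝ) • g)) :=
        (continuous_const.add (continuous_id.smul continuous_const)).tendsto 0
      rw [show d + (0:ℝ) • g = d by simp] at h1
      exact (h1.mono_left nhdsWithin_le_nhds).eventually (Metric.ball_mem_nhds d hρ)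
    have E6 : ∀ᶠ h : ℝ in nhdsWithin 0 (Set.Ioi 0),
        Q (z + h • d) ∈ Metric.ball r ρ' :=
      hψt.eventually (Metric.ball_mem_nhds r hρ')
    -- hdec applied to Q
    have hdini := hdec Q hQadm z hz0
    have hlimG : Filter.limsup (fun h : ℝ => (Vt (Q (z + h • d)) - Vt r) / h)
        (nhdsWithin 0 (Set.Ioi 0)) ≤ 0 := by
      have e1 : dini (fun y => Vt (Q y)) (fun y => Γ.mulVec (Q y)) z =
          Filter.limsup (fun h : ℝ => (Vt (Q (z + h • d)) - Vt r) / h)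
            (nhdsWithin 0 (Set.Ioi 0)) := by
        unfold dini
        congr 1
        funext h
        simp only [hQz, hΓr]
      rw [e1] at hdini
      exact hdini
    have hGub : ∀ᶠ h : ℝ in nhdsWithin 0 (Set.Ioi 0),
        (Vt (Q (z + h • d)) - Vt r) / h ≤ (K' : ℝ) * (‖u‖ + δ) := by
      filter_upwards [E1, E2, E6] with h hp hdist hb
      have hrmem : r ∈ Metric.ball r ρ' := Metric.mem_ball_self hρ'
      have hl := hKl'.dist_le_mul _ hb _ hrmem
      have hfe : Q (z + h • d) - r = h • (fun j => (Q (z + h • d) j - r j) / h) := by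
        funext j
        simp only [Pi.sub_apply, Pi.smul_apply, smul_eq_mul]
        field_simp
      have hnorm : dist (Q (z + h • d)) r ≤ h * (‖u‖ + δ) := by
        rw [dist_eq_norm, hfe, norm_smul, Real.norm_eq_abs, abs_of_pos hp]
        apply mul_le_mul_of_nonneg_left _ hp.le
        calc ‖fun j => (Q (z + h • d) j - r j) / h‖
            = ‖u + ((fun j => (Q (z + h • d) j - r j) / h) - u)‖ := by
              rw [add_sub_cancel]
          _ ≤ ‖u‖ + ‖(fun j => (Q (z + h • d) j - r j) / h) - u‖ := norm_add_le _ _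
          _ ≤ ‖u‖ + δ := by
              rw [← dist_eq_norm] at *
              linarith [hdist.le]
      rw [div_le_iff₀ hp]
      calc Vt (Q (z + h • d)) - Vt r ≤ |Vt (Q (z + h • d)) - Vt r| := le_abs_self _
        _ = dist (Vt (Q (z + h • d))) (Vt r) := (Real.dist_eq _ _).symm
        _ ≤ (K' : ℝ) * dist (Q (z + h • d)) r := hl
        _ ≤ (K' : ℝ) * (h * (‖u‖ + δ)) := by
            apply mul_le_mul_of_nonneg_left hnorm K'.coe_nonneg
        _ = (K' : ℝ) * (‖u‖ + δ) * h := by ring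
    have hGbdd : IsBoundedUnder (· ≤ ·) (nhdsWithin (0:ℝ) (Set.Ioi 0))
        (fun h : ℝ => (Vt (Q (z + h • d)) - Vt r) / h) :=
      ⟨(K' : ℝ) * (‖u‖ + δ), eventually_map.mpr hGub⟩
    have hGev : ∀ᶠ h : ℝ in nhdsWithin 0 (Set.Ioi 0),
        (Vt (Q (z + h • d)) - Vt r) / h < ε / 2 :=
      eventually_lt_of_limsup_lt (lt_of_le_of_lt hlimG (by positivity)) hGbdd
    -- eventual upper bound on the target difference quotient
    have hKey : ∀ᶠ h : ℝ in nhdsWithin 0 (Set.Ioi 0),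
        (Vh (x + h • g - xe) - Vh d) / h ≤ ε := by
      filter_upwards [E1, E2, E3, E4, E5, hGev] with h hp hdist hψpos hb4 hb5 hG
      have hptx : x + h • g - xe = d + h • g := by rw [hd]; abel
      rw [hptx]
      have hψs : ∀ j, (0:ℝ) ≤ Q (z + h • d) j := fun j => (hψpos j).le
      have h2 : Vh (Γ.mulVec (Q (z + h • d))) = Vt (Q (z + h • d)) :=
        (hcomp _ hψs).symm
      have h3 : Vh d = Vt r := by
        rw [hcomp r (fun j => (hrpos j).le), hΓr]
      -- distance bound
      have hdd : dist (d + h • g) (Γ.mulVec (Q (z + h • d))) ≤ ‖Glm‖ * (2 * δ * h) := by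
        have heq1 : d + h • g = Γ.mulVec (r + h • w) := by
          rw [Matrix.mulVec_add, Matrix.mulVec_smul, hΓr, hΓw]
        rw [dist_eq_norm, heq1, ← hGLa, ← hGLa, ← map_sub]
        calc ‖Glm (r + h • w - Q (z + h • d))‖
            ≤ ‖Glm‖ * ‖r + h • w - Q (z + h • d)‖ := Glm.le_opNorm _
          _ ≤ ‖Glm‖ * (2 * δ * h) := by
              apply mul_le_mul_of_nonneg_left _ (norm_nonneg Glm)
              have hfe : r + h • w - Q (z + h • d) =
                  h • (w - fun j => (Q (z + h • d) j - r j) / h) := by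
                funext j
                simp only [Pi.add_apply, Pi.sub_apply, Pi.smul_apply, smul_eq_mul]
                field_simp
                ring
              rw [hfe, norm_smul, Real.norm_eq_abs, abs_of_pos hp]
              have hsplit : ‖w - fun j => (Q (z + h • d) j - r j) / h‖ ≤ 2 * δ := by
                calc ‖w - fun j => (Q (z + h • d) j - r j) / h‖
                    = ‖(w - u) + (u - fun j => (Q (z + h • d) j - r j) / h)‖ := by
                      congr 1; abel
                  _ ≤ ‖w - u‖ + ‖u - fun j => (Q (z + h • d) j - r j) / h‖ :=
                      norm_add_le _ _
                  _ ≤ δ + δ := by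
                      apply add_le_add
                      · rw [norm_sub_rev]; exact huwn
                      · rw [norm_sub_rev, ← dist_eq_norm]; exact hdist.le
                  _ = 2 * δ := by ring
              calc h * ‖w - fun j => (Q (z + h • d) j - r j) / h‖
                  ≤ h * (2 * δ) := mul_le_mul_of_nonneg_left hsplit hp.le
                _ = 2 * δ * h := by ring
      have h1 : Vh (d + h • g) - Vh (Γ.mulVec (Q (z + h • d))) ≤
          (K : ℝ) * (‖Glm‖ * (2 * δ * h)) := by
        have hlip := hKl.dist_le_mul _ hb5 _ hb4
        calc Vh (d + h • g) - Vh (Γ.mulVec (Q (z + h • d)))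
            ≤ |Vh (d + h • g) - Vh (Γ.mulVec (Q (z + h • d)))| := le_abs_self _
          _ = dist (Vh (d + h • g)) (Vh (Γ.mulVec (Q (z + h • d)))) :=
              (Real.dist_eq _ _).symm
          _ ≤ (K : ℝ) * dist (d + h • g) (Γ.mulVec (Q (z + h • d))) := hlip
          _ ≤ (K : ℝ) * (‖Glm‖ * (2 * δ * h)) :=
              mul_le_mul_of_nonneg_left hdd K.coe_nonneg
      have hfin : Vh (d + h • g) - Vh d ≤
          (Vt (Q (z + h • d)) - Vt r) + (2 * (K : ℝ) * ‖Glm‖ * δ) * h := by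
        rw [← h2, ← h3]
        nlinarith [h1]
      calc (Vh (d + h • g) - Vh d) / h
          ≤ ((Vt (Q (z + h • d)) - Vt r) + (2 * (K : ℝ) * ‖Glm‖ * δ) * h) / h := by
            gcongr
          _ = (Vt (Q (z + h • d)) - Vt r) / h + 2 * (K : ℝ) * ‖Glm‖ * δ := by
            rw [add_div, mul_div_cancel_right₀ _ hp.ne']
          _ ≤ ε / 2 + ε / 2 := by
            apply add_le_add hG.le hδbound
          _ = ε := by ring
    -- lower bound for coboundedness
    have hFlb : ∀ᶠ h : ℝ in nhdsWithin 0 (Set.Ioi 0),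
        -((K : ℝ) * ‖g‖) ≤ (Vh (x + h • g - xe) - Vh d) / h := by
      filter_upwards [E1, E5] with h hp hb5
      have hptx : x + h • g - xe = d + h • g := by rw [hd]; abel
      rw [hptx]
      have hdmem : d ∈ Metric.ball d ρ := Metric.mem_ball_self hρ
      have hlip := hKl.dist_le_mul _ hb5 _ hdmem
      have hdd : dist (d + h • g) d ≤ h * ‖g‖ := by
        rw [dist_eq_norm, add_sub_cancel_left, norm_smul, Real.norm_eq_abs,
          abs_of_pos hp]
      rw [le_div_iff₀ hp]
      have : |Vh (d + h • g) - Vh d| ≤ (K : ℝ) * (h * ‖g‖) := by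
        calc |Vh (d + h • g) - Vh d| = dist (Vh (d + h • g)) (Vh d) :=
            (Real.dist_eq _ _).symm
          _ ≤ (K : ℝ) * dist (d + h • g) d := hlip
          _ ≤ (K : ℝ) * (h * ‖g‖) := mul_le_mul_of_nonneg_left hdd K.coe_nonneg
      have h9 := neg_abs_le (Vh (d + h • g) - Vh d)
      nlinarith [norm_nonneg g, K.coe_nonneg]
    apply limsup_le_of_le
    · exact isCoboundedUnder_le_of_eventually_le _ hFlb
    · exact hKey
  by_contra hcon
  push_neg at hcon
  have h1 := key (dini (fun y => Vh (y - xe)) (fun y => Γ.mulVec (R y)) x / 2)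
    (by linarith)
  linarith
end

section
/- Let V̂ : ℝⁿ → ℝ≥0 be locally Lipschitz and define W : ℝ^ν → ℝ≥0 by W(ξ) = V̂(Γξ). Suppose that at every ξ ∈ ℝ^ν at which W is differentiable one has ∇W(ξ)ᵀ(Γ^ℓ ξ) ≤ 0 for every ℓ = 1,…,s. Then for every admissible kinetics R ∈ K_A and every equilibrium x_e of R (ΓR(x_e) = 0), the function W is nonnegative and has nonpositive upper Dini derivative along the extent-of-reaction vector field ξ ↦ R(x_e + Γξ) at every ξ ∈ ℝ^ν with x_e + Γξ ∈ ℝ≥0ⁿ, i.e. limsup_{h→0⁺} (W(ξ + h R(x_e + Γξ)) − W(ξ))/h ≤ 0. -/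
set_option maxHeartbeats 1000000


open Filter Set Topology
open MeasureTheory Function NNReal

lemma mono_ftc {φ : ℝ → ℝ} (hφ : Monotone φ) (hc : Continuous φ) {c h : ℝ}
    (hc0 : 0 ≤ c) (hh : 0 ≤ h)
    (hd : ∀ᵐ t : ℝ, t ∈ Set.Ioo 0 h → DifferentiableAt ℝ φ t → c ≤ deriv φ t) :
    c * h ≤ φ h - φ 0 := by
  set μ := hφ.stieltjesFunction.measure with hμ
  have hst : ⇑hφ.stieltjesFunction = φ := by
    funext x
    exact (hφ.stieltjesFunction_eq x).trans
      (rightLim_eq_of_tendsto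
        ((hc.tendsto x).mono_left nhdsWithin_le_nhds))
  have key : ∀ᵐ t : ℝ, t ∈ Set.Ioo 0 h → ENNReal.ofReal c ≤ μ.rnDeriv volume t := by
    filter_upwards [hφ.ae_hasDerivAt, hd] with t ht hdt htI
    have h1 : deriv φ t = (μ.rnDeriv volume t).toReal := ht.deriv
    exact ENNReal.ofReal_le_of_le_toReal (h1 ▸ hdt htI ht.differentiableAt)
  have h1 : ENNReal.ofReal c * ENNReal.ofReal h ≤ μ (Set.Icc 0 h) := by
    calc ENNReal.ofReal c * ENNReal.ofReal h
        = ∫⁻ _ in Set.Ioo 0 h, ENNReal.ofReal c := by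
          rw [setLIntegral_const, Real.volume_Ioo, sub_zero]
      _ ≤ ∫⁻ t in Set.Ioo 0 h, μ.rnDeriv volume t := by
          refine lintegral_mono_ae ?_
          filter_upwards [ae_restrict_mem measurableSet_Ioo, ae_restrict_of_ae key]
            with t ht hkey
          exact hkey ht
      _ ≤ ∫⁻ t in Set.Icc 0 h, μ.rnDeriv volume t :=
          lintegral_mono_set Set.Ioo_subset_Icc_self
      _ ≤ μ (Set.Icc 0 h) := Measure.setLIntegral_rnDeriv_le _
  have h2 : μ (Set.Icc 0 h) = ENNReal.ofReal (φ h - φ 0) := by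
    rw [hμ, StieltjesFunction.measure_Icc, hst]
    congr 1
    rw [leftLim_eq_of_tendsto
      ((hc.tendsto 0).mono_left nhdsWithin_le_nhds)]
  rw [h2, ← ENNReal.ofReal_mul hc0] at h1
  exact (ENNReal.ofReal_le_ofReal_iff (sub_nonneg.2 (hφ hh))).1 h1

lemma lip_incr {K : ℝ≥0} {g : ℝ → ℝ} (hg : LipschitzWith K g) {b h : ℝ}
    (hb : 0 ≤ b) (hh : 0 ≤ h)
    (hd : ∀ᵐ t : ℝ, t ∈ Set.Ioo 0 h → DifferentiableAt ℝ g t → deriv g t ≤ b) :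
    g h - g 0 ≤ b * h := by
  set M : ℝ := (K : ℝ) + b with hM
  have hφm : Monotone (fun t => M * t - g t) := by
    intro s t hst
    have h1 := hg.dist_le_mul s t
    rw [Real.dist_eq, Real.dist_eq] at h1
    have h2 := (abs_le.1 h1).1
    have h3 : |s - t| = t - s := by rw [abs_sub_comm, abs_of_nonneg (by linarith)]
    rw [h3] at h1
    have h4 := (abs_le.1 h1).2
    simp only []
    nlinarith [K.coe_nonneg]
  have hφc : Continuous (fun t => M * t - g t) :=
    (continuous_const.mul continuous_id).sub hg.continuous
  have hkey := mono_ftc (c := (K : ℝ)) hφm hφc K.coe_nonneg hh ?_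
  · have : (K : ℝ) * h ≤ (M * h - g h) - (M * 0 - g 0) := hkey
    nlinarith []
  · filter_upwards [hd] with t ht htI hdφ
    have hgd : DifferentiableAt ℝ g t := by
      have hgeq : g = fun t => M * t - (M * t - g t) := by funext t; ring
      rw [hgeq]
      exact (differentiableAt_id.const_mul M).sub hdφ
    have h5 : HasDerivAt (fun t => M * t - g t) (M * 1 - deriv g t) t :=
      ((hasDerivAt_id t).const_mul M).sub hgd.hasDerivAt
    rw [h5.deriv]
    have := ht htI hgd
    linarith

lemma ae_ae_line {m : ℕ} {W : (Fin m → ℝ) → ℝ} {K : ℝ≥0} (hW : LipschitzWith K W)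
    (v : Fin m → ℝ) :
    ∀ᵐ y : Fin m → ℝ, ∀ᵐ t : ℝ, DifferentiableAt ℝ W (y + t • v) := by
  set N : Set (Fin m → ℝ) := {z | ¬ DifferentiableAt ℝ W z} with hN
  have hNm : MeasurableSet N := (measurableSet_of_differentiableAt ℝ W).compl
  have hN0 : volume N = 0 := by
    rw [← ae_iff]; exact hW.ae_differentiableAt
  set s' : Set (ℝ × (Fin m → ℝ)) := {p | p.2 + p.1 • v ∈ N} with hs'def
  have hmap : Measurable fun p : ℝ × (Fin m → ℝ) => p.2 + p.1 • v :=
    (measurable_snd.add (measurable_fst.smul measurable_const))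
  have hs' : MeasurableSet s' := hmap hNm
  have h1 : (volume.prod volume) s' = 0 := by
    rw [Measure.measure_prod_null hs']
    refine ae_of_all _ fun t => ?_
    simp only [Pi.zero_apply]
    show volume (Prod.mk t ⁻¹' s') = 0
    have h : (Prod.mk t ⁻¹' s') = (fun y : Fin m → ℝ => y + t • v) ⁻¹' N := rfl
    rw [h, measure_preimage_add_right]
    exact hN0
  set s : Set ((Fin m → ℝ) × ℝ) := {p | p.1 + p.2 • v ∈ N} with hsdef
  have hs : MeasurableSet s :=
    ((measurable_fst.add (measurable_snd.smul measurable_const))) hNm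
  have h2 : (volume.prod volume) s = 0 := by
    have hswap : s = Prod.swap ⁻¹' s' := rfl
    rw [hswap]
    rw [Measure.measurePreserving_swap.measure_preimage hs'.nullMeasurableSet]
    exact h1
  have h3 := (Measure.measure_prod_null hs).1 h2
  filter_upwards [h3] with y hy
  have : (Prod.mk y ⁻¹' s) = {t : ℝ | y + t • v ∈ N} := rfl
  rw [this] at hy
  rw [ae_iff]
  exact hy

lemma main_limsup {m : ℕ} (W : (Fin m → ℝ) → ℝ) (K : ℝ≥0) (hW : LipschitzWith K W)
    (ξ v : Fin m → ℝ) {r C : ℝ} (hr : 0 < r) (hC : 0 ≤ C)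
    (hP : ∀ z, dist z ξ < r → DifferentiableAt ℝ W z → fderiv ℝ W z v ≤ C * dist z ξ) :
    Filter.limsup (fun h : ℝ => (W (ξ + h • v) - W ξ) / h) (nhdsWithin 0 (Set.Ioi 0)) ≤ 0 := by
  set q : ℝ → ℝ := fun h => (W (ξ + h • v) - W ξ) / h with hq
  have hcurve : ∀ y : Fin m → ℝ, LipschitzWith ‖v‖₊ (fun t : ℝ => y + t • v) := by
    intro y
    apply LipschitzWith.of_dist_le_mul
    intro s t
    have h1 : (y + s • v) - (y + t • v) = (s - t) • v := by
      rw [sub_smul]; abel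
    rw [dist_eq_norm, h1, norm_smul, Real.dist_eq]
    simp [Real.norm_eq_abs, mul_comm]
  have hlb : ∀ᶠ h in 𝓝[>] (0:ℝ), -((K:ℝ) * ‖v‖) ≤ q h := by
    filter_upwards [self_mem_nhdsWithin] with h (hh : 0 < h)
    rw [hq]
    rw [le_div_iff₀ hh]
    have h2 := hW.dist_le_mul (ξ + h • v) ξ
    have h3 : dist (ξ + h • v) ξ = h * ‖v‖ := by
      rw [dist_eq_norm, add_sub_cancel_left, norm_smul, Real.norm_eq_abs, abs_of_pos hh]
    rw [h3, Real.dist_eq] at h2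
    have h4 := (abs_le.1 h2).1
    nlinarith [K.coe_nonneg, norm_nonneg v]
  set D : ℝ := C * (1 + ‖v‖) + 2 * (K:ℝ) + 1 with hD
  have hD1 : 0 < D := by
    have h1 : 0 ≤ C * (1 + ‖v‖) := mul_nonneg hC (by positivity)
    have h2 := K.coe_nonneg
    rw [hD]; linarith
  have claim : ∀ ε : ℝ, 0 < ε → ε ≤ 1 → ∀ᶠ h in 𝓝[>] (0:ℝ), q h ≤ D * ε := by
    intro ε hε hε1
    have hδpos : 0 < min ε (r / (ε + ‖v‖ + 1)) := by
      refine lt_min hε (div_pos hr ?_)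
      nlinarith [norm_nonneg v]
    filter_upwards [Ioo_mem_nhdsGT hδpos] with h hh
    obtain ⟨hh0, hhδ⟩ := hh
    have hhε : h ≤ ε := le_trans hhδ.le (min_le_left _ _)
    have hhr : (ε + ‖v‖) * h < r := by
      have h2 : h < r / (ε + ‖v‖ + 1) := lt_of_lt_of_le hhδ (min_le_right _ _)
      have h3 : (0:ℝ) < ε + ‖v‖ + 1 := by nlinarith [norm_nonneg v]
      rw [lt_div_iff₀ h3] at h2
      nlinarith [norm_nonneg v]
    have hball : 0 < volume (Metric.closedBall ξ (ε * h)) :=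
      Metric.measure_closedBall_pos _ _ (by positivity)
    obtain ⟨y, hymem, hy⟩ : ∃ y ∈ Metric.closedBall ξ (ε * h),
        ∀ᵐ t : ℝ, DifferentiableAt ℝ W (y + t • v) := by
      by_contra hcon
      push_neg at hcon
      have hnull : volume {y : Fin m → ℝ |
          ¬ ∀ᵐ t : ℝ, DifferentiableAt ℝ W (y + t • v)} = 0 := by
        rw [← ae_iff]; exact ae_ae_line hW v
      exact absurd (measure_mono_null (fun y hy => show ¬ ∀ᵐ t : ℝ, DifferentiableAt ℝ W (y + t • v) from
        Filter.not_eventually.mpr (hcon y hy)) hnull) (ne_of_gt hball)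
    have hydist : dist y ξ ≤ ε * h := Metric.mem_closedBall.1 hymem
    set g : ℝ → ℝ := fun t => W (y + t • v) with hg
    have hgl : LipschitzWith (K * ‖v‖₊) g := hW.comp (hcurve y)
    set b : ℝ := C * ((ε + ‖v‖) * h) with hb
    have hb0 : 0 ≤ b := by
      refine mul_nonneg hC (mul_nonneg ?_ hh0.le)
      nlinarith [norm_nonneg v]
    have hgincr : g h - g 0 ≤ b * h := by
      apply lip_incr hgl hb0 hh0.le
      filter_upwards [hy] with t ht htI _
      have hdz : dist (y + t • v) ξ ≤ (ε + ‖v‖) * h := by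
        have e1 : dist (y + t • v) y = |t| * ‖v‖ := by
          rw [dist_eq_norm, add_sub_cancel_left, norm_smul, Real.norm_eq_abs]
        have e2 : |t| ≤ h := by
          rw [abs_of_pos htI.1]; exact htI.2.le
        calc dist (y + t • v) ξ ≤ dist (y + t • v) y + dist y ξ := dist_triangle _ _ _
          _ ≤ |t| * ‖v‖ + ε * h := by rw [e1]; gcongr
          _ ≤ h * ‖v‖ + ε * h := by gcongr
          _ = (ε + ‖v‖) * h := by ring
      have hdzr : dist (y + t • v) ξ < r := lt_of_le_of_lt hdz hhr
      have hder : HasDerivAt g (fderiv ℝ W (y + t • v) v) t := by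
        have hc : HasDerivAt (fun s : ℝ => y + s • v) v t := by
          have h5 := (hasDerivAt_id t).smul_const v
          simpa using h5.const_add y
        exact ht.hasFDerivAt.comp_hasDerivAt t hc
      rw [hder.deriv]
      calc fderiv ℝ W (y + t • v) v ≤ C * dist (y + t • v) ξ := hP _ hdzr ht
        _ ≤ C * ((ε + ‖v‖) * h) := by gcongr
    have hW1 : W (ξ + h • v) - W (y + h • v) ≤ (K:ℝ) * (ε * h) := by
      have h2 := hW.dist_le_mul (ξ + h • v) (y + h • v)
      have h3 : dist (ξ + h • v) (y + h • v) = dist ξ y := by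
        have he : (ξ + h • v) - (y + h • v) = ξ - y := by abel
        rw [dist_eq_norm, he, ← dist_eq_norm]
      rw [h3, Real.dist_eq] at h2
      have h4 := (abs_le.1 h2).2
      have h5 : dist ξ y ≤ ε * h := by rw [dist_comm]; exact hydist
      nlinarith [K.coe_nonneg, dist_nonneg (x := ξ) (y := y)]
    have hW2 : W y - W ξ ≤ (K:ℝ) * (ε * h) := by
      have h2 := hW.dist_le_mul y ξ
      rw [Real.dist_eq] at h2
      have h4 := (abs_le.1 h2).2
      nlinarith [K.coe_nonneg]
    show (W (ξ + h • v) - W ξ) / h ≤ D * ε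
    rw [div_le_iff₀ hh0]
    have hgh : g h = W (y + h • v) := rfl
    have hg0 : g 0 = W y := by simp [hg]
    have hvnn := norm_nonneg v
    have hh1 : h ≤ 1 := hhε.trans hε1
    have e1 : (ε + ‖v‖) * h ≤ (1 + ‖v‖) * ε := by nlinarith
    have e2 : b * h ≤ C * ((1 + ‖v‖) * ε) * h := by
      rw [hb]
      have := mul_le_mul_of_nonneg_left e1 hC
      nlinarith
    have e3 : W (ξ + h • v) - W ξ ≤ b * h + 2 * (K:ℝ) * (ε * h) := by
      have h6 := hgincr; rw [hgh, hg0] at h6; linarith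
    have e4 : 0 ≤ ε * h := by positivity
    have e5 : C * ((1 + ‖v‖) * ε) * h + 2 * (K:ℝ) * (ε * h) ≤ D * ε * h := by
      rw [hD]; nlinarith [e4]
    linarith [e2, e3, e5]
  have hcb : IsCoboundedUnder (· ≤ ·) (𝓝[>] (0:ℝ)) q :=
    isCoboundedUnder_le_of_eventually_le _ hlb
  have hls : ∀ ε : ℝ, 0 < ε → ε ≤ 1 → limsup q (𝓝[>] (0:ℝ)) ≤ D * ε :=
    fun ε h1 h2 => limsup_le_of_le hcb (claim ε h1 h2)
  refine le_of_forall_pos_le_add fun δ hδ => ?_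
  have hε : 0 < min 1 (δ / D) := lt_min one_pos (div_pos hδ hD1)
  calc limsup q (𝓝[>] (0:ℝ)) ≤ D * min 1 (δ / D) := hls _ hε (min_le_left _ _)
    _ ≤ D * (δ / D) := by gcongr; exact min_le_right _ _
    _ = δ := by field_simp
    _ ≤ 0 + δ := by linarith

/-- Corollary 3.4: if `W(ξ) = V̂(Γξ)` is a common Lyapunov function for the systems
`ξ̇ = Γ^ℓ ξ`, then `W` is nonnegative and nonincreasing along the extent-of-reaction
dynamics `ξ̇ = R(x_e + Γξ)`. -/
theorem stmt5 {n ν : ℕ} (A B : Matrix (Fin n) (Fin ν) ℕ)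
    (Γ : Matrix (Fin n) (Fin ν) ℝ)
    (hΓ : ∀ i j, Γ i j = (B i j : ℝ) - (A i j : ℝ))
    (Vh : (Fin n → ℝ) → ℝ) (hLip : LocallyLipschitz Vh)
    (hVnn : ∀ z : Fin n → ℝ, 0 ≤ Vh z)
    (hdec : ∀ ξ : Fin ν → ℝ, DifferentiableAt ℝ (fun ζ => Vh (Γ.mulVec ζ)) ξ →
      ∀ i j, 0 < A i j →
        fderiv ℝ (fun ζ => Vh (Γ.mulVec ζ)) ξ ((GammaEll Γ i j).mulVec ξ) ≤ 0) :
    ∀ R, IsAdmissible A R →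
      ∀ xe : Fin n → ℝ, (∀ i, 0 ≤ xe i) → Γ.mulVec (R xe) = 0 →
        ∀ ξ : Fin ν → ℝ, (∀ i, 0 ≤ (xe + Γ.mulVec ξ) i) →
          0 ≤ Vh (Γ.mulVec ξ) ∧
          dini (fun ζ => Vh (Γ.mulVec ζ)) (fun ζ => R (xe + Γ.mulVec ζ)) ξ ≤ 0 := by
  intro R hR xe hxe hEq ξ hx
  classical
  set W : (Fin ν → ℝ) → ℝ := fun ζ => Vh (Γ.mulVec ζ) with hWdef
  refine ⟨hVnn _, ?_⟩
  set u : Fin n → ℝ := Γ.mulVec ξ with hu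
  set x : Fin n → ℝ := xe + u with hxdef
  -- nonnegativity along the segment from xe to x
  have hpath : ∀ t ∈ Icc (0:ℝ) 1, ∀ i, 0 ≤ (xe + t • u) i := by
    intro t ht i
    have h1 := hxe i
    have h2 : 0 ≤ xe i + u i := hx i
    simp only [Pi.add_apply, Pi.smul_apply, smul_eq_mul]
    nlinarith [ht.1, ht.2]
  -- component smoothness
  have hRj : ∀ j, ContDiff ℝ 1 (fun y => R y j) := fun j => (contDiff_pi.1 hR.smooth j)
  have hfd : ∀ j y, DifferentiableAt ℝ (fun y => R y j) y :=
    fun j y => ((hRj j).differentiable one_ne_zero) y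
  have hcurvec : Continuous (fun t : ℝ => xe + t • u) :=
    continuous_const.add (continuous_id.smul continuous_const)
  have hpdc : ∀ j i, Continuous (fun y => pd R y j i) := by
    intro j i
    exact ((hRj j).continuous_fderiv one_ne_zero).clm_apply continuous_const
  set c : Fin n → Fin ν → ℝ := fun i j => ∫ t in (0:ℝ)..1, pd R (xe + t • u) j i with hc
  have hcnn : ∀ i j, 0 ≤ c i j := by
    intro i j
    apply intervalIntegral.integral_nonneg zero_le_one
    intro t ht
    rcases Nat.eq_zero_or_pos (A i j) with h0 | h0
    · rw [hR.deriv_zero _ (hpath t ht) i j h0]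
    · exact hR.deriv_nonneg _ (hpath t ht) i j h0
  have hczero : ∀ i j, A i j = 0 → c i j = 0 := by
    intro i j h0
    have hEqOn0 : EqOn (fun t : ℝ => pd R (xe + t • u) j i) (fun _ => (0:ℝ)) (uIcc 0 1) := by
      intro t ht
      rw [uIcc_of_le zero_le_one] at ht
      exact hR.deriv_zero _ (hpath t ht) i j h0
    show (∫ t in (0:ℝ)..1, pd R (xe + t • u) j i) = 0
    rw [intervalIntegral.integral_congr hEqOn0, intervalIntegral.integral_zero]
  -- FTC along the segment
  have hline : ∀ j, R x j - R xe j = ∑ i, u i * c i j := by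
    intro j
    have hder : ∀ t ∈ uIcc (0:ℝ) 1, HasDerivAt (fun t => R (xe + t • u) j)
        ((fderiv ℝ (fun y => R y j) (xe + t • u)) u) t := by
      intro t _
      have hcv : HasDerivAt (fun t : ℝ => xe + t • u) u t := by
        have h5 := (hasDerivAt_id t).smul_const u
        simpa using h5.const_add xe
      exact ((hfd j _).hasFDerivAt.comp_hasDerivAt t hcv)
    have hcont : Continuous fun t => (fderiv ℝ (fun y => R y j) (xe + t • u)) u :=
      ((((hRj j).continuous_fderiv one_ne_zero).comp hcurvec)).clm_apply continuous_const
    have hFTC := intervalIntegral.integral_eq_sub_of_hasDerivAt hder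
      (hcont.intervalIntegrable 0 1)
    have hexp : ∀ y, (fderiv ℝ (fun y => R y j) y) u = ∑ i, u i * pd R y j i := by
      intro y
      have hu2 : (∑ i, u i • (Pi.single i 1 : Fin n → ℝ)) = u := by
        have h6 : ∀ i : Fin n, u i • (Pi.single i 1 : Fin n → ℝ) = Pi.single i (u i) := fun i => by
          rw [← Pi.single_smul, smul_eq_mul, mul_one]
        simp_rw [h6]
        exact Finset.univ_sum_single u
      conv_lhs => rw [← hu2]
      rw [map_sum]
      simp [pd, smul_eq_mul]
    calc R x j - R xe j
        = ∫ t in (0:ℝ)..1, (fderiv ℝ (fun y => R y j) (xe + t • u)) u := by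
          rw [hFTC]
          norm_num
          rfl
      _ = ∫ t in (0:ℝ)..1, ∑ i, u i * pd R (xe + t • u) j i := by
          congr 1
          funext t
          exact hexp _
      _ = ∑ i, ∫ t in (0:ℝ)..1, u i * pd R (xe + t • u) j i := by
          apply intervalIntegral.integral_finset_sum
          intro i _
          exact ((continuous_const.mul ((hpdc j i).comp hcurvec)).intervalIntegrable 0 1)
      _ = ∑ i, u i * c i j := by
          refine Finset.sum_congr rfl fun i _ => ?_
          exact intervalIntegral.integral_const_mul _ _
  set v : Fin ν → ℝ := fun j => R x j - R xe j with hv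
  have hGE : ∀ i j, (GammaEll Γ i j).mulVec ξ = u i • (Pi.single j 1 : Fin ν → ℝ) := by
    intro i j
    funext j'
    simp only [GammaEll, Matrix.mulVec, Matrix.vecMulVec_apply, dotProduct,
      Pi.smul_apply, smul_eq_mul]
    have h7 : (Γ.mulVec ξ) i = ∑ k, Γ i k * ξ k := rfl
    rw [hu, h7, Finset.sum_mul]
    refine Finset.sum_congr rfl fun k _ => by ring
  have hvsum : v = ∑ i, ∑ j, c i j • ((GammaEll Γ i j).mulVec ξ) := by
    funext j'
    simp only [hv, Finset.sum_apply, Pi.smul_apply, hGE, smul_eq_mul, Pi.single_apply]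
    rw [hline j']
    refine Finset.sum_congr rfl fun i _ => ?_
    simp [Finset.sum_ite_eq', mul_comm]
  -- local Lipschitz data for W and extension
  have hWl : LocallyLipschitz W := by
    have hL : LipschitzWith ‖(Matrix.mulVecLin Γ).toContinuousLinearMap‖₊
        (fun ζ : Fin ν → ℝ => Γ.mulVec ζ) := by
      have h8 := (Matrix.mulVecLin Γ).toContinuousLinearMap.lipschitz
      have h9 : ⇑(Matrix.mulVecLin Γ).toContinuousLinearMap
          = (fun ζ : Fin ν → ℝ => Γ.mulVec ζ) := by
        funext ζ
        simp [Matrix.mulVecLin_apply]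
      rwa [h9] at h8
    exact hLip.comp hL.locallyLipschitz
  obtain ⟨K, t0, ht0, hK⟩ := hWl ξ
  obtain ⟨r0, hr0, hball⟩ := Metric.mem_nhds_iff.1 ht0
  have hrpos : (0:ℝ) < r0 / 2 := by positivity
  have hsub : Metric.closedBall ξ (r0 / 2) ⊆ t0 :=
    subset_trans (Metric.closedBall_subset_ball (by linarith)) hball
  obtain ⟨W', hW', hEqOn⟩ := (hK.mono hsub).extend_real
  set Cij : Fin n → Fin ν → ℝ :=
    fun i j => ‖(Matrix.mulVecLin (GammaEll Γ i j)).toContinuousLinearMap‖ with hCij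
  set C : ℝ := ∑ i, ∑ j, c i j * ((K:ℝ) * Cij i j) with hCdef
  have hC : 0 ≤ C := by
    apply Finset.sum_nonneg
    intro i _
    apply Finset.sum_nonneg
    intro j _
    exact mul_nonneg (hcnn i j) (mul_nonneg K.coe_nonneg (norm_nonneg _))
  have hP : ∀ z, dist z ξ < r0 / 2 → DifferentiableAt ℝ W' z →
      fderiv ℝ W' z v ≤ C * dist z ξ := by
    intro z hz hdz
    have hmem : Metric.ball ξ (r0 / 2) ∈ 𝓝 z :=
      (Metric.isOpen_ball).mem_nhds (by rwa [Metric.mem_ball])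
    have hEv : W' =ᶠ[𝓝 z] W :=
      Filter.eventuallyEq_of_mem hmem fun w hw =>
        (hEqOn (Metric.ball_subset_closedBall hw)).symm
    have hdW : DifferentiableAt ℝ W z := (hEv.differentiableAt_iff).1 hdz
    have hfeq : fderiv ℝ W' z = fderiv ℝ W z := hEv.fderiv_eq
    rw [hfeq]
    have hnorm : ‖fderiv ℝ W z‖ ≤ (K:ℝ) := by
      rw [← hfeq]; exact norm_fderiv_le_of_lipschitz ℝ hW'
    have hterm : ∀ i j, (fderiv ℝ W z) (c i j • (GammaEll Γ i j).mulVec ξ)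
        ≤ c i j * ((K:ℝ) * Cij i j) * dist z ξ := by
      intro i j
      rw [_root_.map_smul, smul_eq_mul]
      rcases Nat.eq_zero_or_pos (A i j) with h0 | h0
      · rw [hczero i j h0]
        simp
      · have harg : ξ = z + (ξ - z) := by abel
        have hsplit : (GammaEll Γ i j).mulVec ξ
            = (GammaEll Γ i j).mulVec z + (GammaEll Γ i j).mulVec (ξ - z) := by
          conv_lhs => rw [harg]
          rw [Matrix.mulVec_add]
        rw [hsplit, map_add]
        have h1 : (fderiv ℝ W z) ((GammaEll Γ i j).mulVec z) ≤ 0 := hdec z hdW i j h0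
        have h2 : (fderiv ℝ W z) ((GammaEll Γ i j).mulVec (ξ - z))
            ≤ (K:ℝ) * (Cij i j * dist z ξ) := by
          have h3 : ‖(GammaEll Γ i j).mulVec (ξ - z)‖ ≤ Cij i j * dist z ξ := by
            have h4 := ((Matrix.mulVecLin (GammaEll Γ i j)).toContinuousLinearMap).le_opNorm
              (ξ - z)
            have h5 : ((Matrix.mulVecLin (GammaEll Γ i j)).toContinuousLinearMap) (ξ - z)
                = (GammaEll Γ i j).mulVec (ξ - z) := by
              simp [Matrix.mulVecLin_apply]
            rw [h5] at h4
            have h6 : dist z ξ = ‖ξ - z‖ := by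
              rw [dist_eq_norm, norm_sub_rev]
            rw [h6]
            exact h4
          calc (fderiv ℝ W z) ((GammaEll Γ i j).mulVec (ξ - z))
              ≤ ‖(fderiv ℝ W z) ((GammaEll Γ i j).mulVec (ξ - z))‖ := by
                rw [Real.norm_eq_abs]; exact le_abs_self _
            _ ≤ ‖fderiv ℝ W z‖ * ‖(GammaEll Γ i j).mulVec (ξ - z)‖ :=
                ContinuousLinearMap.le_opNorm _ _
            _ ≤ (K:ℝ) * (Cij i j * dist z ξ) :=
                mul_le_mul hnorm h3 (norm_nonneg _) K.coe_nonneg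
        have h7 : (fderiv ℝ W z) ((GammaEll Γ i j).mulVec z)
            + (fderiv ℝ W z) ((GammaEll Γ i j).mulVec (ξ - z))
            ≤ (K:ℝ) * (Cij i j * dist z ξ) := by linarith
        have h8 := mul_le_mul_of_nonneg_left h7 (hcnn i j)
        nlinarith [h8]
    rw [hvsum, map_sum]
    simp_rw [map_sum]
    calc ∑ i, ∑ j, (fderiv ℝ W z) (c i j • (GammaEll Γ i j).mulVec ξ)
        ≤ ∑ i, ∑ j, c i j * ((K:ℝ) * Cij i j) * dist z ξ :=
          Finset.sum_le_sum fun i _ => Finset.sum_le_sum fun j _ => hterm i j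
      _ = C * dist z ξ := by
          rw [hCdef, Finset.sum_mul]
          exact Finset.sum_congr rfl fun i _ => (Finset.sum_mul _ _ _).symm
  have hmain := main_limsup W' K hW' ξ v hrpos hC hP
  show dini W (fun ζ => R (xe + Γ.mulVec ζ)) ξ ≤ 0
  unfold dini
  have hEvq : (fun h : ℝ => (W (ξ + h • (fun ζ => R (xe + Γ.mulVec ζ)) ξ) - W ξ) / h)
      =ᶠ[𝓝[>] (0:ℝ)] (fun h : ℝ => (W' (ξ + h • v) - W' ξ) / h) := by
    have hδ : (0:ℝ) < (r0 / 2) / (‖v‖ + 1) := by positivity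
    filter_upwards [Ioo_mem_nhdsGT hδ] with h hh
    have hWeq : W (ξ + h • R (xe + Γ.mulVec ξ)) = W (ξ + h • v) := by
      show Vh (Γ.mulVec (ξ + h • R x)) = Vh (Γ.mulVec (ξ + h • v))
      congr 1
      rw [Matrix.mulVec_add, Matrix.mulVec_add, Matrix.mulVec_smul, Matrix.mulVec_smul]
      congr 2
      have hvx : R x = v + R xe := by
        funext j
        simp [hv]
      rw [hvx, Matrix.mulVec_add, hEq, add_zero]
    have hmem1 : ξ + h • v ∈ Metric.closedBall ξ (r0 / 2) := by
      rw [Metric.mem_closedBall, dist_eq_norm]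
      have h9 : ξ + h • v - ξ = h • v := by abel
      rw [h9, norm_smul, Real.norm_eq_abs, abs_of_pos hh.1]
      have h10 := hh.2
      rw [lt_div_iff₀ (by positivity)] at h10
      nlinarith [norm_nonneg v]
    have hmem0 : ξ ∈ Metric.closedBall ξ (r0 / 2) := Metric.mem_closedBall_self hrpos.le
    show (W (ξ + h • R (xe + Γ.mulVec ξ)) - W ξ) / h = (W' (ξ + h • v) - W' ξ) / h
    rw [hWeq, hEqOn hmem1, hEqOn hmem0]
  rw [limsup_congr hEvq]
  exact hmain
end

section
/- Let B ∈ ℝ^{q×n}, set C = BΓ ∈ ℝ^{q×ν}, assume ker C = ker Γ, and assume ker Γ contains a strictly positive vector (assumption AG). Then the following are equivalent: (1) for every admissible kinetics R ∈ K_A and every x ∈ ℝ≥0ⁿ, the upper Dini derivative of x ↦ ‖C R(x)‖_∞ along the vector field x ↦ ΓR(x) is nonpositive; (2) for every admissible kinetics R ∈ K_A, every equilibrium x_e of R (ΓR(x_e) = 0), and every x ∈ C_{x_e} = ({x_e} + im Γ) ∩ ℝ≥0ⁿ, the upper Dini derivative of x ↦ ‖B(x − x_e)‖_∞ along x ↦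 ΓR(x) is nonpositive. -/
open Filter Set Topology

lemma fderiv_apply_eq_sum {n ν : ℕ} {R : (Fin n → ℝ) → Fin ν → ℝ} (hR : ContDiff ℝ 1 R)
    (x f : Fin n → ℝ) (j : Fin ν) :
    fderiv ℝ (fun y => R y j) x f = ∑ i, f i * pd R x j i := by
  have hf : f = ∑ i, (f i) • (Pi.single i 1 : Fin n → ℝ) := by
    funext k
    simp [Finset.sum_apply, Pi.single_apply, mul_ite]
  conv_lhs => rw [hf]
  rw [map_sum]
  refine Finset.sum_congr rfl fun i _ => ?_
  rw [map_smul]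
  simp [pd, smul_eq_mul]

lemma hasDerivAt_comp_line {n ν : ℕ} {R : (Fin n → ℝ) → Fin ν → ℝ} (hR : ContDiff ℝ 1 R)
    (x f : Fin n → ℝ) (j : Fin ν) (t : ℝ) :
    HasDerivAt (fun h : ℝ => R (x + h • f) j) (∑ i, f i * pd R (x + t • f) j i) t := by
  have hdiff : DifferentiableAt ℝ (fun y => R y j) (x + t • f) :=
    ((contDiff_pi.mp hR j).differentiable one_ne_zero).differentiableAt
  have hpath : HasDerivAt (fun h : ℝ => x + h • f) f t := by
    simpa using ((hasDerivAt_id t).smul_const f).const_add x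
  have := hdiff.hasFDerivAt.comp_hasDerivAt t hpath
  rwa [fderiv_apply_eq_sum hR] at this

section dini_lemmas
variable {q : ℕ}

lemma abs_le_pnorm (v : Fin q → ℝ) (k : Fin q) : |v k| ≤ ‖v‖ := by
  simpa [Real.norm_eq_abs] using norm_le_pi_norm v k

lemma pnorm_le {v : Fin q → ℝ} {a : ℝ} (ha : 0 ≤ a) (h : ∀ k, |v k| ≤ a) : ‖v‖ ≤ a := by
  rw [pi_norm_le_iff_of_nonneg ha]
  simpa [Real.norm_eq_abs] using h

lemma pnorm_le_sum (v : Fin q → ℝ) : ‖v‖ ≤ ∑ k, |v k| :=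
  pnorm_le (Finset.sum_nonneg fun k _ => abs_nonneg _)
    (fun k => Finset.single_le_sum (fun k _ => abs_nonneg (v k)) (Finset.mem_univ k))

lemma slope_tendsto {g : ℝ → ℝ} {d : ℝ} (hg : HasDerivAt g d 0) :
    Tendsto (fun h : ℝ => (g h - g 0) / h) (nhdsWithin 0 (Set.Ioi 0)) (nhds d) := by
  have := hasDerivAt_iff_tendsto_slope.1 hg
  have h2 : Tendsto (slope g 0) (nhdsWithin 0 (Set.Ioi 0)) (nhds d) :=
    this.mono_left (nhdsWithin_mono _ (fun y hy => ne_of_gt hy))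
  refine h2.congr fun y => ?_
  simp [slope_def_field]

/-- eventual bound on coordinate increments -/
lemma coord_bound {g : ℝ → Fin q → ℝ} {d : Fin q → ℝ}
    (hg : ∀ k, HasDerivAt (fun h => g h k) (d k) 0) :
    ∀ᶠ h : ℝ in nhdsWithin 0 (Set.Ioi 0), ∀ k, |g h k - g 0 k| ≤ (|d k| + 1) * h := by
  rw [eventually_all]
  intro k
  have h1 := (slope_tendsto (hg k)).eventually (eventually_abs_sub_lt (d k) one_pos)
  filter_upwards [h1, self_mem_nhdsWithin] with h hh (hpos : 0 < h)
  have : |(g h k - g 0 k) / h| ≤ |d k| + 1 := by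
    have := abs_sub_abs_le_abs_sub ((g h k - g 0 k) / h) (d k)
    linarith
  rw [abs_div, abs_of_pos hpos] at this
  calc |g h k - g 0 k| = (|g h k - g 0 k| / h) * h := by field_simp
    _ ≤ (|d k| + 1) * h := by gcongr

lemma norm_quot_bound {g : ℝ → Fin q → ℝ} {d : Fin q → ℝ}
    (hg : ∀ k, HasDerivAt (fun h => g h k) (d k) 0) :
    ∀ᶠ h : ℝ in nhdsWithin 0 (Set.Ioi 0),
      |(‖g h‖ - ‖g 0‖) / h| ≤ ∑ k, (|d k| + 1) := by
  filter_upwards [coord_bound hg, self_mem_nhdsWithin] with h hh (hpos : 0 < h)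
  have h1 : |‖g h‖ - ‖g 0‖| ≤ ‖g h - g 0‖ := abs_norm_sub_norm_le _ _
  have h2 : ‖g h - g 0‖ ≤ ∑ k, |g h k - g 0 k| := by
    simpa using pnorm_le_sum (g h - g 0)
  have h3 : ∑ k, |g h k - g 0 k| ≤ ∑ k, (|d k| + 1) * h :=
    Finset.sum_le_sum fun k _ => hh k
  rw [abs_div, abs_of_pos hpos, div_le_iff₀ hpos]
  calc |‖g h‖ - ‖g 0‖| ≤ ∑ k, (|d k| + 1) * h := by linarith
    _ = (∑ k, (|d k| + 1)) * h := by rw [Finset.sum_mul]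

lemma limsup_quot_le {g : ℝ → Fin q → ℝ} {d : Fin q → ℝ}
    (hg : ∀ k, HasDerivAt (fun h => g h k) (d k) 0)
    (hc : ∀ k (σ : ℝ), (σ = 1 ∨ σ = -1) → σ * g 0 k = ‖g 0‖ → σ * d k ≤ 0) :
    limsup (fun h : ℝ => (‖g h‖ - ‖g 0‖) / h) (nhdsWithin 0 (Set.Ioi 0)) ≤ 0 := by
  have hcob : IsCoboundedUnder (· ≤ ·) (nhdsWithin (0:ℝ) (Set.Ioi 0))
      (fun h : ℝ => (‖g h‖ - ‖g 0‖) / h) := by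
    refine isCoboundedUnder_le_of_eventually_le _ (x := -(∑ k, (|d k| + 1))) ?_
    filter_upwards [norm_quot_bound hg] with h hh
    linarith [neg_abs_le ((‖g h‖ - ‖g 0‖) / h)]
  have key : ∀ ε : ℝ, 0 < ε →
      limsup (fun h : ℝ => (‖g h‖ - ‖g 0‖) / h) (nhdsWithin 0 (Set.Ioi 0)) ≤ ε := by
    intro ε hε
    refine limsup_le_of_le hcob ?_
    have claim : ∀ k (σ : ℝ), (σ = 1 ∨ σ = -1) →
        ∀ᶠ h : ℝ in nhdsWithin 0 (Set.Ioi 0), σ * g h k ≤ ‖g 0‖ + h * ε := by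
      intro k σ hσ
      by_cases hact : σ * g 0 k = ‖g 0‖
      · have hd : σ * d k ≤ 0 := hc k σ hσ hact
        have htend : Tendsto (fun h : ℝ => σ * ((g h k - g 0 k) / h))
            (nhdsWithin 0 (Set.Ioi 0)) (nhds (σ * d k)) :=
          (slope_tendsto (hg k)).const_mul σ
        have := htend.eventually_lt_const (show σ * d k < ε by linarith)
        filter_upwards [this, self_mem_nhdsWithin] with h hh (hpos : 0 < h)
        have h3 : σ * (g h k - g 0 k) = σ * ((g h k - g 0 k) / h) * h := by
          field_simp
        have h2 : σ * ((g h k - g 0 k) / h) * h ≤ ε * h :=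
          mul_le_mul_of_nonneg_right (le_of_lt hh) (le_of_lt hpos)
        nlinarith
      · have hle : σ * g 0 k ≤ ‖g 0‖ := by
          calc σ * g 0 k ≤ |σ * g 0 k| := le_abs_self _
            _ = |g 0 k| := by rcases hσ with rfl | rfl <;> simp [abs_mul]
            _ ≤ ‖g 0‖ := abs_le_pnorm _ _
        have hlt : σ * g 0 k < ‖g 0‖ := lt_of_le_of_ne hle hact
        have hcont : Tendsto (fun h : ℝ => σ * g h k) (nhdsWithin 0 (Set.Ioi 0))
            (nhds (σ * g 0 k)) :=
          (((hg k).continuousAt.tendsto).const_mul σ).mono_left nhdsWithin_le_nhds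
        filter_upwards [hcont.eventually_lt_const hlt, self_mem_nhdsWithin]
          with h hh (hpos : 0 < h)
        nlinarith
    have call : ∀ᶠ h : ℝ in nhdsWithin 0 (Set.Ioi 0), ∀ k, |g h k| ≤ ‖g 0‖ + h * ε := by
      rw [eventually_all]
      intro k
      filter_upwards [claim k 1 (Or.inl rfl), claim k (-1) (Or.inr rfl)] with h h1 h2
      rw [abs_le]
      constructor <;> [skip; skip] <;> simp only [one_mul, neg_mul, neg_one_mul] at h1 h2 <;> linarith
    filter_upwards [call, self_mem_nhdsWithin] with h hh (hpos : 0 < h)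
    have hnorm : ‖g h‖ ≤ ‖g 0‖ + h * ε :=
      pnorm_le (add_nonneg (norm_nonneg _) (mul_nonneg hpos.le hε.le)) hh
    rw [div_le_iff₀ hpos]
    linarith
  by_contra hcon
  push_neg at hcon
  have := key (limsup (fun h : ℝ => (‖g h‖ - ‖g 0‖) / h) (nhdsWithin 0 (Set.Ioi 0)) / 2)
    (by linarith)
  linarith

end dini_lemmas

lemma le_limsup_quot {g : ℝ → Fin q → ℝ} {d : Fin q → ℝ}
    (hg : ∀ k, HasDerivAt (fun h => g h k) (d k) 0)
    (k : Fin q) (σ : ℝ) (hσ : σ = 1 ∨ σ = -1) (hk : σ * g 0 k = ‖g 0‖) :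
    σ * d k ≤ limsup (fun h : ℝ => (‖g h‖ - ‖g 0‖) / h) (nhdsWithin 0 (Set.Ioi 0)) := by
  have hbdd : IsBoundedUnder (· ≤ ·) (nhdsWithin (0:ℝ) (Set.Ioi 0))
      (fun h : ℝ => (‖g h‖ - ‖g 0‖) / h) := by
    refine ⟨∑ k, (|d k| + 1), eventually_map.2 ?_⟩
    filter_upwards [norm_quot_bound hg] with h hh
    exact le_trans (le_abs_self _) hh
  have hlow : ∀ᶠ h : ℝ in nhdsWithin 0 (Set.Ioi 0),
      σ * ((g h k - g 0 k) / h) ≤ (‖g h‖ - ‖g 0‖) / h := by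
    filter_upwards [self_mem_nhdsWithin] with h (hpos : 0 < h)
    have h1 : σ * g h k ≤ ‖g h‖ := by
      calc σ * g h k ≤ |σ * g h k| := le_abs_self _
        _ = |g h k| := by rcases hσ with rfl | rfl <;> simp [abs_mul]
        _ ≤ ‖g h‖ := abs_le_pnorm _ _
    have h2 : σ * ((g h k - g 0 k) / h) = (σ * g h k - ‖g 0‖) / h := by
      rw [← hk]; ring
    rw [h2]
    gcongr
  have key : ∀ ε : ℝ, 0 < ε →
      σ * d k - ε ≤ limsup (fun h : ℝ => (‖g h‖ - ‖g 0‖) / h) (nhdsWithin 0 (Set.Ioi 0)) := by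
    intro ε hε
    have htend : Tendsto (fun h : ℝ => σ * ((g h k - g 0 k) / h))
        (nhdsWithin 0 (Set.Ioi 0)) (nhds (σ * d k)) :=
      (slope_tendsto (hg k)).const_mul σ
    have hev : ∀ᶠ h : ℝ in nhdsWithin 0 (Set.Ioi 0),
        σ * d k - ε ≤ (‖g h‖ - ‖g 0‖) / h := by
      filter_upwards [htend.eventually_const_lt (show σ * d k - ε < σ * d k by linarith),
        hlow] with h h1 h2
      linarith
    exact le_limsup_of_frequently_le hev.frequently hbdd
  by_contra hcon
  push_neg at hcon
  have := key ((σ * d k - limsup (fun h : ℝ => (‖g h‖ - ‖g 0‖) / h)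
      (nhdsWithin 0 (Set.Ioi 0))) / 2) (by linarith)
  linarith

section mono
variable {n : ℕ}

lemma hasFDerivAt_coord (i : Fin n) (x : Fin n → ℝ) (e : ℕ) :
    HasFDerivAt (fun y : Fin n → ℝ => y i ^ e)
      (((e : ℝ) * x i ^ (e - 1)) •
        (ContinuousLinearMap.proj (R := ℝ) (φ := fun _ : Fin n => ℝ) i)) x := by
  have hproj : HasFDerivAt (fun y : Fin n → ℝ => y i)
      (ContinuousLinearMap.proj (R := ℝ) (φ := fun _ : Fin n => ℝ) i) x :=
    (ContinuousLinearMap.proj (R := ℝ) (φ := fun _ : Fin n => ℝ) i).hasFDerivAt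
  exact (hasDerivAt_pow e (x i)).comp_hasFDerivAt x hproj

lemma hasFDerivAt_mono (E : Fin n → ℕ) (x : Fin n → ℝ) :
    HasFDerivAt (fun y : Fin n → ℝ => ∏ i, y i ^ E i)
      (∑ i, (∏ i' ∈ Finset.univ.erase i, x i' ^ E i') •
        (((E i : ℝ) * x i ^ (E i - 1)) •
          (ContinuousLinearMap.proj (R := ℝ) (φ := fun _ : Fin n => ℝ) i))) x :=
  HasFDerivAt.finset_prod (u := Finset.univ) (g := fun i (y : Fin n → ℝ) => y i ^ E i)
    (g' := fun i => ((E i : ℝ) * x i ^ (E i - 1)) •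
      (ContinuousLinearMap.proj (R := ℝ) (φ := fun _ : Fin n => ℝ) i))
    (fun i _ => hasFDerivAt_coord i x (E i))

lemma hasFDerivAt_monoSum (c : Option (Fin n) → ℝ) (E : Option (Fin n) → Fin n → ℕ)
    (x : Fin n → ℝ) :
    HasFDerivAt (fun y : Fin n → ℝ => ∑ m, c m * ∏ i, y i ^ E m i)
      (∑ m, c m • ∑ i, (∏ i' ∈ Finset.univ.erase i, x i' ^ E m i') •
        (((E m i : ℝ) * x i ^ (E m i - 1)) •
          (ContinuousLinearMap.proj (R := ℝ) (φ := fun _ : Fin n => ℝ) i))) x := by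
  apply HasFDerivAt.fun_sum
  intro m _
  exact (hasFDerivAt_mono (E m) x).const_mul (c m)

lemma monoSum_contDiff (c : Option (Fin n) → ℝ) (E : Option (Fin n) → Fin n → ℕ) :
    ContDiff ℝ 1 (fun y : Fin n → ℝ => ∑ m, c m * ∏ i, y i ^ E m i) := by
  apply ContDiff.sum
  intro m _
  apply ContDiff.mul contDiff_const
  apply contDiff_prod
  intro i _
  exact ((ContinuousLinearMap.proj (R := ℝ) (φ := fun _ : Fin n => ℝ) i).contDiff).pow (E m i)

lemma pd_monoSum (c : Option (Fin n) → ℝ) (E : Option (Fin n) → Fin n → ℕ)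
    (x : Fin n → ℝ) (i : Fin n) :
    fderiv ℝ (fun y : Fin n → ℝ => ∑ m, c m * ∏ i', y i' ^ E m i') x (Pi.single i 1)
      = ∑ m, c m * ((E m i : ℝ) * x i ^ (E m i - 1) *
          ∏ i' ∈ Finset.univ.erase i, x i' ^ E m i') := by
  rw [(hasFDerivAt_monoSum c E x).fderiv]
  simp only [ContinuousLinearMap.coe_sum', Finset.sum_apply, ContinuousLinearMap.coe_smul',
    Pi.smul_apply, ContinuousLinearMap.proj_apply, Pi.single_apply, smul_eq_mul]
  refine Finset.sum_congr rfl fun m _ => ?_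
  rw [Finset.sum_eq_single i]
  · simp only [if_true, mul_one]; ring
  · intro b _ hb
    simp [hb]
  · simp

lemma sum_option_split {α M : Type*} [Fintype α] [DecidableEq α] [AddCommMonoid M]
    (f : Option α → M) : ∑ m : Option α, f m = f none + ∑ a : α, f (some a) := by
  rw [univ_option, Finset.sum_insertNone]

/-- `pow_helper`: uniform form of the derivative factor at a constant point. -/
lemma pow_helper {T : ℝ} (hT : T ≠ 0) (a b : ℕ) :
    (a : ℝ) * T ^ (a - 1) * T ^ b = (a : ℝ) * T ^ (a + b) / T := by
  cases a with
  | zero => simp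
  | succ a' =>
    have : a' + 1 + b = (a' + b) + 1 := by ring
    rw [this]
    simp only [Nat.add_sub_cancel]
    rw [pow_succ, pow_add]
    field_simp

end mono

lemma constr {n ν : ℕ} (A : Matrix (Fin n) (Fin ν) ℕ) (w : Fin ν → ℝ) (hw : ∀ j, 0 < w j)
    (Q : Matrix (Fin ν) (Fin n) ℝ) (hQp : ∀ i j, 0 < A i j → 0 < Q j i)
    (hQ0 : ∀ i j, A i j = 0 → Q j i = 0) :
    ∃ (R : (Fin n → ℝ) → Fin ν → ℝ) (xh : Fin n → ℝ),
      IsAdmissible A R ∧ (∀ i, 0 < xh i) ∧ (∀ j, R xh j = w j) ∧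
      (∀ j i, pd R xh j i = Q j i) := by
  classical
  set T : ℝ := 1 + ∑ j, ∑ i, (if 0 < A i j then w j / Q j i else 0) with hTdef
  clear_value T
  have hterm_nonneg : ∀ j i, (0:ℝ) ≤ (if 0 < A i j then w j / Q j i else 0) := by
    intro j i
    split
    · exact le_of_lt (div_pos (hw j) (hQp i j ‹_›))
    · exact le_refl 0
  have hT1 : 1 ≤ T := by
    have : (0:ℝ) ≤ ∑ j, ∑ i, (if 0 < A i j then w j / Q j i else 0) :=
      Finset.sum_nonneg fun j _ => Finset.sum_nonneg fun i _ => hterm_nonneg j i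
    rw [hTdef]
    linarith
  have hT0 : (0:ℝ) < T := by linarith
  have hTw : ∀ i j, 0 < A i j → w j < T * Q j i := by
    intro i j h
    have t1 : w j / Q j i ≤ ∑ i', (if 0 < A i' j then w j / Q j i' else 0) := by
      have := Finset.single_le_sum (f := fun i' => if 0 < A i' j then w j / Q j i' else 0)
        (fun i' _ => hterm_nonneg j i') (Finset.mem_univ i)
      simpa [h] using this
    have t2 : (∑ i', (if 0 < A i' j then w j / Q j i' else 0)) ≤ T - 1 := by
      have := Finset.single_le_sum
        (f := fun j' => ∑ i', (if 0 < A i' j' then w j' / Q j' i' else 0))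
        (fun j' _ => Finset.sum_nonneg fun i' _ => hterm_nonneg j' i') (Finset.mem_univ j)
      rw [hTdef]; linarith
    have hQpos := hQp i j h
    have t3 : w j / Q j i ≤ T - 1 := le_trans t1 t2
    have t4 : w j = (w j / Q j i) * Q j i := by field_simp
    have t5 : (w j / Q j i) * Q j i ≤ (T - 1) * Q j i :=
      mul_le_mul_of_nonneg_right t3 hQpos.le
    nlinarith
  set Mv : ℝ := ∑ j, ((∑ i, (if 0 < A i j then T * Q j i - w j else 0)) / w j) with hMvdef
  have hnum_nonneg : ∀ j i, (0:ℝ) ≤ (if 0 < A i j then T * Q j i - w j else 0) := by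
    intro j i
    split
    · linarith [hTw i j ‹_›]
    · exact le_refl 0
  have hMv0 : 0 ≤ Mv := by
    apply Finset.sum_nonneg
    intro j _
    exact div_nonneg (Finset.sum_nonneg fun i _ => hnum_nonneg j i) (hw j).le
  obtain ⟨N, hNgt⟩ := exists_nat_gt Mv
  have hNposR : (0:ℝ) < N := lt_of_le_of_lt hMv0 hNgt
  have hNpos : 0 < N := by exact_mod_cast hNposR
  have hNj : ∀ j, (∑ i, (if 0 < A i j then T * Q j i - w j else 0)) < N * w j := by
    intro j
    have t1 : (∑ i, (if 0 < A i j then T * Q j i - w j else 0)) / w j ≤ Mv := by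
      apply Finset.single_le_sum
        (f := fun j' => (∑ i, (if 0 < A i j' then T * Q j' i - w j' else 0)) / w j')
        (fun j' _ => div_nonneg (Finset.sum_nonneg fun i _ => hnum_nonneg j' i) (hw j').le)
        (Finset.mem_univ j)
    have t2 := lt_of_le_of_lt t1 hNgt
    rw [div_lt_iff₀ (hw j)] at t2
    linarith
  set z : Fin ν → Fin n → ℝ :=
    fun j i => (if 0 < A i j then T * Q j i - w j else 0) / N with hzdef
  set z₀ : Fin ν → ℝ := fun j => w j - ∑ i, z j i with hz0def
  have hznn : ∀ j i, 0 ≤ z j i := fun j i => div_nonneg (hnum_nonneg j i) hNposR.le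
  have hzsum : ∀ j, ∑ i, z j i < w j := by
    intro j
    have : ∑ i, z j i = (∑ i, (if 0 < A i j then T * Q j i - w j else 0)) / N := by
      rw [hzdef, Finset.sum_div]
    rw [this, div_lt_iff₀ hNposR]
    calc (∑ i, (if 0 < A i j then T * Q j i - w j else 0)) < N * w j := hNj j
      _ = w j * N := by ring
  have hz0pos : ∀ j, 0 < z₀ j := fun j => by
    rw [hz0def]; simp only; linarith [hzsum j]
  set s : Fin ν → ℕ := fun j => ∑ i, (if 0 < A i j then 1 else 0) with hsdef
  set E : Fin ν → Option (Fin n) → Fin n → ℕ := fun j m i =>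
    (if 0 < A i j then 1 else 0) +
      m.elim 0 (fun i₀ => if i = i₀ then (if 0 < A i j then N else 0) else 0) with hEdef
  set c : Fin ν → Option (Fin n) → ℝ :=
    fun j m => m.elim (z₀ j / T ^ s j) (fun i₀ => z j i₀ / T ^ (s j + N)) with hcdef
  set R : (Fin n → ℝ) → Fin ν → ℝ :=
    fun y j => ∑ m, c j m * ∏ i, y i ^ E j m i with hRdef
  set xh : Fin n → ℝ := fun _ => T with hxhdef
  -- basic facts
  have hE0 : ∀ j m i, A i j = 0 → E j m i = 0 := by
    intro j m i h
    have : ¬ 0 < A i j := by omega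
    cases m <;> simp [hEdef, this]
  have hE1 : ∀ j m i, 0 < A i j → 1 ≤ E j m i := by
    intro j m i h
    cases m <;> simp [hEdef, h]
  have hcnn : ∀ j m, 0 ≤ c j m := by
    intro j m
    cases m with
    | none => exact div_nonneg (hz0pos j).le (pow_pos hT0 _).le
    | some i₀ => exact div_nonneg (hznn j i₀) (pow_pos hT0 _).le
  have hpd : ∀ x j i, pd R x j i = ∑ m, c j m * ((E j m i : ℝ) * x i ^ (E j m i - 1) *
      ∏ i' ∈ Finset.univ.erase i, x i' ^ E j m i') := by
    intro x j i
    simp only [pd, hRdef]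
    exact pd_monoSum (c j) (E j) x i
  have hEsum : ∀ j m, ∑ i, E j m i =
      s j + m.elim 0 (fun i₀ => if 0 < A i₀ j then N else 0) := by
    intro j m
    cases m with
    | none => simp [hEdef, hsdef]
    | some i₀ =>
      simp only [hEdef, Option.elim, hsdef, Finset.sum_add_distrib]
      congr 1
      rw [Finset.sum_ite_eq' Finset.univ i₀ (fun i => if 0 < A i j then N else 0)]
      simp
  have hval : ∀ j m, c j m * T ^ (∑ i, E j m i) = m.elim (z₀ j) (z j) := by
    intro j m
    cases m with
    | none =>
      rw [hEsum]
      simp only [Option.elim, add_zero, hcdef]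
      rw [div_mul_cancel₀ _ (pow_ne_zero _ (ne_of_gt hT0))]
    | some i₀ =>
      rw [hEsum]
      simp only [Option.elim, hcdef]
      by_cases h : 0 < A i₀ j
      · rw [if_pos h, div_mul_cancel₀ _ (pow_ne_zero _ (ne_of_gt hT0))]
      · have hz' : z j i₀ = 0 := by
          have : ¬ 0 < A i₀ j := h
          simp [hzdef, this]
        rw [if_neg h, hz']
        simp
  have hxhpos : ∀ i, 0 < xh i := by
    intro i; simp only [hxhdef]; exact hT0
  have hRxh : ∀ j, R xh j = w j := by
    intro j
    simp only [hRdef, hxhdef]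
    calc ∑ m, c j m * ∏ i, T ^ E j m i = ∑ m, c j m * T ^ (∑ i, E j m i) := by
          refine Finset.sum_congr rfl fun m _ => ?_
          rw [Finset.prod_pow_eq_pow_sum]
      _ = ∑ m : Option (Fin n), (m.elim (z₀ j) (z j) : ℝ) :=
          Finset.sum_congr rfl fun m _ => hval j m
      _ = z₀ j + ∑ i₀, z j i₀ := by rw [sum_option_split]; rfl
      _ = w j := by simp only [hz0def]; ring
  have hpdxh : ∀ j i, pd R xh j i = Q j i := by
    intro j i
    rw [hpd]
    simp only [hxhdef]
    have step1 : ∀ m : Option (Fin n), c j m * ((E j m i : ℝ) * T ^ (E j m i - 1) *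
        ∏ i' ∈ Finset.univ.erase i, T ^ E j m i')
          = (m.elim (z₀ j) (z j)) * (E j m i : ℝ) / T := by
      intro m
      rw [Finset.prod_pow_eq_pow_sum]
      rw [pow_helper (ne_of_gt hT0)]
      have hsplit : E j m i + ∑ i' ∈ Finset.univ.erase i, E j m i' = ∑ i', E j m i' :=
        Finset.add_sum_erase _ _ (Finset.mem_univ i)
      rw [hsplit]
      calc c j m * ((E j m i:ℝ) * T ^ (∑ i', E j m i') / T)
          = (c j m * T ^ (∑ i', E j m i')) * (E j m i : ℝ) / T := by ring
        _ = (m.elim (z₀ j) (z j)) * (E j m i:ℝ) / T := by rw [hval j m]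
    have hsum1 : (∑ m : Option (Fin n), c j m * ((E j m i : ℝ) * T ^ (E j m i - 1) *
        ∏ i' ∈ Finset.univ.erase i, T ^ E j m i'))
          = ∑ m : Option (Fin n), (m.elim (z₀ j) (z j)) * (E j m i : ℝ) / T :=
      Finset.sum_congr rfl fun m _ => step1 m
    rw [hsum1, sum_option_split]
    by_cases hA : 0 < A i j
    · have hEnone : E j none i = 1 := by simp [hEdef, hA]
      have hEsome : ∀ i₀, E j (some i₀) i = 1 + (if i = i₀ then N else 0) := by
        intro i₀; simp [hEdef, hA]
      have hcast : ∀ i₀ : Fin n, ((1 + if i = i₀ then N else 0 : ℕ) : ℝ)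
          = 1 + (if i = i₀ then (N:ℝ) else 0) := by
        intro i₀; split <;> simp
      simp only [Option.elim_none, Option.elim_some, hEnone, hEsome, hcast, Nat.cast_one]
      have hsum2 : (∑ i₀, z j i₀ * (1 + if i = i₀ then (N:ℝ) else 0) / T)
          = (∑ i₀, z j i₀) / T + z j i * N / T := by
        have : ∀ i₀ : Fin n, z j i₀ * (1 + if i = i₀ then (N:ℝ) else 0) / T
            = z j i₀ / T + (if i = i₀ then z j i₀ * N / T else 0) := by
          intro i₀; split <;> ring
        rw [Finset.sum_congr rfl fun i₀ _ => this i₀, Finset.sum_add_distrib,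
          Finset.sum_ite_eq Finset.univ i (fun i₀ => z j i₀ * N / T)]
        simp [Finset.sum_div]
      rw [hsum2]
      have hNz : z j i * (N:ℝ) = T * Q j i - w j := by
        simp only [hzdef, if_pos hA]
        field_simp
      have hzz : z₀ j = w j - ∑ i', z j i' := by simp only [hz0def]
      rw [hzz]
      field_simp
      nlinarith [hNz]
    · have hA0 : A i j = 0 := by omega
      have hEz : ∀ m, E j m i = 0 := fun m => hE0 j m i hA0
      simp [hEz, hQ0 i j hA0]
  -- admissibility
  refine ⟨R, xh, ⟨?_, ?_, ?_, ?_, ?_, ?_⟩, hxhpos, hRxh, hpdxh⟩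
  · -- smooth
    have : R = fun y => (fun j => ∑ m, c j m * ∏ i, y i ^ E j m i) := by
      funext y; simp [hRdef]
    rw [hRdef]
    exact contDiff_pi.mpr fun j => monoSum_contDiff (c j) (E j)
  · -- nonneg
    intro x hx j
    simp only [hRdef]
    apply Finset.sum_nonneg
    intro m _
    exact mul_nonneg (hcnn j m) (Finset.prod_nonneg fun i _ => pow_nonneg (hx i) _)
  · -- vanish
    intro x hx i j hA hxi
    simp only [hRdef]
    apply Finset.sum_eq_zero
    intro m _
    rw [Finset.prod_eq_zero (Finset.mem_univ i), mul_zero]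
    rw [hxi]
    exact zero_pow (by have := hE1 j m i hA; omega)
  · -- deriv_nonneg
    intro x hx i j hA
    rw [hpd]
    apply Finset.sum_nonneg
    intro m _
    refine mul_nonneg (hcnn j m) (mul_nonneg (mul_nonneg (Nat.cast_nonneg _)
      (pow_nonneg (hx i) _)) (Finset.prod_nonneg fun i' _ => pow_nonneg (hx i') _))
  · -- deriv_zero
    intro x hx i j hA0
    rw [hpd]
    apply Finset.sum_eq_zero
    intro m _
    simp [hE0 j m i hA0]
  · -- deriv_pos
    intro x hx i j hA
    rw [hpd]
    apply Finset.sum_pos' ?_ ⟨none, Finset.mem_univ none, ?_⟩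
    · intro m _
      refine mul_nonneg (hcnn j m) (mul_nonneg (mul_nonneg (Nat.cast_nonneg _)
        (pow_nonneg (hx i).le _)) (Finset.prod_nonneg fun i' _ => pow_nonneg (hx i').le _))
    · have hEnone : E j none i = 1 := by simp [hEdef, hA]
      have hcpos : 0 < c j none := by
        simp only [hcdef, Option.elim_none]
        exact div_pos (hz0pos j) (pow_pos hT0 _)
      rw [hEnone]
      apply mul_pos hcpos
      apply mul_pos (by norm_num [pow_zero])
      exact Finset.prod_pos fun i' _ => pow_pos (hx i') _


section bridge

lemma eps_le {a b : ℝ} (h : ∀ ε : ℝ, 0 < ε → a + ε * b ≤ 0) : a ≤ 0 := by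
  by_contra hc
  push_neg at hc
  have hεpos : 0 < a / (2 * (|b| + 1)) := by positivity
  have h1 := h _ hεpos
  have h2 : a / (2 * (|b| + 1)) * b ≥ -(a / (2 * (|b| + 1)) * |b|) := by
    nlinarith [neg_abs_le b, hεpos.le]
  have h3 : a / (2 * (|b| + 1)) * |b| ≤ a / 2 := by
    rw [div_mul_eq_mul_div, div_le_div_iff₀ (by positivity) two_pos]
    nlinarith [abs_nonneg b]
  linarith

lemma limsup_quot_le' {q : ℕ} (g : ℝ → Fin q → ℝ) (w0 : Fin q → ℝ) (d : Fin q → ℝ)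
    (hg0 : g 0 = w0)
    (hg : ∀ k, HasDerivAt (fun h => g h k) (d k) 0)
    (hc : ∀ k (σ : ℝ), (σ = 1 ∨ σ = -1) → σ * w0 k = ‖w0‖ → σ * d k ≤ 0) :
    limsup (fun h : ℝ => (‖g h‖ - ‖w0‖) / h) (nhdsWithin 0 (Set.Ioi 0)) ≤ 0 := by
  subst hg0
  exact limsup_quot_le hg hc

lemma le_limsup_quot' {q : ℕ} (g : ℝ → Fin q → ℝ) (w0 : Fin q → ℝ) (d : Fin q → ℝ)
    (hg0 : g 0 = w0)
    (hg : ∀ k, HasDerivAt (fun h => g h k) (d k) 0)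
    (k : Fin q) (σ : ℝ) (hσ : σ = 1 ∨ σ = -1) (hk : σ * w0 k = ‖w0‖) :
    σ * d k ≤ limsup (fun h : ℝ => (‖g h‖ - ‖w0‖) / h) (nhdsWithin 0 (Set.Ioi 0)) := by
  subst hg0
  exact le_limsup_quot hg k σ hσ hk

lemma hasDerivAt_CRline {n ν q : ℕ} {R : (Fin n → ℝ) → Fin ν → ℝ} (hR : ContDiff ℝ 1 R)
    (M : Matrix (Fin q) (Fin ν) ℝ) (x f : Fin n → ℝ) (k : Fin q) :
    HasDerivAt (fun h : ℝ => M.mulVec (R (x + h • f)) k)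
      (∑ j, M k j * (∑ i, f i * pd R x j i)) 0 := by
  have heq : (fun h : ℝ => M.mulVec (R (x + h • f)) k)
      = fun h => ∑ j, M k j * R (x + h • f) j := by
    funext h; simp [Matrix.mulVec, dotProduct]
  rw [heq]
  apply HasDerivAt.fun_sum
  intro j _
  have hj := hasDerivAt_comp_line hR x f j 0
  rw [show x + (0:ℝ) • f = x by simp] at hj
  exact hj.const_mul (M k j)

variable {n ν q : ℕ} (A : Matrix (Fin n) (Fin ν) ℕ) (Γ : Matrix (Fin n) (Fin ν) ℝ)
  (Bm : Matrix (Fin q) (Fin n) ℝ)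

def condC : Prop :=
  ∀ (r : Fin ν → ℝ) (P : Matrix (Fin ν) (Fin n) ℝ),
    (∀ i j, 0 < A i j → 0 ≤ P j i) → (∀ i j, A i j = 0 → P j i = 0) →
    ∀ (k : Fin q) (σ : ℝ), (σ = 1 ∨ σ = -1) →
      σ * (Bm * Γ).mulVec r k = ‖(Bm * Γ).mulVec r‖ →
      σ * (Bm * Γ).mulVec (P.mulVec (Γ.mulVec r)) k ≤ 0

lemma one_of_cond (hC : condC A Γ Bm) :
    ∀ R, IsAdmissible A R → ∀ x : Fin n → ℝ, (∀ i, 0 ≤ x i) →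
      dini (fun y => ‖(Bm * Γ).mulVec (R y)‖) (fun y => Γ.mulVec (R y)) x ≤ 0 := by
  intro R hadm x hx
  simp only [dini]
  refine limsup_quot_le' (fun h => (Bm * Γ).mulVec (R (x + h • Γ.mulVec (R x))))
    ((Bm * Γ).mulVec (R x))
    (fun k => ∑ j, (Bm * Γ) k j * (∑ i, Γ.mulVec (R x) i * pd R x j i))
    (by norm_num) (fun k => hasDerivAt_CRline hadm.smooth (Bm * Γ) x _ k) ?_
  intro k σ hσ hact
  have key := hC (R x) (Matrix.of fun j i => pd R x j i)
    (fun i j hA => hadm.deriv_nonneg x hx i j hA)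
    (fun i j hA => hadm.deriv_zero x hx i j hA) k σ hσ hact
  have hrw : (Bm * Γ).mulVec ((Matrix.of fun j i => pd R x j i).mulVec
      (Γ.mulVec (R x))) k = ∑ j, (Bm * Γ) k j * (∑ i, Γ.mulVec (R x) i * pd R x j i) := by
    simp only [Matrix.mulVec, dotProduct, Matrix.of_apply]
    refine Finset.sum_congr rfl fun j _ => ?_
    congr 1
    refine Finset.sum_congr rfl fun i _ => ?_
    ring
  rw [hrw] at key
  exact key

lemma two_of_cond (hC : condC A Γ Bm)
    (hker : ∀ r : Fin ν → ℝ, (Bm * Γ).mulVec r = 0 ↔ Γ.mulVec r = 0) :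
    ∀ R, IsAdmissible A R →
      ∀ xe : Fin n → ℝ, (∀ i, 0 ≤ xe i) → Γ.mulVec (R xe) = 0 →
        ∀ x : Fin n → ℝ, (∀ i, 0 ≤ x i) → (∃ r : Fin ν → ℝ, Γ.mulVec r = x - xe) →
          dini (fun y => ‖Bm.mulVec (y - xe)‖) (fun y => Γ.mulVec (R y)) x ≤ 0 := by
  intro R hadm xe hxe heq x hx hr
  obtain ⟨r, hr⟩ := hr
  simp only [dini]
  -- mean value theorem, coordinatewise
  have hmvt : ∀ j : Fin ν, ∃ t ∈ Set.Ioo (0:ℝ) 1,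
      R x j - R xe j = ∑ i, (x - xe) i * pd R (xe + t • (x - xe)) j i := by
    intro j
    have hcont : ContinuousOn (fun t : ℝ => R (xe + t • (x - xe)) j) (Set.Icc 0 1) := by
      apply Continuous.continuousOn
      exact ((contDiff_pi.mp hadm.smooth j).continuous).comp
        (continuous_const.add (continuous_id.smul continuous_const))
    have hderiv : ∀ t ∈ Set.Ioo (0:ℝ) 1, HasDerivAt (fun t : ℝ => R (xe + t • (x - xe)) j)
        (∑ i, (x - xe) i * pd R (xe + t • (x - xe)) j i) t :=
      fun t _ => hasDerivAt_comp_line hadm.smooth xe (x - xe) j t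
    obtain ⟨t, ht, hslope⟩ := exists_hasDerivAt_eq_slope
      (fun t : ℝ => R (xe + t • (x - xe)) j)
      (fun t => ∑ i, (x - xe) i * pd R (xe + t • (x - xe)) j i) one_pos hcont hderiv
    refine ⟨t, ht, ?_⟩
    rw [hslope]
    have e1 : xe + (1:ℝ) • (x - xe) = x := by funext i; simp
    have e0 : xe + (0:ℝ) • (x - xe) = xe := by funext i; simp
    rw [e1, e0]
    norm_num
  choose ξ hξmem hξeq using hmvt
  set P : Matrix (Fin ν) (Fin n) ℝ := Matrix.of fun j i => pd R (xe + ξ j • (x - xe)) j i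
    with hPdef
  have hseg : ∀ j i, 0 ≤ (xe + ξ j • (x - xe)) i := by
    intro j i
    have h1 := (hξmem j).1
    have h2 := (hξmem j).2
    have : (xe + ξ j • (x - xe)) i = (1 - ξ j) * xe i + ξ j * x i := by
      simp [Pi.add_apply, Pi.smul_apply]; ring
    rw [this]
    have := hxe i; have := hx i
    nlinarith
  refine limsup_quot_le' (fun h => Bm.mulVec (x + h • Γ.mulVec (R x) - xe))
    (Bm.mulVec (x - xe)) (fun k => Bm.mulVec (Γ.mulVec (R x)) k)
    (by norm_num) ?_ ?_
  · -- derivative of affine function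
    intro k
    have heq2 : (fun h : ℝ => Bm.mulVec (x + h • Γ.mulVec (R x) - xe) k)
        = fun h : ℝ => Bm.mulVec (x - xe) k + h * Bm.mulVec (Γ.mulVec (R x)) k := by
      funext h
      have : x + h • Γ.mulVec (R x) - xe = (x - xe) + h • Γ.mulVec (R x) := by abel
      rw [this, Matrix.mulVec_add, Matrix.mulVec_smul]
      simp [smul_eq_mul]
    rw [heq2]
    simpa using ((hasDerivAt_id (0:ℝ)).mul_const (Bm.mulVec (Γ.mulVec (R x)) k)).const_add
      (Bm.mulVec (x - xe) k)
  · intro k σ hσ hact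
    -- rewrite things through C = Bm * Γ
    have hact' : σ * (Bm * Γ).mulVec r k = ‖(Bm * Γ).mulVec r‖ := by
      rw [← Matrix.mulVec_mulVec, hr]
      exact hact
    have key := hC r P
      (fun i j hA => hadm.deriv_nonneg _ (hseg j) i j hA)
      (fun i j hA => hadm.deriv_zero _ (hseg j) i j hA) k σ hσ hact'
    -- identify C (P (Γ r)) with C (R x)
    have hCxe : (Bm * Γ).mulVec (R xe) = 0 := by
      rw [← Matrix.mulVec_mulVec, heq, Matrix.mulVec_zero]
    have hPr : P.mulVec (Γ.mulVec r) = fun j => R x j - R xe j := by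
      funext j
      rw [hr]
      simp only [Matrix.mulVec, dotProduct, hPdef, Matrix.of_apply]
      rw [hξeq j]
      refine Finset.sum_congr rfl fun i _ => ?_
      ring
    have hfinal : (Bm * Γ).mulVec (P.mulVec (Γ.mulVec r)) = Bm.mulVec (Γ.mulVec (R x)) := by
      rw [hPr, Matrix.mulVec_mulVec]
      have h2 : (fun j => R x j - R xe j) = R x - R xe := rfl
      rw [h2, Matrix.mulVec_sub, hCxe, sub_zero, ← Matrix.mulVec_mulVec]
    rw [hfinal] at key
    exact key

end bridge

section converse

variable {n ν q : ℕ} {A : Matrix (Fin n) (Fin ν) ℕ} {Γ : Matrix (Fin n) (Fin ν) ℝ}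
  {Bm : Matrix (Fin q) (Fin n) ℝ}

lemma cond_of_one
    (hAG : ∃ v : Fin ν → ℝ, (∀ j, 0 < v j) ∧ Γ.mulVec v = 0)
    (h1 : ∀ R, IsAdmissible A R → ∀ x : Fin n → ℝ, (∀ i, 0 ≤ x i) →
      dini (fun y => ‖(Bm * Γ).mulVec (R y)‖) (fun y => Γ.mulVec (R y)) x ≤ 0) :
    condC A Γ Bm := by
  obtain ⟨v, hv, hΓv⟩ := hAG
  have hCv : (Bm * Γ).mulVec v = 0 := by
    rw [← Matrix.mulVec_mulVec, hΓv, Matrix.mulVec_zero]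
  intro r P hP hP0 k σ hσ hact
  -- positive shift of r
  set t : ℝ := 1 + ∑ j, |r j| / v j with htdef
  clear_value t
  have ht : ∀ j, 0 < r j + t * v j := by
    intro j
    have h1' : |r j| / v j ≤ ∑ j', |r j'| / v j' :=
      Finset.single_le_sum (f := fun j' => |r j'| / v j')
        (fun j' _ => div_nonneg (abs_nonneg _) (hv j').le) (Finset.mem_univ j)
    have h2' : |r j| / v j * v j = |r j| := div_mul_cancel₀ _ (ne_of_gt (hv j))
    have hsum_ge : |r j| / v j ≤ t - 1 := by rw [htdef]; linarith
    have h4' : |r j| ≤ (t - 1) * v j := by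
      rw [← h2']
      exact mul_le_mul_of_nonneg_right hsum_ge (hv j).le
    nlinarith [hv j, neg_abs_le (r j)]
  set w : Fin ν → ℝ := fun j => r j + t * v j with hwdef
  clear_value w
  have hwpos : ∀ j, 0 < w j := by
    intro j; rw [hwdef]; exact ht j
  have hΓw : Γ.mulVec w = Γ.mulVec r := by
    have : w = r + t • v := by funext j; simp [hwdef, smul_eq_mul]
    rw [this, Matrix.mulVec_add, Matrix.mulVec_smul, hΓv]
    simp
  have hCw : (Bm * Γ).mulVec w = (Bm * Γ).mulVec r := by
    have : w = r + t • v := by funext j; simp [hwdef, smul_eq_mul]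
    rw [this, Matrix.mulVec_add, Matrix.mulVec_smul, hCv]
    simp
  -- epsilon matrices
  set ES : Matrix (Fin ν) (Fin n) ℝ := Matrix.of fun j i => if 0 < A i j then 1 else 0
    with hESdef
  clear_value ES
  apply eps_le (b := σ * (Bm * Γ).mulVec (ES.mulVec (Γ.mulVec r)) k)
  intro ε hε
  obtain ⟨Rh, xh, hadm, hxh, hRval, hpdQ⟩ := constr A w hwpos (P + ε • ES)
    (fun i j hA => by
      simp only [Matrix.add_apply, Matrix.smul_apply, hESdef, Matrix.of_apply, if_pos hA,
        smul_eq_mul, mul_one]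
      have := hP i j hA
      linarith)
    (fun i j hA => by
      have : ¬ 0 < A i j := by omega
      simp only [Matrix.add_apply, Matrix.smul_apply, hESdef, Matrix.of_apply, if_neg this,
        smul_eq_mul, mul_zero, add_zero]
      exact hP0 i j hA)
  have hRw : Rh xh = w := funext hRval
  have hdini := h1 Rh hadm xh (fun i => (hxh i).le)
  simp only [dini] at hdini
  have hlow := le_limsup_quot' (fun h => (Bm * Γ).mulVec (Rh (xh + h • Γ.mulVec (Rh xh))))
    ((Bm * Γ).mulVec (Rh xh))
    (fun k' => ∑ j, (Bm * Γ) k' j * (∑ i, Γ.mulVec (Rh xh) i * pd Rh xh j i))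
    (by norm_num) (fun k' => hasDerivAt_CRline hadm.smooth (Bm * Γ) xh _ k') k σ hσ
    (by rw [hRw, hCw]; exact hact)
  have hcomb : σ * (∑ j, (Bm * Γ) k j * (∑ i, Γ.mulVec (Rh xh) i * pd Rh xh j i)) ≤ 0 :=
    le_trans hlow hdini
  -- identify the derivative with the matrix expression
  have hfΓr : Γ.mulVec (Rh xh) = Γ.mulVec r := by rw [hRw, hΓw]
  have hd : (∑ j, (Bm * Γ) k j * (∑ i, Γ.mulVec (Rh xh) i * pd Rh xh j i))
      = (Bm * Γ).mulVec ((P + ε • ES).mulVec (Γ.mulVec r)) k := by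
    rw [hfΓr]
    simp only [Matrix.mulVec, dotProduct]
    refine Finset.sum_congr rfl fun j _ => ?_
    congr 1
    refine Finset.sum_congr rfl fun i _ => ?_
    rw [hpdQ j i]
    ring
  have hgoal : σ * ((Bm * Γ).mulVec ((P + ε • ES).mulVec (Γ.mulVec r)) k) ≤ 0 := by
    rw [← hd]; exact hcomb
  have hexp : (Bm * Γ).mulVec ((P + ε • ES).mulVec (Γ.mulVec r)) k
      = (Bm * Γ).mulVec (P.mulVec (Γ.mulVec r)) k
        + ε * (Bm * Γ).mulVec (ES.mulVec (Γ.mulVec r)) k := by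
    rw [Matrix.add_mulVec, Matrix.smul_mulVec, Matrix.mulVec_add, Matrix.mulVec_smul]
    simp [smul_eq_mul]
  rw [hexp] at hgoal
  calc σ * (Bm * Γ).mulVec (P.mulVec (Γ.mulVec r)) k
        + ε * (σ * (Bm * Γ).mulVec (ES.mulVec (Γ.mulVec r)) k)
      = σ * ((Bm * Γ).mulVec (P.mulVec (Γ.mulVec r)) k
        + ε * (Bm * Γ).mulVec (ES.mulVec (Γ.mulVec r)) k) := by ring
    _ ≤ 0 := hgoal

lemma cond_of_two
    (hker : ∀ r : Fin ν → ℝ, (Bm * Γ).mulVec r = 0 ↔ Γ.mulVec r = 0)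
    (hAG : ∃ v : Fin ν → ℝ, (∀ j, 0 < v j) ∧ Γ.mulVec v = 0)
    (h2 : ∀ R, IsAdmissible A R →
      ∀ xe : Fin n → ℝ, (∀ i, 0 ≤ xe i) → Γ.mulVec (R xe) = 0 →
        ∀ x : Fin n → ℝ, (∀ i, 0 ≤ x i) → (∃ r : Fin ν → ℝ, Γ.mulVec r = x - xe) →
          dini (fun y => ‖Bm.mulVec (y - xe)‖) (fun y => Γ.mulVec (R y)) x ≤ 0) :
    condC A Γ Bm := by
  obtain ⟨v, hv, hΓv⟩ := hAG
  have hCv : (Bm * Γ).mulVec v = 0 := by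
    rw [← Matrix.mulVec_mulVec, hΓv, Matrix.mulVec_zero]
  intro r P hP hP0 k σ hσ hact
  set ES : Matrix (Fin ν) (Fin n) ℝ := Matrix.of fun j i => if 0 < A i j then 1 else 0
    with hESdef
  clear_value ES
  apply eps_le (b := σ * (Bm * Γ).mulVec (ES.mulVec (Γ.mulVec r)) k)
  intro ε hε
  obtain ⟨Rh, xh, hadm, hxh, hRval, hpdQ⟩ := constr A v hv (P + ε • ES)
    (fun i j hA => by
      simp only [Matrix.add_apply, Matrix.smul_apply, hESdef, Matrix.of_apply, if_pos hA,
        smul_eq_mul, mul_one]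
      have := hP i j hA
      linarith)
    (fun i j hA => by
      have : ¬ 0 < A i j := by omega
      simp only [Matrix.add_apply, Matrix.smul_apply, hESdef, Matrix.of_apply, if_neg this,
        smul_eq_mul, mul_zero, add_zero]
      exact hP0 i j hA)
  have hRv : Rh xh = v := funext hRval
  have heq : Γ.mulVec (Rh xh) = 0 := by rw [hRv, hΓv]
  set D : Fin n → ℝ := Γ.mulVec r with hDdef
  -- small time bound
  set s₀ : ℝ := 1 / (1 + ∑ i, |D i| / xh i) with hs₀def
  clear_value s₀
  have hsum0 : (0:ℝ) ≤ ∑ i, |D i| / xh i :=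
    Finset.sum_nonneg fun i _ => div_nonneg (abs_nonneg _) (hxh i).le
  have hs₀pos : 0 < s₀ := by rw [hs₀def]; positivity
  have hxpos : ∀ s : ℝ, 0 < s → s ≤ s₀ → ∀ i, 0 ≤ (xh + s • D) i := by
    intro s hs hss i
    have hb : |D i| / xh i ≤ ∑ i', |D i'| / xh i' :=
      Finset.single_le_sum (f := fun i' => |D i'| / xh i')
        (fun i' _ => div_nonneg (abs_nonneg _) (hxh i').le) (Finset.mem_univ i)
    have hDi : |D i| ≤ (1 + ∑ i', |D i'| / xh i') * xh i := by
      rw [div_le_iff₀ (hxh i)] at hb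
      nlinarith [hxh i]
    have hss₀ : s * |D i| ≤ xh i := by
      have h1' : s * |D i| ≤ s₀ * |D i| := by nlinarith [abs_nonneg (D i)]
      have h2' : s₀ * ((1 + ∑ i', |D i'| / xh i') * xh i) = xh i := by
        rw [hs₀def]
        field_simp
      nlinarith [hs₀pos]
    have := neg_abs_le (D i)
    simp only [Pi.add_apply, Pi.smul_apply, smul_eq_mul]
    nlinarith [abs_nonneg (D i)]
  -- apply hypothesis (2) at each small s
  have hφle : ∀ s : ℝ, 0 < s → s ≤ s₀ →
      σ * (Bm * Γ).mulVec (Rh (xh + s • D)) k ≤ 0 := by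
    intro s hs hss
    have hdini := h2 Rh hadm xh (fun i => (hxh i).le) heq (xh + s • D)
      (hxpos s hs hss) ⟨s • r, by rw [Matrix.mulVec_smul]; funext i; simp [hDdef]⟩
    simp only [dini] at hdini
    have hconst : Bm.mulVec (xh + s • D - xh) = s • (Bm * Γ).mulVec r := by
      have hss : xh + s • D - xh = s • D := by abel
      rw [hss, hDdef, Matrix.mulVec_smul, Matrix.mulVec_mulVec]
    rw [hconst] at hdini
    have hgs0 : Bm.mulVec (xh + s • D + (0:ℝ) • Γ.mulVec (Rh (xh + s • D)) - xh)
        = s • (Bm * Γ).mulVec r := by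
      rw [zero_smul, add_zero]
      exact hconst
    have hlow := le_limsup_quot'
      (fun h => Bm.mulVec (xh + s • D + h • Γ.mulVec (Rh (xh + s • D)) - xh))
      (s • (Bm * Γ).mulVec r)
      (fun k' => Bm.mulVec (Γ.mulVec (Rh (xh + s • D))) k')
      hgs0 ?_ k σ hσ ?_
    · have : Bm.mulVec (Γ.mulVec (Rh (xh + s • D))) k
          = (Bm * Γ).mulVec (Rh (xh + s • D)) k := by rw [Matrix.mulVec_mulVec]
      rw [← this]
      exact le_trans hlow hdini
    · intro k'
      have heq2 : (fun h : ℝ => Bm.mulVec (xh + s • D + h • Γ.mulVec (Rh (xh + s • D)) - xh) k')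
          = fun h : ℝ => Bm.mulVec (s • D) k'
            + h * Bm.mulVec (Γ.mulVec (Rh (xh + s • D))) k' := by
        funext h
        have : xh + s • D + h • Γ.mulVec (Rh (xh + s • D)) - xh
            = s • D + h • Γ.mulVec (Rh (xh + s • D)) := by abel
        rw [this, Matrix.mulVec_add, Matrix.mulVec_smul]
        simp [smul_eq_mul, Matrix.mulVec_smul]
      rw [heq2]
      simpa using ((hasDerivAt_id (0:ℝ)).mul_const
        (Bm.mulVec (Γ.mulVec (Rh (xh + s • D))) k')).const_add (Bm.mulVec (s • D) k')
    · -- active set for the scaled vector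
      simp only [Pi.smul_apply, smul_eq_mul, norm_smul, Real.norm_eq_abs, abs_of_pos hs]
      rw [← hact]
      ring
  -- differentiate φ at 0
  have hφ0 : (Bm * Γ).mulVec (Rh xh) = 0 := by
    rw [← Matrix.mulVec_mulVec, heq, Matrix.mulVec_zero]
  have hφderiv : HasDerivAt (fun s : ℝ => (Bm * Γ).mulVec (Rh (xh + s • D)) k)
      (∑ j, (Bm * Γ) k j * (∑ i, D i * pd Rh xh j i)) 0 :=
    hasDerivAt_CRline hadm.smooth (Bm * Γ) xh D k
  have hΔle : σ * (∑ j, (Bm * Γ) k j * (∑ i, D i * pd Rh xh j i)) ≤ 0 := by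
    have hsl := hasDerivAt_iff_tendsto_slope.1 (hφderiv.const_mul σ)
    have hsl' : Tendsto (slope (fun s : ℝ => σ * (Bm * Γ).mulVec (Rh (xh + s • D)) k) 0)
        (nhdsWithin 0 (Set.Ioi 0))
        (nhds (σ * (∑ j, (Bm * Γ) k j * (∑ i, D i * pd Rh xh j i)))) :=
      hsl.mono_left (nhdsWithin_mono _ (fun y hy => ne_of_gt hy))
    refine le_of_tendsto hsl' ?_
    have hmem : Set.Ioc (0:ℝ) s₀ ∈ nhdsWithin (0:ℝ) (Set.Ioi 0) :=
      Ioc_mem_nhdsGT_of_mem ⟨le_refl 0, hs₀pos⟩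
    filter_upwards [hmem] with s hs
    rcases hs with ⟨hs1, hs2⟩
    have hval0 : σ * (Bm * Γ).mulVec (Rh (xh + (0:ℝ) • D)) k = 0 := by
      rw [zero_smul, add_zero, hφ0]
      simp
    rw [slope_def_field]
    simp only [sub_zero]
    rw [hval0, sub_zero]
    apply div_nonpos_of_nonpos_of_nonneg _ hs1.le
    exact hφle s hs1 hs2
  -- identify and split
  have hd : (∑ j, (Bm * Γ) k j * (∑ i, D i * pd Rh xh j i))
      = (Bm * Γ).mulVec ((P + ε • ES).mulVec (Γ.mulVec r)) k := by
    simp only [Matrix.mulVec, dotProduct]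
    refine Finset.sum_congr rfl fun j _ => ?_
    congr 1
    refine Finset.sum_congr rfl fun i _ => ?_
    rw [hpdQ j i]
    simp only [hDdef, Matrix.mulVec, dotProduct]
    ring
  have hgoal : σ * ((Bm * Γ).mulVec ((P + ε • ES).mulVec (Γ.mulVec r)) k) ≤ 0 := by
    rw [← hd]; exact hΔle
  have hexp : (Bm * Γ).mulVec ((P + ε • ES).mulVec (Γ.mulVec r)) k
      = (Bm * Γ).mulVec (P.mulVec (Γ.mulVec r)) k
        + ε * (Bm * Γ).mulVec (ES.mulVec (Γ.mulVec r)) k := by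
    rw [Matrix.add_mulVec, Matrix.smul_mulVec, Matrix.mulVec_add, Matrix.mulVec_smul]
    simp [smul_eq_mul]
  rw [hexp] at hgoal
  calc σ * (Bm * Γ).mulVec (P.mulVec (Γ.mulVec r)) k
        + ε * (σ * (Bm * Γ).mulVec (ES.mulVec (Γ.mulVec r)) k)
      = σ * ((Bm * Γ).mulVec (P.mulVec (Γ.mulVec r)) k
        + ε * (Bm * Γ).mulVec (ES.mulVec (Γ.mulVec r)) k) := by ring
    _ ≤ 0 := hgoal

end converse

/-- Theorem 4.4 (convex case): with `C = BΓ` and `ker C = ker Γ`, the PWLR Lyapunov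
function `‖C R(x)‖_∞` is nonincreasing for all admissible kinetics iff the dual PWL
function `‖B(x − x_e)‖_∞` is nonincreasing on every stoichiometric class. -/
theorem stmt7 {n ν q : ℕ} (A B : Matrix (Fin n) (Fin ν) ℕ)
    (Γ : Matrix (Fin n) (Fin ν) ℝ)
    (hΓ : ∀ i j, Γ i j = (B i j : ℝ) - (A i j : ℝ))
    (Bm : Matrix (Fin q) (Fin n) ℝ)
    (hker : ∀ r : Fin ν → ℝ, (Bm * Γ).mulVec r = 0 ↔ Γ.mulVec r = 0)
    (hAG : ∃ v : Fin ν → ℝ, (∀ j, 0 < v j) ∧ Γ.mulVec v = 0) :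
    (∀ R, IsAdmissible A R → ∀ x : Fin n → ℝ, (∀ i, 0 ≤ x i) →
        dini (fun y => ‖(Bm * Γ).mulVec (R y)‖) (fun y => Γ.mulVec (R y)) x ≤ 0)
    ↔ (∀ R, IsAdmissible A R →
        ∀ xe : Fin n → ℝ, (∀ i, 0 ≤ xe i) → Γ.mulVec (R xe) = 0 →
          ∀ x : Fin n → ℝ, (∀ i, 0 ≤ x i) → (∃ r : Fin ν → ℝ, Γ.mulVec r = x - xe) →
            dini (fun y => ‖Bm.mulVec (y - xe)‖) (fun y => Γ.mulVec (R y)) x ≤ 0) := by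
  constructor
  · intro h1
    exact two_of_cond A Γ Bm (cond_of_one hAG h1) hker
  · intro h2
    exact one_of_cond A Γ Bm (cond_of_two hker hAG h2)
end

section
/- Let Γ ∈ ℝ^{n×ν} and A = [α_{ij}] ∈ ℤ≥0^{n×ν}. Call ρ ∈ ℝ^{ν×n} an admissible pattern if ρ_{ji} = 0 whenever α_{ij} = 0, and nonnegative if additionally ρ_{ji} ≥ 0 for all entries; let M(ρ) = −Γρ ∈ ℝ^{n×n}. Fix a subset I ⊆ {1,…,n} with |I| = k. The principal minor det(M(ρ)_{I,I}) is a homogeneous polynomial of degree k in the entries {ρ_{ji} : α_{ij} > 0}. If det(M(ρ)_{I,I}) ≥ 0 for every nonnegative admissible pattern ρ, then every coefficient of this polynomial is nonnegative; consequently, if the minor is positive at some admissible pattern ρ₀ with ρ₀_{ji} > 0 for all (i,j) with α_{ij} > 0, then it is positive at every admissible pattern with all supported entries strictly positive. -/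
/-- Principal minor of `M` with rows and columns indexed by `I`. -/
noncomputable def pminor {n : ℕ} (M : Matrix (Fin n) (Fin n) ℝ) (I : Finset (Fin n)) : ℝ :=
  (M.submatrix (fun i : {x : Fin n // x ∈ I} => (i : Fin n))
    (fun i : {x : Fin n // x ∈ I} => (i : Fin n))).det

/-- The principal minor `det((−Γρ)_{I,I})` as a polynomial in the supported entries
`ρ_{ji}` (those with `α_{ij} > 0`). -/
noncomputable def minorPoly {n ν : ℕ} (Γ : Matrix (Fin n) (Fin ν) ℝ)
    (A : Matrix (Fin n) (Fin ν) ℕ) (I : Finset (Fin n)) :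
    MvPolynomial (Fin ν × Fin n) ℝ :=
  Matrix.det (Matrix.of fun i i' : {x : Fin n // x ∈ I} =>
    -∑ j : Fin ν, MvPolynomial.C (Γ (i : Fin n) j) *
      (if 0 < A (i' : Fin n) j then MvPolynomial.X (j, (i' : Fin n)) else 0))

namespace Stmt8Aux

open MvPolynomial

variable {n ν : ℕ} (Γ : Matrix (Fin n) (Fin ν) ℝ) (A : Matrix (Fin n) (Fin ν) ℕ)
  (I : Finset (Fin n))

/-- the constant matrix obtained by choosing column entry `f i'` in column `i'` -/
noncomputable def cmat (f : {x : Fin n // x ∈ I} → Fin ν) :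
    Matrix {x : Fin n // x ∈ I} {x : Fin n // x ∈ I} ℝ :=
  fun i i' => if 0 < A (i' : Fin n) (f i') then -Γ (i : Fin n) (f i') else 0

noncomputable def dd (f : {x : Fin n // x ∈ I} → Fin ν) : ℝ := (cmat Γ A I f).det

lemma formula : minorPoly Γ A I =
    ∑ f : {x : Fin n // x ∈ I} → Fin ν,
      MvPolynomial.C (dd Γ A I f) *
        ∏ i' : {x : Fin n // x ∈ I}, MvPolynomial.X (f i', (i' : Fin n)) := by
  classical
  unfold minorPoly
  rw [← Matrix.det_transpose]
  have hN : (Matrix.of fun i i' : {x : Fin n // x ∈ I} =>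
      -∑ j : Fin ν, MvPolynomial.C (Γ (i : Fin n) j) *
        (if 0 < A (i' : Fin n) j then MvPolynomial.X (j, (i' : Fin n)) else 0)).transpose
      = fun i' : {x : Fin n // x ∈ I} => ∑ j : Fin ν,
          (MvPolynomial.X (j, (i' : Fin n)) : MvPolynomial (Fin ν × Fin n) ℝ) •
            (fun i : {x : Fin n // x ∈ I} =>
              MvPolynomial.C (if 0 < A (i' : Fin n) j then -Γ (i : Fin n) j else 0)) := by
    funext i' i
    simp only [Matrix.transpose_apply, Matrix.of_apply, Finset.sum_apply, Pi.smul_apply,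
      smul_eq_mul, neg_eq_iff_eq_neg, ← Finset.sum_neg_distrib]
    refine Finset.sum_congr rfl fun j _ => ?_
    split_ifs with h
    · rw [map_neg, mul_neg, mul_comm]
    · simp
  rw [hN]
  have key := MultilinearMap.map_sum
    (Matrix.detRowAlternating (n := {x : Fin n // x ∈ I})
      (R := MvPolynomial (Fin ν × Fin n) ℝ)).toMultilinearMap
    (g := fun (i' : {x : Fin n // x ∈ I}) (j : Fin ν) =>
      (MvPolynomial.X (j, (i' : Fin n)) : MvPolynomial (Fin ν × Fin n) ℝ) •
        (fun i : {x : Fin n // x ∈ I} =>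
          MvPolynomial.C (if 0 < A (i' : Fin n) j then -Γ (i : Fin n) j else 0)))
  rw [show (Matrix.det (fun i' : {x : Fin n // x ∈ I} => ∑ j : Fin ν,
      (MvPolynomial.X (j, (i' : Fin n)) : MvPolynomial (Fin ν × Fin n) ℝ) •
        (fun i : {x : Fin n // x ∈ I} =>
          MvPolynomial.C (if 0 < A (i' : Fin n) j then -Γ (i : Fin n) j else 0)))) =
      (Matrix.detRowAlternating (n := {x : Fin n // x ∈ I})
        (R := MvPolynomial (Fin ν × Fin n) ℝ)).toMultilinearMap
        (fun i' : {x : Fin n // x ∈ I} => ∑ j : Fin ν,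
      (MvPolynomial.X (j, (i' : Fin n)) : MvPolynomial (Fin ν × Fin n) ℝ) •
        (fun i : {x : Fin n // x ∈ I} =>
          MvPolynomial.C (if 0 < A (i' : Fin n) j then -Γ (i : Fin n) j else 0))) from rfl,
    key]
  refine Finset.sum_congr rfl fun f _ => ?_
  rw [MultilinearMap.map_smul_univ]
  have hdet : (Matrix.detRowAlternating (n := {x : Fin n // x ∈ I})
      (R := MvPolynomial (Fin ν × Fin n) ℝ)).toMultilinearMap
      (fun i' : {x : Fin n // x ∈ I} => (fun i : {x : Fin n // x ∈ I} =>
        MvPolynomial.C (if 0 < A (i' : Fin n) (f i') then -Γ (i : Fin n) (f i') else 0)))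
      = MvPolynomial.C (dd Γ A I f) := by
    have : (fun i' : {x : Fin n // x ∈ I} => (fun i : {x : Fin n // x ∈ I} =>
        MvPolynomial.C (if 0 < A (i' : Fin n) (f i') then -Γ (i : Fin n) (f i') else 0)))
        = ((cmat Γ A I f).map (MvPolynomial.C (σ := Fin ν × Fin n))).transpose := by
      funext i' i
      rfl
    show Matrix.det _ = _
    rw [this, Matrix.det_transpose,
      show (cmat Γ A I f).map (MvPolynomial.C (σ := Fin ν × Fin n) (R := ℝ))
        = (MvPolynomial.C (σ := Fin ν × Fin n) (R := ℝ)).mapMatrix (cmat Γ A I f) from rfl,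
      ← RingHom.map_det, dd]
  rw [hdet, smul_eq_mul, mul_comm]

lemma prodX (f : {x : Fin n // x ∈ I} → Fin ν) :
    (∏ i' : {x : Fin n // x ∈ I}, (MvPolynomial.X (f i', (i' : Fin n)) :
        MvPolynomial (Fin ν × Fin n) ℝ))
      = MvPolynomial.monomial
          (∑ i' : {x : Fin n // x ∈ I}, Finsupp.single (f i', (i' : Fin n)) 1) (1 : ℝ) := by
  classical
  induction (Finset.univ : Finset {x : Fin n // x ∈ I}) using Finset.induction_on with
  | empty => simp [MvPolynomial.monomial_zero']
  | insert _ _ hx ih =>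
      rw [Finset.prod_insert hx, Finset.sum_insert hx, ih,
        show (MvPolynomial.X _ : MvPolynomial (Fin ν × Fin n) ℝ)
          = MvPolynomial.monomial (Finsupp.single _ 1) (1 : ℝ) by
            rw [← MvPolynomial.X_pow_eq_monomial, pow_one],
        MvPolynomial.monomial_mul, one_mul]

lemma eval_formula (g : Fin ν × Fin n → ℝ) :
    MvPolynomial.eval g (minorPoly Γ A I)
      = ∑ f : {x : Fin n // x ∈ I} → Fin ν,
          dd Γ A I f * ∏ i' : {x : Fin n // x ∈ I}, g (f i', (i' : Fin n)) := by
  rw [formula, map_sum]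
  refine Finset.sum_congr rfl fun f _ => ?_
  rw [map_mul, MvPolynomial.eval_C, MvPolynomial.eval_prod]
  simp

lemma eval_eq_pminor (ρ : Matrix (Fin ν) (Fin n) ℝ) (h : ∀ i j, A i j = 0 → ρ j i = 0) :
    MvPolynomial.eval (fun p : Fin ν × Fin n => ρ p.1 p.2) (minorPoly Γ A I)
      = pminor (-(Γ * ρ)) I := by
  unfold minorPoly pminor
  rw [RingHom.map_det]
  congr 1
  funext i i'
  simp only [RingHom.mapMatrix_apply, Matrix.map_apply, Matrix.of_apply,
    Matrix.submatrix_apply, Matrix.neg_apply, Matrix.mul_apply, map_neg, map_sum, map_mul,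
    MvPolynomial.eval_C, neg_inj]
  refine Finset.sum_congr rfl fun j _ => ?_
  congr 1
  split_ifs with hA
  · simp
  · simp [h _ _ (Nat.eq_zero_of_not_pos hA)]

lemma homog : (minorPoly Γ A I).IsHomogeneous I.card := by
  rw [formula]
  refine MvPolynomial.IsHomogeneous.sum _ _ _ fun f _ => ?_
  have h1 : (∏ i' : {x : Fin n // x ∈ I}, (MvPolynomial.X (f i', (i' : Fin n)) :
      MvPolynomial (Fin ν × Fin n) ℝ)).IsHomogeneous I.card := by
    have := MvPolynomial.IsHomogeneous.prod (Finset.univ : Finset {x : Fin n // x ∈ I})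
      (fun i' => (MvPolynomial.X (f i', (i' : Fin n)) : MvPolynomial (Fin ν × Fin n) ℝ))
      (fun _ => 1) (fun i _ => MvPolynomial.isHomogeneous_X _ _)
    simpa [Finset.card_univ] using this
  simpa using (MvPolynomial.isHomogeneous_C (Fin ν × Fin n) (dd Γ A I f)).mul h1

lemma dd_nonneg
    (hyp : ∀ ρ : Matrix (Fin ν) (Fin n) ℝ,
      (∀ i j, A i j = 0 → ρ j i = 0) → (∀ j i, 0 ≤ ρ j i) → 0 ≤ pminor (-(Γ * ρ)) I)
    (f : {x : Fin n // x ∈ I} → Fin ν) : 0 ≤ dd Γ A I f := by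
  classical
  by_cases hA : ∀ i' : {x : Fin n // x ∈ I}, 0 < A (i' : Fin n) (f i')
  · set ρ : Matrix (Fin ν) (Fin n) ℝ := fun j i =>
      if ∃ i' : {x : Fin n // x ∈ I}, (i' : Fin n) = i ∧ f i' = j then 1 else 0 with hρ
    have hadm : ∀ i j, A i j = 0 → ρ j i = 0 := by
      intro i j h0
      have hne : ¬ ∃ i' : {x : Fin n // x ∈ I}, (i' : Fin n) = i ∧ f i' = j := by
        rintro ⟨i', rfl, rfl⟩
        exact absurd h0 (Nat.pos_iff_ne_zero.mp (hA i'))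
      rw [hρ]; exact if_neg hne
    have hnn : ∀ j i, 0 ≤ ρ j i := by
      intro j i; rw [hρ]; dsimp only; split_ifs <;> norm_num
    have h0 := hyp ρ hadm hnn
    rw [← eval_eq_pminor Γ A I ρ hadm, eval_formula] at h0
    dsimp only at h0
    have hsum : (∑ g : {x : Fin n // x ∈ I} → Fin ν,
        dd Γ A I g * ∏ i' : {x : Fin n // x ∈ I}, ρ (g i') (i' : Fin n)) = dd Γ A I f := by
      rw [Finset.sum_eq_single f ?_ (by simp)]
      · have hone : ∀ i' : {x : Fin n // x ∈ I}, ρ (f i') (i' : Fin n) = 1 := by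
          intro i'
          have : ∃ i'' : {x : Fin n // x ∈ I}, (i'' : Fin n) = (i' : Fin n) ∧ f i'' = f i' :=
            ⟨i', rfl, rfl⟩
          rw [hρ]; exact if_pos this
        rw [Finset.prod_congr rfl (fun i' _ => hone i'), Finset.prod_const_one, mul_one]
      · intro g _ hg
        obtain ⟨i'0, hi'0⟩ : ∃ i'0, g i'0 ≠ f i'0 := by
          by_contra hc; push_neg at hc; exact hg (funext hc)
        have hz : ρ (g i'0) (i'0 : Fin n) = 0 := by
          have hne : ¬ ∃ i'' : {x : Fin n // x ∈ I},
              (i'' : Fin n) = (i'0 : Fin n) ∧ f i'' = g i'0 := by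
            rintro ⟨i'', hi'', hfi⟩
            have heq : i'' = i'0 := Subtype.coe_injective hi''
            subst heq
            exact hi'0 hfi.symm
          rw [hρ]; exact if_neg hne
        rw [Finset.prod_eq_zero (Finset.mem_univ i'0) hz, mul_zero]
    rwa [hsum] at h0
  · push_neg at hA
    obtain ⟨i', hi'⟩ := hA
    have : dd Γ A I f = 0 := by
      refine Matrix.det_eq_zero_of_column_eq_zero i' fun i => ?_
      simp [cmat, hi']
    rw [this]

lemma coeff_nonneg (hdd : ∀ f, 0 ≤ dd Γ A I f) (m : (Fin ν × Fin n) →₀ ℕ) :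
    0 ≤ (minorPoly Γ A I).coeff m := by
  classical
  rw [formula, MvPolynomial.coeff_sum]
  refine Finset.sum_nonneg fun f _ => ?_
  rw [MvPolynomial.coeff_C_mul, prodX, MvPolynomial.coeff_monomial]
  split_ifs
  · simpa using hdd f
  · simp

end Stmt8Aux

/-- Key claim in the proof of Theorem 5.1: the principal minor `det((−Γρ)_{I,I})` is a
homogeneous polynomial of degree `|I|` in the supported entries of `ρ`; if it is
nonnegative for every nonnegative admissible pattern, then all its coefficients are
nonnegative, and hence positivity at one strictly positive admissible pattern implies
positivity at all of them. -/

theorem stmt8 {n ν : ℕ} (Γ : Matrix (Fin n) (Fin ν) ℝ)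
    (A : Matrix (Fin n) (Fin ν) ℕ) (I : Finset (Fin n)) :
    (∀ ρ : Matrix (Fin ν) (Fin n) ℝ, (∀ i j, A i j = 0 → ρ j i = 0) →
        MvPolynomial.eval (fun p : Fin ν × Fin n => ρ p.1 p.2) (minorPoly Γ A I)
          = pminor (-(Γ * ρ)) I)
    ∧ (minorPoly Γ A I).IsHomogeneous I.card
    ∧ ((∀ ρ : Matrix (Fin ν) (Fin n) ℝ,
          (∀ i j, A i j = 0 → ρ j i = 0) → (∀ j i, 0 ≤ ρ j i) →
          0 ≤ pminor (-(Γ * ρ)) I) →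
        (∀ m : (Fin ν × Fin n) →₀ ℕ, 0 ≤ (minorPoly Γ A I).coeff m) ∧
        (∀ ρ₀ : Matrix (Fin ν) (Fin n) ℝ,
          (∀ i j, (0 < A i j → 0 < ρ₀ j i) ∧ (A i j = 0 → ρ₀ j i = 0)) →
          0 < pminor (-(Γ * ρ₀)) I →
          ∀ ρ : Matrix (Fin ν) (Fin n) ℝ,
            (∀ i j, (0 < A i j → 0 < ρ j i) ∧ (A i j = 0 → ρ j i = 0)) →
            0 < pminor (-(Γ * ρ)) I)) := by
  classical
  refine ⟨fun ρ h => Stmt8Aux.eval_eq_pminor Γ A I ρ h, Stmt8Aux.homog Γ A I, fun hyp => ?_⟩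
  have hdd : ∀ f, 0 ≤ Stmt8Aux.dd Γ A I f := Stmt8Aux.dd_nonneg Γ A I hyp
  refine ⟨Stmt8Aux.coeff_nonneg Γ A I hdd, ?_⟩
  intro ρ₀ h₀ hpos ρ h
  have hadm0 : ∀ i j, A i j = 0 → ρ₀ j i = 0 := fun i j hij => (h₀ i j).2 hij
  have hadm : ∀ i j, A i j = 0 → ρ j i = 0 := fun i j hij => (h i j).2 hij
  have hnn : ∀ j i, 0 ≤ ρ j i := by
    intro j i
    rcases Nat.eq_zero_or_pos (A i j) with h1 | h1
    · rw [(h _ _).2 h1]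
    · exact le_of_lt ((h _ _).1 h1)
  rw [← Stmt8Aux.eval_eq_pminor Γ A I ρ₀ hadm0, Stmt8Aux.eval_formula] at hpos
  rw [← Stmt8Aux.eval_eq_pminor Γ A I ρ hadm, Stmt8Aux.eval_formula]
  dsimp only at hpos ⊢
  obtain ⟨g, -, hg⟩ : ∃ g ∈ Finset.univ, 0 < Stmt8Aux.dd Γ A I g *
      ∏ i' : {x : Fin n // x ∈ I}, ρ₀ (g i') (i' : Fin n) := by
    by_contra hc
    push_neg at hc
    exact absurd (Finset.sum_nonpos fun g hgm => hc g hgm) (not_le.mpr hpos)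
  have hddg : 0 < Stmt8Aux.dd Γ A I g := by
    rcases (hdd g).lt_or_eq with hlt | heq
    · exact hlt
    · exfalso; rw [← heq, zero_mul] at hg; exact lt_irrefl 0 hg
  have hprod0 : 0 < ∏ i' : {x : Fin n // x ∈ I}, ρ₀ (g i') (i' : Fin n) := by
    by_contra hcp
    push_neg at hcp
    nlinarith [hg, hddg]
  have hfac : ∀ i' : {x : Fin n // x ∈ I}, 0 < ρ (g i') (i' : Fin n) := by
    intro i'
    have hρ₀fac : ρ₀ (g i') (i' : Fin n) ≠ 0 := by
      intro hz
      rw [Finset.prod_eq_zero (Finset.mem_univ i') hz] at hprod0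
      exact lt_irrefl 0 hprod0
    have hApos : 0 < A (i' : Fin n) (g i') := by
      rcases Nat.eq_zero_or_pos (A (i' : Fin n) (g i')) with h1 | h1
      · exact absurd ((h₀ _ _).2 h1) hρ₀fac
      · exact h1
    exact (h _ _).1 hApos
  exact Finset.sum_pos'
    (fun g' _ => mul_nonneg (hdd g') (Finset.prod_nonneg fun i' _ => hnn _ _))
    ⟨g, Finset.mem_univ g, mul_pos hddg (Finset.prod_pos fun i' _ => hfac i')⟩
end
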